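/- arXiv:1003.1441 — 9 statements merged into one kernel-verified Lean document; each statement's English description precedes it below -/
import Mathlib

section
/- Let (K, U) be the unique solution on (0, ∞) of the system τ²·K·U = -(1 - K²)·K' and U' = (1 - K²)²/τ⁴ with K(0⁺) = 1, U(0⁺) = 0, K(∞) = 0, U(∞) = 1. Then there exist constants C > 0 and C₁, C₂ > 0 and a radius τ₀ > 0 such that for all τ ≥ τ₀ one has 0 < K(τ) ≤ C₁·e^{-C·τ³} and |U(τ) - 1| ≤ C₂·τ^{-3}. -/
open Real Filter Set

/-- The Bogomolny system `τ² K U = -(1 - K²) K'`, `U' = (1 - K²)² / τ⁴` on `(0, ∞)`,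
with boundary conditions `K(0⁺) = 1`, `U(0⁺) = 0`, `K(∞) = 0`, `U(∞) = 1`. -/
def IsBogomolnySol (K U : ℝ → ℝ) : Prop :=
  (∀ τ ∈ Set.Ioi (0 : ℝ), DifferentiableAt ℝ K τ ∧ DifferentiableAt ℝ U τ) ∧
  (∀ τ ∈ Set.Ioi (0 : ℝ), τ ^ 2 * K τ * U τ = -(1 - (K τ) ^ 2) * deriv K τ) ∧
  (∀ τ ∈ Set.Ioi (0 : ℝ), deriv U τ = (1 - (K τ) ^ 2) ^ 2 / τ ^ 4) ∧
  Tendsto K (nhdsWithin 0 (Set.Ioi 0)) (nhds 1) ∧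
  Tendsto U (nhdsWithin 0 (Set.Ioi 0)) (nhds 0) ∧
  Tendsto K atTop (nhds 0) ∧
  Tendsto U atTop (nhds 1)


open MeasureTheory intervalIntegral in
lemma aux_gronwall (K U : ℝ → ℝ)
    (hK : ∀ τ ∈ Set.Ioi (0:ℝ), DifferentiableAt ℝ K τ)
    (hU : ∀ τ ∈ Set.Ioi (0:ℝ), DifferentiableAt ℝ U τ)
    (heq : ∀ τ ∈ Set.Ioi (0:ℝ), τ ^ 2 * K τ * U τ = -(1 - (K τ) ^ 2) * deriv K τ)
    {a b : ℝ} (ha : 0 < a) (hab : a ≤ b)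
    (hlt : ∀ t ∈ Set.Icc a b, K t ^ 2 < 1) :
    ∀ t ∈ Set.Icc a b, K b ^ 2
      = K t ^ 2 * Real.exp (-(∫ s in t..b, 2 * s ^ 2 * U s / (1 - K s ^ 2))) := by
  set c : ℝ → ℝ := fun s => 2 * s ^ 2 * U s / (1 - K s ^ 2) with hc
  -- the open set where things are nice
  set V : Set ℝ := {t : ℝ | 0 < t ∧ K t ^ 2 < 1} with hV
  have hVopen : IsOpen V := by
    rw [isOpen_iff_mem_nhds]
    rintro t ⟨ht0, ht1⟩
    have hKc : ContinuousAt K t := (hK t ht0).continuousAt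
    have h1 : ∀ᶠ s in nhds t, K s ^ 2 < 1 :=
      ((hKc.pow 2).eventually_lt continuousAt_const ht1)
    have h2 : ∀ᶠ s in nhds t, 0 < s := eventually_gt_nhds ht0
    filter_upwards [h1, h2] with s hs1 hs2; exact ⟨hs2, hs1⟩
  have hsub : Set.Icc a b ⊆ V := fun t ht => ⟨lt_of_lt_of_le ha ht.1, hlt t ht⟩
  have hcV : ∀ t ∈ V, ContinuousAt c t := by
    rintro t ⟨ht0, ht1⟩
    have hne : (1 : ℝ) - K t ^ 2 ≠ 0 := by nlinarith
    exact (((continuousAt_const.mul ((continuousAt_id).pow 2)).mul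
      (hU t ht0).continuousAt).div
      (continuousAt_const.sub ((hK t ht0).continuousAt.pow 2)) hne)
  have hmeas : ∀ t ∈ V, StronglyMeasurableAtFilter c (nhds t) volume :=
    ContinuousAt.stronglyMeasurableAtFilter hVopen hcV
  have hint : ∀ t₁ ∈ Set.Icc a b, ∀ t₂ ∈ Set.Icc a b,
      IntervalIntegrable c volume t₁ t₂ := by
    intro t₁ h₁ t₂ h₂
    apply ContinuousOn.intervalIntegrable
    intro s hs
    have : s ∈ Set.Icc a b := by
      rcases le_total t₁ t₂ with h | h
      · rw [Set.uIcc_of_le h] at hs; exact ⟨le_trans h₁.1 hs.1, le_trans hs.2 h₂.2⟩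
      · rw [Set.uIcc_of_ge h] at hs; exact ⟨le_trans h₂.1 hs.1, le_trans hs.2 h₁.2⟩
    exact (hcV s (hsub this)).continuousWithinAt
  set F : ℝ → ℝ := fun t => K t ^ 2 * Real.exp (∫ s in a..t, c s) with hF
  have hFderiv : ∀ t ∈ Set.Icc a b, HasDerivAt F 0 t := by
    intro t ht
    have ht0 : (0:ℝ) < t := lt_of_lt_of_le ha ht.1
    have hne : (1 : ℝ) - K t ^ 2 ≠ 0 := by have := hlt t ht; nlinarith
    have hK' : HasDerivAt (fun s => K s ^ 2) (2 * K t * deriv K t) t := by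
      simpa [mul_comm, mul_assoc] using ((hK t ht0).hasDerivAt.fun_pow 2)
    have hΦ : HasDerivAt (fun u => ∫ s in a..u, c s) (c t) t :=
      integral_hasDerivAt_right (hint a ⟨le_rfl, hab⟩ t ht) (hmeas t (hsub ht))
        (hcV t (hsub ht))
    have hE := hΦ.exp
    have hmul := hK'.fun_mul hE
    have hdK : deriv K t = -(t ^ 2 * K t * U t) / (1 - K t ^ 2) := by
      have := heq t ht0
      field_simp
      linarith
    refine hmul.congr_deriv ?_
    rw [hdK, hc]
    field_simp
    ring
  have hFcont : ContinuousOn F (Set.Icc a b) :=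
    fun t ht => (hFderiv t ht).continuousAt.continuousWithinAt
  have hconst : ∀ t ∈ Set.Icc a b, F t = F a :=
    constant_of_has_deriv_right_zero hFcont
      (fun t ht => ((hFderiv t (Set.mem_Icc_of_Ico ht)).hasDerivWithinAt))
  intro t ht
  have hFb : F b = F a := hconst b ⟨hab, le_rfl⟩
  have hFt : F t = F a := hconst t ht
  have hFeq : K b ^ 2 * Real.exp (∫ s in a..b, c s)
      = K t ^ 2 * Real.exp (∫ s in a..t, c s) := hFb.trans hFt.symm
  have hadd : (∫ s in a..t, c s) + (∫ s in t..b, c s) = ∫ s in a..b, c s :=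
    integral_add_adjacent_intervals (hint a ⟨le_rfl, hab⟩ t ht)
      (hint t ht b ⟨hab, le_rfl⟩)
  have h1 : -(∫ s in t..b, c s) = (∫ s in a..t, c s) - (∫ s in a..b, c s) := by
    linarith
  rw [h1, Real.exp_sub, ← mul_div_assoc, eq_div_iff (Real.exp_ne_zero _)]
  exact hFeq

open MeasureTheory intervalIntegral in
lemma aux_nonzero (K U : ℝ → ℝ)
    (hK : ∀ τ ∈ Set.Ioi (0:ℝ), DifferentiableAt ℝ K τ)
    (hU : ∀ τ ∈ Set.Ioi (0:ℝ), DifferentiableAt ℝ U τ)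
    (heq : ∀ τ ∈ Set.Ioi (0:ℝ), τ ^ 2 * K τ * U τ = -(1 - (K τ) ^ 2) * deriv K τ)
    (hK0 : Tendsto K (nhdsWithin 0 (Set.Ioi 0)) (nhds 1)) :
    ∀ τ ∈ Set.Ioi (0:ℝ), K τ ≠ 0 := by
  intro τ₂ hτ₂ hzero
  -- the set of left endpoints from which K vanishes identically up to τ₂
  set S : Set ℝ := {x | x ∈ Set.Ioc (0:ℝ) τ₂ ∧ ∀ t ∈ Set.Icc x τ₂, K t = 0} with hS
  have hτ₂S : τ₂ ∈ S := by
    refine ⟨⟨hτ₂, le_rfl⟩, ?_⟩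
    intro t ht
    have : t = τ₂ := le_antisymm ht.2 ht.1
    rwa [this]
  have hbdd : BddBelow S := ⟨0, fun x hx => le_of_lt hx.1.1⟩
  set b := sInf S with hb
  have hb_le : b ≤ τ₂ := csInf_le hbdd hτ₂S
  have hb_nonneg : 0 ≤ b := le_csInf ⟨τ₂, hτ₂S⟩ (fun x hx => le_of_lt hx.1.1)
  -- everything strictly above b (and ≤ τ₂) vanishes
  have hzero_above : ∀ t, b < t → t ≤ τ₂ → K t = 0 := by
    intro t hbt htτ₂
    obtain ⟨x, hxS, hxt⟩ := exists_lt_of_csInf_lt ⟨τ₂, hτ₂S⟩ hbt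
    exact hxS.2 t ⟨le_of_lt hxt, htτ₂⟩
  have hbpos : 0 < b := by
    rcases lt_or_ge 0 b with h | h
    · exact h
    have hb0 : b = 0 := le_antisymm h hb_nonneg
    -- then K ≡ 0 on (0, τ₂], contradicting K → 1 at 0⁺
    have hev : ∀ᶠ t in nhdsWithin 0 (Set.Ioi 0), K t = 0 := by
      filter_upwards [Ioo_mem_nhdsGT hτ₂] with t ht
      exact hzero_above t (hb0 ▸ ht.1) (le_of_lt ht.2)
    have h0 : Tendsto K (nhdsWithin 0 (Set.Ioi 0)) (nhds 0) := by
      refine Tendsto.congr' ?_ tendsto_const_nhds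
      filter_upwards [hev] with t ht using ht.symm
    have : (1:ℝ) = 0 := tendsto_nhds_unique hK0 h0
    norm_num at this
  -- K b = 0
  have hKb : K b = 0 := by
    rcases eq_or_lt_of_le hb_le with h | h
    · rw [h]; exact hzero
    · have hcont : Tendsto K (nhdsWithin b (Set.Ioo b τ₂)) (nhds (K b)) :=
        ((hK b hbpos).continuousAt.continuousWithinAt)
      have hne : (nhdsWithin b (Set.Ioo b τ₂)).NeBot := by
        apply mem_closure_iff_nhdsWithin_neBot.mp
        rw [closure_Ioo (ne_of_lt h)]
        exact ⟨le_rfl, le_of_lt h⟩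
      have h0 : Tendsto K (nhdsWithin b (Set.Ioo b τ₂)) (nhds 0) := by
        refine Tendsto.congr' ?_ tendsto_const_nhds
        filter_upwards [self_mem_nhdsWithin] with t ht
        exact (hzero_above t ht.1 (le_of_lt ht.2)).symm
      exact tendsto_nhds_unique hcont h0
  -- continuity of K² at b: find δ with K² < 1 on [b-δ, b]
  have hKsq_cont : ContinuousAt (fun t => K t ^ 2) b := ((hK b hbpos).continuousAt.pow 2)
  have hev1 : ∀ᶠ t in nhds b, K t ^ 2 < 1 := by
    have : K b ^ 2 < 1 := by rw [hKb]; norm_num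
    exact hKsq_cont.eventually_lt continuousAt_const this
  obtain ⟨ε, hε, hball⟩ := Metric.eventually_nhds_iff.mp hev1
  set δ := min (ε / 2) (b / 2) with hδ
  have hδpos : 0 < δ := lt_min (half_pos hε) (half_pos hbpos)
  have haδ : 0 < b - δ := by
    have : δ ≤ b / 2 := min_le_right _ _
    linarith
  have hlt : ∀ t ∈ Set.Icc (b - δ) τ₂, K t ^ 2 < 1 := by
    intro t ht
    rcases le_or_gt t b with h | h
    · apply hball
      rw [Real.dist_eq, abs_lt]
      constructor
      · have : δ ≤ ε / 2 := min_le_left _ _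
        have := ht.1; linarith
      · linarith [hε]
    · rw [hzero_above t h ht.2]; norm_num
  have hid := aux_gronwall K U hK hU heq haδ (le_trans (by linarith) hb_le) hlt
  -- K vanishes on [b-δ, τ₂], so b-δ ∈ S, contradicting b = sInf S
  have hvanish : ∀ t ∈ Set.Icc (b - δ) τ₂, K t = 0 := by
    intro t ht
    have := hid t ht
    rw [hzero] at this
    have h0 : K t ^ 2 * Real.exp (-(∫ s in t..τ₂, 2 * s ^ 2 * U s / (1 - K s ^ 2))) = 0 := by
      simpa using this.symm
    rcases mul_eq_zero.mp h0 with h | h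
    · exact pow_eq_zero_iff (by norm_num) |>.mp h
    · exact absurd h (Real.exp_ne_zero _)
  have : b - δ ∈ S := ⟨⟨haδ, by linarith [hb_le]⟩, hvanish⟩
  have : b ≤ b - δ := csInf_le hbdd this
  linarith

open MeasureTheory intervalIntegral in
/-- Sharp asymptotic estimates at `τ = ∞`: there exist constants `C > 0`,
`C₁, C₂ > 0` and a radius `τ₀ > 0` such that for all `τ ≥ τ₀`,
`0 < K(τ) ≤ C₁ e^{-C τ³}` and `|U(τ) - 1| ≤ C₂ τ⁻³`. -/
theorem monopole_asymptotics_at_infinity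
    (K U : ℝ → ℝ) (hsol : IsBogomolnySol K U) :
    ∃ C C₁ C₂ τ₀ : ℝ, 0 < C ∧ 0 < C₁ ∧ 0 < C₂ ∧ 0 < τ₀ ∧
      ∀ τ : ℝ, τ₀ ≤ τ →
        (0 < K τ ∧ K τ ≤ C₁ * Real.exp (-C * τ ^ 3)) ∧
        |U τ - 1| ≤ C₂ / τ ^ 3 := by
  obtain ⟨hdiff, heq1, heq2, hK0, _hU0, hKtop, hUtop⟩ := hsol
  have hK : ∀ τ ∈ Set.Ioi (0:ℝ), DifferentiableAt ℝ K τ := fun τ hτ => (hdiff τ hτ).1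
  have hU : ∀ τ ∈ Set.Ioi (0:ℝ), DifferentiableAt ℝ U τ := fun τ hτ => (hdiff τ hτ).2
  have hnz := aux_nonzero K U hK hU heq1 hK0
  -- tail bounds on K and U
  obtain ⟨N₁, hN₁⟩ := Metric.tendsto_atTop.mp hKtop (1/2) (by norm_num)
  obtain ⟨N₂, hN₂⟩ := Metric.tendsto_atTop.mp hUtop (1/4) (by norm_num)
  set τ₁ : ℝ := max 1 (max N₁ N₂) with hτ₁
  have hτ₁pos : (0:ℝ) < τ₁ := lt_of_lt_of_le one_pos (le_max_left _ _)
  have hKsmall : ∀ t, τ₁ ≤ t → |K t| < 1/2 := by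
    intro t ht
    have := hN₁ t (le_trans (le_trans (le_max_left _ _) (le_max_right _ _)) ht)
    rwa [Real.dist_eq, sub_zero] at this
  have hUbig : ∀ t, τ₁ ≤ t → 3/4 ≤ U t := by
    intro t ht
    have := hN₂ t (le_trans (le_trans (le_max_right _ _) (le_max_right _ _)) ht)
    rw [Real.dist_eq] at this
    cases' abs_lt.mp this with h1 h2
    linarith
  -- a point σ < τ₁ where K is large
  have hev : ∀ᶠ t in nhdsWithin 0 (Set.Ioi 0), 1/2 < K t :=
    hK0.eventually (eventually_gt_nhds (by norm_num))
  have hmemIoo : ∀ᶠ t in nhdsWithin 0 (Set.Ioi 0), t ∈ Set.Ioo 0 τ₁ :=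
    eventually_mem_set.mpr (Ioo_mem_nhdsGT hτ₁pos)
  obtain ⟨σ, hσK, hσmem⟩ := (hev.and hmemIoo).exists
  have hσpos : 0 < σ := hσmem.1
  have hστ₁ : σ < τ₁ := hσmem.2
  -- K is positive from σ onwards
  have hKpos : ∀ t, σ ≤ t → 0 < K t := by
    intro t ht
    rcases lt_or_ge 0 (K t) with h | h
    · exact h
    have hKt : K t < 0 := lt_of_le_of_ne h (hnz t (lt_of_lt_of_le hσpos ht))
    have hcont : ContinuousOn K (Set.Icc σ t) := fun s hs =>
      (hK s (lt_of_lt_of_le hσpos hs.1)).continuousAt.continuousWithinAt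
    have h0mem : (0:ℝ) ∈ Set.Icc (K t) (K σ) := ⟨le_of_lt hKt, by linarith⟩
    obtain ⟨x, hx, hKx⟩ := intermediate_value_Icc' ht hcont h0mem
    exact absurd hKx (hnz x (lt_of_lt_of_le hσpos hx.1))
  have hKτ₁pos : 0 < K τ₁ := hKpos τ₁ (le_of_lt hστ₁)
  refine ⟨1/4, K τ₁ * Real.exp (τ₁ ^ 3 / 4), 1, τ₁, by norm_num,
    mul_pos hKτ₁pos (Real.exp_pos _), one_pos, hτ₁pos, ?_⟩
  intro τ hτ
  have hτpos : 0 < τ := lt_of_lt_of_le hτ₁pos hτ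
  have hlt : ∀ t ∈ Set.Icc τ₁ τ, K t ^ 2 < 1 := by
    intro t ht
    have := hKsmall t ht.1
    have h2 := abs_lt.mp this
    nlinarith [h2.1, h2.2]
  constructor
  · refine ⟨hKpos τ (le_trans (le_of_lt hστ₁) hτ), ?_⟩
    -- Gronwall identity at t = τ₁
    have hid := aux_gronwall K U hK hU heq1 hτ₁pos hτ hlt τ₁ ⟨le_rfl, hτ⟩
    set I : ℝ := ∫ s in τ₁..τ, 2 * s ^ 2 * U s / (1 - K s ^ 2) with hI
    -- lower bound the integral
    have hcI : ContinuousOn (fun s => 2 * s ^ 2 * U s / (1 - K s ^ 2)) (Set.Icc τ₁ τ) := by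
      intro s hs
      have hs0 : (0:ℝ) < s := lt_of_lt_of_le hτ₁pos hs.1
      have hne : (1:ℝ) - K s ^ 2 ≠ 0 := by have := hlt s hs; nlinarith
      exact (((continuousAt_const.mul ((continuousAt_id).pow 2)).mul
        (hU s hs0).continuousAt).div
        (continuousAt_const.sub ((hK s hs0).continuousAt.pow 2)) hne).continuousWithinAt
    have hintc : IntervalIntegrable (fun s => 2 * s ^ 2 * U s / (1 - K s ^ 2)) volume τ₁ τ :=
      (hcI.mono (by rw [Set.uIcc_of_le hτ])).intervalIntegrable
    have hmono : (∫ s in τ₁..τ, (3/2 : ℝ) * s ^ 2) ≤ I := by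
      apply integral_mono_on hτ
        (((continuous_const.mul (continuous_pow 2)).continuousOn).intervalIntegrable) hintc
      intro s hs
      have hs0 : (0:ℝ) < s := lt_of_lt_of_le hτ₁pos hs.1
      have hU34 : 3/4 ≤ U s := hUbig s hs.1
      have hKs := hlt s hs
      have hden : 0 < 1 - K s ^ 2 := by nlinarith
      show (3/2 : ℝ) * s ^ 2 ≤ 2 * s ^ 2 * U s / (1 - K s ^ 2)
      rw [le_div_iff₀ hden]
      nlinarith [sq_nonneg (K s), sq_nonneg s]
    have hval : (∫ s in τ₁..τ, (3/2 : ℝ) * s ^ 2) = (τ ^ 3 - τ₁ ^ 3) / 2 := by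
      rw [intervalIntegral.integral_const_mul, integral_pow]
      norm_num
    have hIlow : (τ ^ 3 - τ₁ ^ 3) / 2 ≤ I := hval ▸ hmono
    have hsq : K τ ^ 2 ≤ K τ₁ ^ 2 * Real.exp (-(( τ ^ 3 - τ₁ ^ 3) / 2)) := by
      rw [hid]
      exact mul_le_mul_of_nonneg_left (Real.exp_le_exp.mpr (neg_le_neg hIlow)) (sq_nonneg _)
    have hrhs : K τ₁ ^ 2 * Real.exp (-((τ ^ 3 - τ₁ ^ 3) / 2))
        = (K τ₁ * Real.exp (τ₁ ^ 3 / 4) * Real.exp (-(1/4) * τ ^ 3)) ^ 2 := by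
      have hsqexp : ∀ x : ℝ, Real.exp x ^ 2 = Real.exp (2 * x) := fun x => by
        rw [← Real.exp_nat_mul]; norm_num
      rw [mul_pow, mul_pow, hsqexp, hsqexp, mul_assoc, ← Real.exp_add]
      congr 1
      ring
    have hfin : K τ ^ 2 ≤ (K τ₁ * Real.exp (τ₁ ^ 3 / 4) * Real.exp (-(1/4) * τ ^ 3)) ^ 2 :=
      hrhs ▸ hsq
    have := Real.sqrt_le_sqrt hfin
    rw [Real.sqrt_sq (le_of_lt (hKpos τ (le_trans (le_of_lt hστ₁) hτ))),
      Real.sqrt_sq (by positivity)] at this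
    calc K τ ≤ K τ₁ * Real.exp (τ₁ ^ 3 / 4) * Real.exp (-(1/4) * τ ^ 3) := this
      _ = K τ₁ * Real.exp (τ₁ ^ 3 / 4) * Real.exp (-(1/4) * τ ^ 3) := rfl
  · -- the U estimate
    have hderivU_eq : ∀ t, τ ≤ t → deriv U t = (1 - K t ^ 2) ^ 2 / t ^ 4 :=
      fun t ht => heq2 t (lt_of_lt_of_le hτpos ht)
    have key : ∀ T, τ ≤ T → 0 ≤ U T - U τ ∧ U T - U τ ≤ 1 / τ ^ 3 := by
      intro T hT
      have hpos' : ∀ t ∈ Set.Icc τ T, (0:ℝ) < t := fun t ht => lt_of_lt_of_le hτpos ht.1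
      have hcontdU : ContinuousOn (deriv U) (Set.Icc τ T) := by
        apply ContinuousOn.congr (f := fun t => (1 - K t ^ 2) ^ 2 / t ^ 4)
        · intro t ht
          have ht0 := hpos' t ht
          exact (((continuousAt_const.sub ((hK t ht0).continuousAt.pow 2)).pow 2).div
            (continuousAt_id.pow 4) (pow_ne_zero 4 (ne_of_gt ht0))).continuousWithinAt
        · intro t ht; exact heq2 t (hpos' t ht)
      have hintdU : IntervalIntegrable (deriv U) volume τ T :=
        (hcontdU.mono (by rw [Set.uIcc_of_le hT])).intervalIntegrable
      have hFTC : (∫ t in τ..T, deriv U t) = U T - U τ := by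
        apply integral_eq_sub_of_hasDerivAt
        · intro t ht
          rw [Set.uIcc_of_le hT] at ht
          exact (hU t (hpos' t ht)).hasDerivAt
        · exact hintdU
      constructor
      · rw [← hFTC]
        apply intervalIntegral.integral_nonneg hT
        intro t ht
        rw [heq2 t (hpos' t ht)]
        positivity
      · rw [← hFTC]
        have hmono2 : (∫ t in τ..T, deriv U t) ≤ ∫ t in τ..T, 1 / t ^ 4 := by
          apply integral_mono_on hT hintdU
          · apply ContinuousOn.intervalIntegrable
            intro t ht
            rw [Set.uIcc_of_le hT] at ht
            exact (continuousAt_const.div (continuousAt_id.pow 4)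
              (pow_ne_zero 4 (ne_of_gt (hpos' t ht)))).continuousWithinAt
          · intro t ht
            rw [heq2 t (hpos' t ht)]
            have ht0 := hpos' t ht
            have hKt := abs_lt.mp (hKsmall t (le_trans hτ ht.1))
            have hsq4 : K t ^ 2 ≤ 1/4 := by nlinarith [hKt.1, hKt.2]
            have h1 : (1 - K t ^ 2) ^ 2 ≤ 1 := by
              have h0 : 0 ≤ 1 - K t ^ 2 := by nlinarith
              have := pow_le_pow_left₀ h0 (by nlinarith [sq_nonneg (K t)] : 1 - K t ^ 2 ≤ 1) 2
              simpa using this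
            exact (div_le_div_iff_of_pos_right (by positivity)).mpr h1
        have hcomp : (∫ t in τ..T, 1 / t ^ 4) = (-1/3 * (T ^ 3)⁻¹) - (-1/3 * (τ ^ 3)⁻¹) := by
          apply integral_eq_sub_of_hasDerivAt
          · intro t ht
            rw [Set.uIcc_of_le hT] at ht
            have ht0 := hpos' t ht
            have h1 : HasDerivAt (fun t : ℝ => t ^ 3) (3 * t ^ 2) t := by
              simpa using hasDerivAt_pow 3 t
            have h2 := (h1.inv (by positivity)).const_mul (-1/3 : ℝ)
            refine h2.congr_deriv ?_
            field_simp
          · apply ContinuousOn.intervalIntegrable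
            intro t ht
            rw [Set.uIcc_of_le hT] at ht
            exact (continuousAt_const.div (continuousAt_id.pow 4)
              (pow_ne_zero 4 (ne_of_gt (hpos' t ht)))).continuousWithinAt
        have hτ3 : (0:ℝ) < τ ^ 3 := pow_pos hτpos 3
        have hT3 : (0:ℝ) < T ^ 3 := pow_pos (lt_of_lt_of_le hτpos hT) 3
        have : (-1/3 * (T ^ 3)⁻¹) - (-1/3 * (τ ^ 3)⁻¹) ≤ 1 / τ ^ 3 := by
          have h1 : 0 < (T ^ 3)⁻¹ := inv_pos.mpr hT3
          have h0 : 0 < (τ ^ 3)⁻¹ := inv_pos.mpr hτ3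
          rw [one_div]
          linarith
        calc (∫ t in τ..T, deriv U t) ≤ ∫ t in τ..T, 1 / t ^ 4 := hmono2
          _ = (-1/3 * (T ^ 3)⁻¹) - (-1/3 * (τ ^ 3)⁻¹) := hcomp
          _ ≤ 1 / τ ^ 3 := this
    have htend : Tendsto (fun T => U T - U τ) atTop (nhds (1 - U τ)) :=
      hUtop.sub_const (U τ)
    have hub : 1 - U τ ≤ 1 / τ ^ 3 :=
      le_of_tendsto htend (eventually_atTop.mpr ⟨τ, fun T hT => (key T hT).2⟩)
    have hlb : 0 ≤ 1 - U τ :=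
      ge_of_tendsto htend (eventually_atTop.mpr ⟨τ, fun T hT => (key T hT).1⟩)
    rw [abs_sub_comm, abs_of_nonneg hlb]
    linarith
end

section
/- Let (K, U) be the unique solution on (0, ∞) of the system τ²·K·U = -(1 - K²)·K' and U' = (1 - K²)²/τ⁴ with K(0⁺) = 1, U(0⁺) = 0, K(∞) = 0, U(∞) = 1. Then there exist constants C₁, C₂ > 0 and τ₁ > 0 such that for all 0 < τ ≤ τ₁ one has |K(τ) - 1| ≤ C₁·τ² and 0 < U(τ) ≤ C₂·τ. -/
set_option maxHeartbeats 1000000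


open Real Filter Set


lemma monoIoc' {f : ℝ → ℝ} {b : ℝ}
    (hdiff : ∀ x ∈ Set.Ioc (0:ℝ) b, DifferentiableAt ℝ f x)
    (hderiv : ∀ x ∈ Set.Ioo (0:ℝ) b, 0 ≤ deriv f x) :
    MonotoneOn f (Set.Ioc 0 b) := by
  apply monotoneOn_of_deriv_nonneg (convex_Ioc 0 b)
  · exact fun x hx => (hdiff x hx).continuousAt.continuousWithinAt
  · rw [interior_Ioc]
    exact fun x hx => (hdiff x (Set.Ioo_subset_Ioc_self hx)).differentiableWithinAt
  · rw [interior_Ioc]; exact hderiv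

lemma monoIcc' {f : ℝ → ℝ} {a b : ℝ}
    (hdiff : ∀ x ∈ Set.Icc a b, DifferentiableAt ℝ f x)
    (hderiv : ∀ x ∈ Set.Ioo a b, 0 ≤ deriv f x) :
    MonotoneOn f (Set.Icc a b) := by
  apply monotoneOn_of_deriv_nonneg (convex_Icc a b)
  · exact fun x hx => (hdiff x hx).continuousAt.continuousWithinAt
  · rw [interior_Icc]
    exact fun x hx => (hdiff x (Set.Ioo_subset_Icc_self hx)).differentiableWithinAt
  · rw [interior_Icc]; exact hderiv

lemma nonneg_of_monoIoc {f : ℝ → ℝ} {b : ℝ}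
    (hmono : MonotoneOn f (Set.Ioc 0 b))
    (hlim : Filter.Tendsto f (nhdsWithin 0 (Set.Ioi 0)) (nhds 0)) :
    ∀ x ∈ Set.Ioc (0:ℝ) b, 0 ≤ f x := by
  intro x hx
  refine le_of_tendsto hlim ?_
  filter_upwards [Ioo_mem_nhdsGT_of_mem (Set.mem_Ico.mpr ⟨le_refl 0, hx.1⟩)] with s hs
  exact hmono ⟨hs.1, hs.2.le.trans hx.2⟩ hx hs.2.le


/-- Asymptotic estimates at `τ = 0`: there exist constants `C₁, C₂ > 0` and
`τ₁ > 0` such that for all `0 < τ ≤ τ₁`, `|K(τ) - 1| ≤ C₁ τ²` and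
`0 < U(τ) ≤ C₂ τ`. -/
theorem monopole_asymptotics_at_origin
    (K U : ℝ → ℝ) (hsol : IsBogomolnySol K U) :
    ∃ C₁ C₂ τ₁ : ℝ, 0 < C₁ ∧ 0 < C₂ ∧ 0 < τ₁ ∧
      ∀ τ : ℝ, 0 < τ → τ ≤ τ₁ →
        |K τ - 1| ≤ C₁ * τ ^ 2 ∧ (0 < U τ ∧ U τ ≤ C₂ * τ) := by
  obtain ⟨hdiff, heq1, heq2, hK0, hU0, hKinf, hUinf⟩ := hsol
  have hKd : ∀ τ ∈ Set.Ioi (0:ℝ), DifferentiableAt ℝ K τ := fun τ h => (hdiff τ h).1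
  have hUd : ∀ τ ∈ Set.Ioi (0:ℝ), DifferentiableAt ℝ U τ := fun τ h => (hdiff τ h).2
  -- derivative of g = (1-K²)²
  have hgd : ∀ τ ∈ Set.Ioi (0:ℝ), HasDerivAt (fun t => (1 - K t ^ 2) ^ 2)
      (4 * τ^2 * (K τ)^2 * U τ) τ := by
    intro τ hτ
    have h1 : HasDerivAt (fun t => (1 - K t ^ 2) ^ 2)
        (2 * (1 - K τ ^ 2) ^ 1 * -(2 * K τ ^ 1 * deriv K τ)) τ :=
      (((hKd τ hτ).hasDerivAt.pow 2).const_sub 1).pow 2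
    convert h1 using 1
    have e1 := heq1 τ hτ
    simp only [pow_one]
    linear_combination (4 * K τ) * e1
  -- U monotone
  have hUmono : MonotoneOn U (Set.Ioi 0) := by
    apply monotoneOn_of_deriv_nonneg (convex_Ioi 0)
    · exact fun x hx => (hUd x hx).continuousAt.continuousWithinAt
    · rw [interior_Ioi]; exact fun x hx => (hUd x hx).differentiableWithinAt
    · rw [interior_Ioi]; intro x hx; rw [heq2 x hx]; positivity
  have hUnn : ∀ τ ∈ Set.Ioi (0:ℝ), 0 ≤ U τ := by
    intro τ hτ
    refine le_of_tendsto hU0 ?_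
    filter_upwards [Ioo_mem_nhdsGT_of_mem (Set.mem_Ico.mpr ⟨le_refl 0, hτ⟩)] with s hs
    exact hUmono hs.1 hτ hs.2.le
  have hUle1 : ∀ τ ∈ Set.Ioi (0:ℝ), U τ ≤ 1 := by
    intro τ hτ
    refine ge_of_tendsto hUinf ?_
    filter_upwards [eventually_ge_atTop τ] with s hs
    exact hUmono hτ (lt_of_lt_of_le hτ hs) hs
  -- τ₁
  have hev : ∀ᶠ t in nhdsWithin 0 (Set.Ioi 0), |K t - 1| < 1/2 := by
    have := Metric.tendsto_nhds.mp hK0 (1/2) (by norm_num)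
    simpa [Real.dist_eq] using this
  rw [eventually_nhdsWithin_iff] at hev
  obtain ⟨ε, hε, hball⟩ := Metric.eventually_nhds_iff.mp hev
  set τ₁ := ε/2 with hτ₁def
  have hτ₁ : 0 < τ₁ := by positivity
  have hKcl : ∀ t ∈ Set.Ioc (0:ℝ) τ₁, |K t - 1| < 1/2 := by
    intro t ht
    refine hball ?_ ht.1
    rw [Real.dist_eq, sub_zero, abs_of_pos ht.1]
    have := ht.2; simp only [hτ₁def] at this ⊢; linarith
  have hKlb : ∀ t ∈ Set.Ioc (0:ℝ) τ₁, 1/2 ≤ K t := by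
    intro t ht; have := abs_lt.mp (hKcl t ht); linarith [this.1]
  have hKub : ∀ t ∈ Set.Ioc (0:ℝ) τ₁, K t ≤ 3/2 := by
    intro t ht; have := abs_lt.mp (hKcl t ht); linarith [this.2]
  -- limit of g at 0⁺
  have hid0 : Tendsto (fun t : ℝ => t) (nhdsWithin 0 (Set.Ioi 0)) (nhds 0) :=
    (continuous_id.tendsto 0).mono_left nhdsWithin_le_nhds
  have hg0 : Tendsto (fun t => (1 - K t ^ 2) ^ 2) (nhdsWithin 0 (Set.Ioi 0)) (nhds 0) := by
    have h1 : Tendsto (fun t => (1 - K t ^ 2) ^ 2) (nhdsWithin 0 (Set.Ioi 0))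
        (nhds ((1 - 1 ^ 2) ^ 2)) := (tendsto_const_nhds.sub (hK0.pow 2)).pow 2
    simpa using h1
  -- g ≤ 3 t³ on Ioc 0 τ₁
  have hgle : ∀ t ∈ Set.Ioc (0:ℝ) τ₁, (1 - K t ^ 2) ^ 2 ≤ 3 * t ^ 3 := by
    have hd : ∀ x ∈ Set.Ioc (0:ℝ) τ₁,
        HasDerivAt (fun t => 3 * t ^ 3 - (1 - K t ^ 2) ^ 2)
          (3 * (3 * x ^ 2) - 4 * x ^ 2 * (K x) ^ 2 * U x) x := by
      intro x hx
      exact ((hasDerivAt_pow 3 x).const_mul 3).sub (hgd x hx.1)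
    have hmono : MonotoneOn (fun t => 3 * t ^ 3 - (1 - K t ^ 2) ^ 2) (Set.Ioc 0 τ₁) := by
      apply monoIoc' (fun x hx => (hd x hx).differentiableAt)
      intro x hx
      rw [(hd x (Set.Ioo_subset_Ioc_self hx)).deriv]
      have hx' : x ∈ Set.Ioc (0:ℝ) τ₁ := Set.Ioo_subset_Ioc_self hx
      have h1 := hKlb x hx'
      have h2 := hKub x hx'
      have h3 := hUnn x hx.1
      have h4 := hUle1 x hx.1
      have hK2 : (K x) ^ 2 ≤ 9/4 := by nlinarith
      nlinarith [sq_nonneg x, mul_nonneg (sq_nonneg x) h3]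
    have hnn := nonneg_of_monoIoc hmono (by
      have := ((hid0.pow 3).const_mul (3:ℝ)).sub hg0
      simpa using this)
    intro t ht
    have := hnn t ht
    linarith
  -- |1 - K²| ≤ 2 t √t on Ioc 0 τ₁
  have habs1 : ∀ t ∈ Set.Ioc (0:ℝ) τ₁, |1 - K t ^ 2| ≤ 2 * t * Real.sqrt t := by
    intro t ht
    have hs : Real.sqrt t ^ 2 = t := Real.sq_sqrt ht.1.le
    have h3 : (1 - K t ^ 2) ^ 2 ≤ (2 * t * Real.sqrt t) ^ 2 := by
      have h4 := hgle t ht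
      have h5 : (2 * t * Real.sqrt t) ^ 2 = 4 * t ^ 3 := by
        rw [mul_pow, mul_pow, hs]; ring
      rw [h5]
      nlinarith [pow_pos ht.1 3]
    calc |1 - K t ^ 2| = Real.sqrt ((1 - K t ^ 2) ^ 2) := (Real.sqrt_sq_eq_abs _).symm
      _ ≤ Real.sqrt ((2 * t * Real.sqrt t) ^ 2) := Real.sqrt_le_sqrt h3
      _ = 2 * t * Real.sqrt t := Real.sqrt_sq (mul_nonneg (by linarith [ht.1] : (0:ℝ) ≤ 2 * t) (Real.sqrt_nonneg t))
  have hsqrt0 : Tendsto Real.sqrt (nhdsWithin 0 (Set.Ioi 0)) (nhds 0) := by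
    have := (Real.continuous_sqrt.tendsto 0).mono_left
      (nhdsWithin_le_nhds : nhdsWithin (0:ℝ) (Set.Ioi 0) ≤ nhds 0)
    simpa using this
  -- derivative of f₄
  have hD : ∀ x ∈ Set.Ioc (0:ℝ) τ₁,
      HasDerivAt (fun t => 2 * t ^ 5 * Real.sqrt t + (t * (1 - K t ^ 2) ^ 2 - t ^ 4 * U t))
        (11 * x ^ 4 * Real.sqrt x + 4 * x ^ 3 * U x * ((K x) ^ 2 - 1)) x := by
    intro x hx
    have hsq := Real.hasDerivAt_sqrt hx.1.ne'
    have h1 := ((hasDerivAt_pow 5 x).const_mul (2:ℝ)).mul hsq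
    have h2 := (hasDerivAt_id x).mul (hgd x hx.1)
    have h3 := (hasDerivAt_pow 4 x).mul (hUd x hx.1).hasDerivAt
    have h4 := h1.add (h2.sub h3)
    refine h4.congr_deriv ?_
    rw [heq2 x hx.1]
    have hs : Real.sqrt x ^ 2 = x := Real.sq_sqrt hx.1.le
    have hsp : (0:ℝ) < Real.sqrt x := Real.sqrt_pos.mpr hx.1
    have hxp : (0:ℝ) < x := hx.1
    field_simp
    ring_nf
    rw [id_eq]
    linear_combination (-(x ^ 4)) * hs
  have hFnn : ∀ t ∈ Set.Ioc (0:ℝ) τ₁,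
      0 ≤ 2 * t ^ 5 * Real.sqrt t + (t * (1 - K t ^ 2) ^ 2 - t ^ 4 * U t) := by
    apply nonneg_of_monoIoc
    · apply monoIoc' (fun x hx => (hD x hx).differentiableAt)
      intro x hx
      have hx' : x ∈ Set.Ioc (0:ℝ) τ₁ := Set.Ioo_subset_Ioc_self hx
      rw [(hD x hx').deriv]
      have hs : Real.sqrt x ^ 2 = x := Real.sq_sqrt hx.1.le
      have hsp : (0:ℝ) < Real.sqrt x := Real.sqrt_pos.mpr hx.1
      have habs := abs_le.mp (habs1 x hx')
      have h3u := hUnn x hx.1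
      have h4u := hUle1 x hx.1
      have hxp : (0:ℝ) < x := hx.1
      have p1 : 0 ≤ x ^ 3 * U x * ((K x) ^ 2 - 1 + 2 * x * Real.sqrt x) :=
        mul_nonneg (mul_nonneg (by positivity) h3u) (by linarith [habs.2])
      have p2 : 0 ≤ x ^ 3 * (1 - U x) * (2 * x * Real.sqrt x) :=
        mul_nonneg (mul_nonneg (by positivity) (by linarith)) (by positivity)
      nlinarith [mul_pos (pow_pos hxp 4) hsp]
    · have h1 : Tendsto (fun t => 2 * t ^ 5 * Real.sqrt t)
          (nhdsWithin 0 (Set.Ioi 0)) (nhds (2 * 0 ^ 5 * 0)) :=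
        ((hid0.pow 5).const_mul 2).mul hsqrt0
      have h2 : Tendsto (fun t => t * (1 - K t ^ 2) ^ 2 - t ^ 4 * U t)
          (nhdsWithin 0 (Set.Ioi 0)) (nhds (0 * 0 - 0 ^ 4 * 0)) :=
        (hid0.mul hg0).sub ((hid0.pow 4).mul hU0)
      have := h1.add h2
      simpa using this
  -- V = U/t + 4√t is monotone
  have hVD : ∀ x ∈ Set.Ioc (0:ℝ) τ₁,
      HasDerivAt (fun t => U t / t + 4 * Real.sqrt t)
        ((deriv U x * x - U x * 1) / x ^ 2 + 4 * (1 / (2 * Real.sqrt x))) x := by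
    intro x hx
    exact ((hUd x hx.1).hasDerivAt.div (hasDerivAt_id x) hx.1.ne').add
      ((Real.hasDerivAt_sqrt hx.1.ne').const_mul 4)
  have hVmono : MonotoneOn (fun t => U t / t + 4 * Real.sqrt t) (Set.Ioc 0 τ₁) := by
    apply monoIoc' (fun x hx => (hVD x hx).differentiableAt)
    intro x hx
    have hx' : x ∈ Set.Ioc (0:ℝ) τ₁ := Set.Ioo_subset_Ioc_self hx
    rw [(hVD x hx').deriv, heq2 x hx.1]
    have hs : Real.sqrt x ^ 2 = x := Real.sq_sqrt hx.1.le
    have hsp : (0:ℝ) < Real.sqrt x := Real.sqrt_pos.mpr hx.1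
    have hxp : (0:ℝ) < x := hx.1
    have e : ((1 - K x ^ 2) ^ 2 / x ^ 4 * x - U x * 1) / x ^ 2 + 4 * (1 / (2 * Real.sqrt x))
        = (2 * x ^ 5 * Real.sqrt x + (x * (1 - K x ^ 2) ^ 2 - x ^ 4 * U x)) / x ^ 6 := by
      field_simp
      ring_nf
      linear_combination (-(4 * x ^ 4)) * hs
    rw [e]
    exact div_nonneg (hFnn x hx') (by positivity)
  obtain ⟨C₂, hC₂def⟩ : ∃ C₂ : ℝ, C₂ = U τ₁ / τ₁ + 4 * Real.sqrt τ₁ := ⟨_, rfl⟩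
  have hC₂pos : 0 < C₂ := by
    rw [hC₂def]
    exact add_pos_of_nonneg_of_pos (div_nonneg (hUnn τ₁ hτ₁) hτ₁.le)
      (by positivity)
  have hUleC : ∀ t ∈ Set.Ioc (0:ℝ) τ₁, U t ≤ C₂ * t := by
    intro t ht
    have h1 := hVmono ht (Set.right_mem_Ioc.mpr hτ₁) ht.2
    simp only at h1
    have h2 : U t / t ≤ C₂ := by
      rw [hC₂def]; have := Real.sqrt_nonneg t; linarith [h1]
    calc U t = (U t / t) * t := (div_mul_cancel₀ (U t) ht.1.ne').symm
      _ ≤ C₂ * t := mul_le_mul_of_nonneg_right h2 ht.1.le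
  -- improved g bound
  have hgle2 : ∀ t ∈ Set.Ioc (0:ℝ) τ₁, (1 - K t ^ 2) ^ 2 ≤ 4 * C₂ * t ^ 4 := by
    have hd : ∀ x ∈ Set.Ioc (0:ℝ) τ₁,
        HasDerivAt (fun t => 4 * C₂ * t ^ 4 - (1 - K t ^ 2) ^ 2)
          (4 * C₂ * (4 * x ^ 3) - 4 * x ^ 2 * (K x) ^ 2 * U x) x := by
      intro x hx
      have h1 : HasDerivAt (fun t : ℝ => 4 * C₂ * t ^ 4) (4 * C₂ * (4 * x ^ 3)) x := by
        have := (hasDerivAt_pow 4 x).const_mul (4 * C₂)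
        refine this.congr_deriv ?_
        all_goals push_cast; ring
      exact h1.sub (hgd x hx.1)
    have hmono : MonotoneOn (fun t => 4 * C₂ * t ^ 4 - (1 - K t ^ 2) ^ 2) (Set.Ioc 0 τ₁) := by
      apply monoIoc' (fun x hx => (hd x hx).differentiableAt)
      intro x hx
      have hx' : x ∈ Set.Ioc (0:ℝ) τ₁ := Set.Ioo_subset_Ioc_self hx
      rw [(hd x hx').deriv]
      have h1 := hKlb x hx'
      have h2 := hKub x hx'
      have h3 := hUnn x hx.1
      have h4 := hUleC x hx'
      have hxp : (0:ℝ) < x := hx.1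
      have hK2 : (K x) ^ 2 ≤ 9/4 := by nlinarith
      have p1 : 0 ≤ (9/4 - (K x) ^ 2) * U x * x ^ 2 :=
        mul_nonneg (mul_nonneg (by linarith) h3) (sq_nonneg x)
      have p2 : 0 ≤ (C₂ * x - U x) * x ^ 2 := mul_nonneg (by linarith) (sq_nonneg x)
      nlinarith [mul_pos hC₂pos (pow_pos hxp 3)]
    have hlim : Tendsto (fun t => 4 * C₂ * t ^ 4 - (1 - K t ^ 2) ^ 2)
        (nhdsWithin 0 (Set.Ioi 0)) (nhds 0) := by
      have := ((hid0.pow 4).const_mul (4 * C₂)).sub hg0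
      simpa using this
    intro t ht
    have := nonneg_of_monoIoc hmono hlim t ht
    linarith
  -- K estimate
  have hKest : ∀ t ∈ Set.Ioc (0:ℝ) τ₁, |K t - 1| ≤ (2 * Real.sqrt C₂) * t ^ 2 := by
    intro t ht
    have hsC : Real.sqrt C₂ ^ 2 = C₂ := Real.sq_sqrt hC₂pos.le
    have h1 : |1 - K t ^ 2| ≤ 2 * Real.sqrt C₂ * t ^ 2 := by
      have h2 := hgle2 t ht
      have h3 : (1 - K t ^ 2) ^ 2 ≤ (2 * Real.sqrt C₂ * t ^ 2) ^ 2 := by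
        have e : (2 * Real.sqrt C₂ * t ^ 2) ^ 2 = 4 * C₂ * t ^ 4 := by
          rw [mul_pow, mul_pow, hsC]; ring
        rw [e]; exact h2
      calc |1 - K t ^ 2| = Real.sqrt ((1 - K t ^ 2) ^ 2) := (Real.sqrt_sq_eq_abs _).symm
        _ ≤ Real.sqrt ((2 * Real.sqrt C₂ * t ^ 2) ^ 2) := Real.sqrt_le_sqrt h3
        _ = 2 * Real.sqrt C₂ * t ^ 2 := Real.sqrt_sq (by positivity)
    have hKl := hKlb t ht
    have h5 : 1 ≤ |K t + 1| := by rw [abs_of_pos (by linarith)]; linarith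
    have e2 : |1 - K t ^ 2| = |K t - 1| * |K t + 1| := by
      rw [← abs_mul]
      have : (K t - 1) * (K t + 1) = -(1 - K t ^ 2) := by ring
      rw [this, abs_neg]
    calc |K t - 1| = |K t - 1| * 1 := (mul_one _).symm
      _ ≤ |K t - 1| * |K t + 1| := mul_le_mul_of_nonneg_left h5 (abs_nonneg _)
      _ = |1 - K t ^ 2| := e2.symm
      _ ≤ (2 * Real.sqrt C₂) * t ^ 2 := h1
  -- positivity of U
  have hUpos : ∀ t ∈ Set.Ioi (0:ℝ), 0 < U t := by
    intro t ht
    rcases lt_or_eq_of_le (hUnn t ht) with hpos | hzero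
    · exact hpos
    exfalso
    have htp : (0:ℝ) < t := ht
    have hUz : ∀ s ∈ Set.Ioc (0:ℝ) t, U s = 0 := by
      intro s hs
      have h3 := hUmono hs.1 ht hs.2
      have h2 := hUnn s hs.1
      exact le_antisymm (by linarith) h2
    have hgz : (1 - K t ^ 2) ^ 2 = 0 := by
      have hmono : MonotoneOn (fun u => -(1 - K u ^ 2) ^ 2) (Set.Ioc 0 t) := by
        apply monoIoc' (fun x hx => ((hgd x hx.1).neg).differentiableAt)
        intro x hx
        rw [((hgd x hx.1).neg).deriv, hUz x (Set.Ioo_subset_Ioc_self hx)]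
        simp
      have := nonneg_of_monoIoc hmono (by simpa using hg0.neg) t (Set.right_mem_Ioc.mpr htp)
      nlinarith [sq_nonneg (1 - K t ^ 2)]
    have hallz : ∀ b, t < b → U b = 0 := by
      intro b hb
      have hbpos : (0:ℝ) < b := htp.trans hb
      have hsub : Set.Icc t b ⊆ Set.Ioi (0:ℝ) := fun x hx => lt_of_lt_of_le htp hx.1
      have hcont : ContinuousOn K (Set.Icc t b) :=
        fun x hx => ((hKd x (hsub hx)).continuousAt).continuousWithinAt
      obtain ⟨M₀, hM₀⟩ := (isCompact_Icc).exists_bound_of_continuousOn hcont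
      have hM₀nn : 0 ≤ M₀ := le_trans (norm_nonneg _) (hM₀ t (Set.left_mem_Icc.mpr hb.le))
      obtain ⟨M, hMdef⟩ : ∃ M : ℝ, M = 4 * b ^ 2 * M₀ ^ 2 + 1 / t ^ 4 := ⟨_, rfl⟩
      have hZd : ∀ x ∈ Set.Icc t b, HasDerivAt
          (fun u => -(((1 - K u ^ 2) ^ 2 + U u) * Real.exp (-(M * u))))
          (-((4 * x ^ 2 * (K x) ^ 2 * U x + deriv U x) * Real.exp (-(M * x)) +
            ((1 - K x ^ 2) ^ 2 + U x) * (Real.exp (-(M * x)) * -M))) x := by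
        intro x hx
        have hx0 : x ∈ Set.Ioi (0:ℝ) := hsub hx
        have hexp : HasDerivAt (fun u : ℝ => Real.exp (-(M * u)))
            (Real.exp (-(M * x)) * -M) x := by
          have h1 : HasDerivAt (fun u : ℝ => -(M * u)) (-M) x := by
            have := ((hasDerivAt_id x).const_mul M).neg
            exact this.congr_deriv (by ring)
          exact h1.exp
        exact (((hgd x hx0).add (hUd x hx0).hasDerivAt).mul hexp).neg
      have hmono : MonotoneOn
          (fun u => -(((1 - K u ^ 2) ^ 2 + U u) * Real.exp (-(M * u)))) (Set.Icc t b) := by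
        apply monoIcc' (fun x hx => (hZd x hx).differentiableAt)
        intro x hx
        have hx' : x ∈ Set.Icc t b := Set.Ioo_subset_Icc_self hx
        rw [(hZd x hx').deriv, heq2 x (hsub hx')]
        have hxp : (0:ℝ) < x := hsub hx'
        have hg := sq_nonneg (1 - K x ^ 2)
        have hU := hUnn x (hsub hx')
        have hKb : |K x| ≤ M₀ := by
          have := hM₀ x hx'; rwa [Real.norm_eq_abs] at this
        have hK2 : (K x) ^ 2 ≤ M₀ ^ 2 := by nlinarith [abs_nonneg (K x), sq_abs (K x)]
        have hx2 : x ^ 2 ≤ b ^ 2 := by nlinarith [hx'.2, hxp]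
        have hgx : (1 - K x ^ 2) ^ 2 / x ^ 4 ≤ (1 - K x ^ 2) ^ 2 / t ^ 4 :=
          div_le_div_of_nonneg_left hg (pow_pos htp 4) (pow_le_pow_left₀ htp.le hx'.1 4)
        have p1 : 0 ≤ (M₀ ^ 2 - (K x) ^ 2) * (U x * x ^ 2) :=
          mul_nonneg (by linarith) (mul_nonneg hU (sq_nonneg x))
        have p2 : 0 ≤ (b ^ 2 - x ^ 2) * (M₀ ^ 2 * U x) :=
          mul_nonneg (by linarith) (mul_nonneg (sq_nonneg M₀) hU)
        have key : 4 * x ^ 2 * (K x) ^ 2 * U x + (1 - K x ^ 2) ^ 2 / x ^ 4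
            ≤ M * ((1 - K x ^ 2) ^ 2 + U x) := by
          rw [hMdef]
          have q1 : 0 ≤ 4 * b ^ 2 * M₀ ^ 2 * (1 - K x ^ 2) ^ 2 := by positivity
          have q2 : 0 ≤ U x * (1 / t ^ 4) := mul_nonneg hU (by positivity)
          have e1 : (4 * b ^ 2 * M₀ ^ 2 + 1 / t ^ 4) * ((1 - K x ^ 2) ^ 2 + U x)
              = 4 * b ^ 2 * M₀ ^ 2 * (1 - K x ^ 2) ^ 2 + 4 * b ^ 2 * M₀ ^ 2 * U x
                + (1 - K x ^ 2) ^ 2 / t ^ 4 + U x * (1 / t ^ 4) := by ring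
          have e2 : 4 * x ^ 2 * (K x) ^ 2 * U x ≤ 4 * b ^ 2 * M₀ ^ 2 * U x := by
            nlinarith [p1, p2]
          rw [e1]
          linarith [q1, q2, hgx, e2]
        have hep := Real.exp_pos (-(M * x))
        nlinarith [mul_nonneg (sub_nonneg.mpr key) hep.le]
      have h1 := hmono (Set.left_mem_Icc.mpr hb.le) (Set.right_mem_Icc.mpr hb.le) hb.le
      simp only at h1
      have hZt : ((1 - K t ^ 2) ^ 2 + U t) * Real.exp (-(M * t)) = 0 := by
        rw [hgz, ← hzero]; ring
      have hZb : ((1 - K b ^ 2) ^ 2 + U b) * Real.exp (-(M * b)) ≤ 0 := by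
        rw [hZt] at h1; linarith
      have hsum : (1 - K b ^ 2) ^ 2 + U b ≤ 0 := by
        by_contra hcc
        push_neg at hcc
        nlinarith [Real.exp_pos (-(M * b)), hZb]
      exact le_antisymm (by nlinarith [sq_nonneg (1 - K b ^ 2)]) (hUnn b hbpos)
    have hev' : U =ᶠ[atTop] (fun _ => (0:ℝ)) := by
      filter_upwards [eventually_gt_atTop t] with b hb
      exact hallz b hb
    have h0 : Tendsto U atTop (nhds 0) := Tendsto.congr' hev'.symm tendsto_const_nhds
    have := tendsto_nhds_unique h0 hUinf
    norm_num at this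

  refine ⟨2 * Real.sqrt C₂, C₂, τ₁, ?_, hC₂pos, hτ₁, ?_⟩
  · have := Real.sqrt_pos.mpr hC₂pos
    linarith
  · intro τ hτ0 hττ₁
    have ht : τ ∈ Set.Ioc (0:ℝ) τ₁ := ⟨hτ0, hττ₁⟩
    exact ⟨hKest τ ht, hUpos τ hτ0, hUleC τ ht⟩
end

section
/- Suppose (K, U) is a twice differentiable solution on (0, ∞) of the system τ²·K·U = -(1 - K²)·K' and U' = (1 - K²)²/τ⁴ with 0 < K(τ) < 1 for all τ > 0. Define f(s) = K(e^s)² for s ∈ ℝ. Then f is twice differentiable and satisfies the autonomous second-order equation f''(s) - (3 + f'(s)/(f(s)·(1 - f(s))))·f'(s) + 2·f(s)·(1 - f(s)) = 0 for all s ∈ ℝ; moreover if K(τ) → 1 as τ → 0⁺ and K(τ) → 0 as τ → ∞, then f(s) → 1 as s → -∞ and f(s) → 0 as s → +∞. -/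
open Real Filter Set

/-- Under the substitution `s = ln τ`, `f(s) = K(e^s)²`, a twice differentiable
solution of the Bogomolny system `τ² K U = -(1 - K²) K'`, `U' = (1 - K²)² / τ⁴`
with `0 < K < 1` on `(0, ∞)` yields a twice differentiable `f` satisfying
`f'' - (3 + f'/(f(1-f))) f' + 2 f (1-f) = 0` on `ℝ`; moreover the boundary
conditions `K(0⁺) = 1`, `K(∞) = 0` become `f(-∞) = 1`, `f(+∞) = 0`. -/
theorem second_order_governing_equation
    (K U : ℝ → ℝ)
    (hdiff : ∀ τ ∈ Set.Ioi (0 : ℝ),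
      DifferentiableAt ℝ K τ ∧ DifferentiableAt ℝ (deriv K) τ ∧ DifferentiableAt ℝ U τ)
    (heq1 : ∀ τ ∈ Set.Ioi (0 : ℝ), τ ^ 2 * K τ * U τ = -(1 - (K τ) ^ 2) * deriv K τ)
    (heq2 : ∀ τ ∈ Set.Ioi (0 : ℝ), deriv U τ = (1 - (K τ) ^ 2) ^ 2 / τ ^ 4)
    (hbd : ∀ τ ∈ Set.Ioi (0 : ℝ), 0 < K τ ∧ K τ < 1)
    (f : ℝ → ℝ) (hf : ∀ s : ℝ, f s = (K (Real.exp s)) ^ 2) :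
    (∀ s : ℝ, DifferentiableAt ℝ f s ∧ DifferentiableAt ℝ (deriv f) s) ∧
    (∀ s : ℝ, deriv (deriv f) s
        - (3 + deriv f s / (f s * (1 - f s))) * deriv f s
        + 2 * f s * (1 - f s) = 0) ∧
    (Tendsto K (nhdsWithin 0 (Set.Ioi 0)) (nhds 1) → Tendsto f atBot (nhds 1)) ∧
    (Tendsto K atTop (nhds 0) → Tendsto f atTop (nhds 0)) := by
  have hfe : f = fun s => (K (Real.exp s)) ^ 2 := funext hf
  subst hfe
  -- first derivative
  have key : ∀ s : ℝ, HasDerivAt (fun s => (K (Real.exp s)) ^ 2)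
      (2 * K (Real.exp s) * (deriv K (Real.exp s) * Real.exp s)) s := by
    intro s
    have hτ : Real.exp s ∈ Set.Ioi (0:ℝ) := Real.exp_pos s
    have hK := (hdiff _ hτ).1.hasDerivAt
    have h1 : HasDerivAt (fun s => K (Real.exp s)) (deriv K (Real.exp s) * Real.exp s) s :=
      hK.comp s (Real.hasDerivAt_exp s)
    have h2 := h1.fun_pow 2
    refine h2.congr_deriv ?_
    ring
  have hd1 : deriv (fun s => (K (Real.exp s)) ^ 2)
      = fun s => 2 * K (Real.exp s) * (deriv K (Real.exp s) * Real.exp s) :=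
    funext fun s => (key s).deriv
  -- second derivative
  have key2 : ∀ s : ℝ, HasDerivAt
      (fun s => 2 * K (Real.exp s) * (deriv K (Real.exp s) * Real.exp s))
      (2 * (deriv K (Real.exp s) * Real.exp s) * (deriv K (Real.exp s) * Real.exp s)
        + 2 * K (Real.exp s) *
          (deriv (deriv K) (Real.exp s) * Real.exp s * Real.exp s
            + deriv K (Real.exp s) * Real.exp s)) s := by
    intro s
    have hτ : Real.exp s ∈ Set.Ioi (0:ℝ) := Real.exp_pos s
    have hE := Real.hasDerivAt_exp s
    have hKe : HasDerivAt (fun s => K (Real.exp s)) (deriv K (Real.exp s) * Real.exp s) s :=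
      (hdiff _ hτ).1.hasDerivAt.comp s hE
    have hK'e : HasDerivAt (fun s => deriv K (Real.exp s))
        (deriv (deriv K) (Real.exp s) * Real.exp s) s :=
      (hdiff _ hτ).2.1.hasDerivAt.comp s hE
    have t1 := (hKe.const_mul 2).fun_mul (hK'e.fun_mul hE)
    convert t1 using 1
  have hd2 : ∀ s : ℝ, deriv (deriv (fun s => (K (Real.exp s)) ^ 2)) s
      = 2 * (deriv K (Real.exp s) * Real.exp s) * (deriv K (Real.exp s) * Real.exp s)
        + 2 * K (Real.exp s) *
          (deriv (deriv K) (Real.exp s) * Real.exp s * Real.exp s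
            + deriv K (Real.exp s) * Real.exp s) := by
    intro s
    rw [hd1]
    exact (key2 s).deriv
  refine ⟨?_, ?_, ?_, ?_⟩
  · intro s
    refine ⟨(key s).differentiableAt, ?_⟩
    rw [hd1]
    exact (key2 s).differentiableAt
  · intro s
    set τ := Real.exp s with hτdef
    have hτ : τ ∈ Set.Ioi (0:ℝ) := Real.exp_pos s
    have hτ0 : (0:ℝ) < τ := hτ
    set a := K τ with hadef
    set b := deriv K τ with hbdef
    set c := deriv (deriv K) τ with hcdef
    set u := U τ with hudef
    have ha0 : 0 < a := (hbd τ hτ).1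
    have ha1 : a < 1 := (hbd τ hτ).2
    have h1a : (1:ℝ) - a ^ 2 ≠ 0 := by nlinarith
    have hane : a ≠ 0 := ne_of_gt ha0
    have hτne : τ ≠ 0 := ne_of_gt hτ0
    -- equation E1
    have E1 : τ ^ 2 * a * u = -(1 - a ^ 2) * b := heq1 τ hτ
    have hu' : deriv U τ = (1 - a ^ 2) ^ 2 / τ ^ 4 := heq2 τ hτ
    -- differentiate E1 : define φ
    have hφ0 : deriv (fun t => t ^ 2 * K t * U t + (1 - (K t) ^ 2) * deriv K t) τ = 0 := by
      have hev : (fun t => t ^ 2 * K t * U t + (1 - (K t) ^ 2) * deriv K t)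
          =ᶠ[nhds τ] (fun _ => (0:ℝ)) := by
        filter_upwards [Ioi_mem_nhds hτ0] with t ht
        have := heq1 t ht
        linarith
      rw [hev.deriv_eq]
      simp
    have hφd : HasDerivAt (fun t => t ^ 2 * K t * U t + (1 - (K t) ^ 2) * deriv K t)
        ((2 * τ ^ 1 * K τ + τ ^ 2 * b) * u + τ ^ 2 * K τ * deriv U τ
          + (-(2 * K τ ^ 1 * b) * b + (1 - (K τ) ^ 2) * c)) τ := by
      have hKτ := (hdiff _ hτ).1.hasDerivAt
      have hK'τ := (hdiff _ hτ).2.1.hasDerivAt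
      have hUτ := (hdiff _ hτ).2.2.hasDerivAt
      have ht2 := hasDerivAt_pow 2 τ
      exact ((ht2.mul hKτ).mul hUτ).add (((hKτ.pow 2).const_sub 1).mul hK'τ)
    have E3 : (2 * τ * a + τ ^ 2 * b) * u + τ ^ 2 * a * ((1 - a ^ 2) ^ 2 / τ ^ 4)
        + (-(2 * a * b) * b + (1 - a ^ 2) * c) = 0 := by
      have h := hφd.deriv
      rw [hφ0, hu'] at h
      linear_combination -h
    -- solve for u and c
    have hu : u = -(1 - a ^ 2) * b / (τ ^ 2 * a) := by
      field_simp at E1 ⊢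
      linarith [E1]
    have hc : c = (2 * a * b * b - (2 * τ * a + τ ^ 2 * b) * u
        - τ ^ 2 * a * ((1 - a ^ 2) ^ 2 / τ ^ 4)) / (1 - a ^ 2) := by
      rw [eq_div_iff h1a]
      linarith [E3]
    rw [hu] at hc
    -- rewrite goal
    rw [hd2 s, hd1]
    simp only [← hτdef, ← hadef, ← hbdef, ← hcdef]
    rw [hc]
    field_simp
    ring
  · intro h
    have hexp : Tendsto Real.exp atBot (nhdsWithin 0 (Set.Ioi 0)) :=
      tendsto_nhdsWithin_iff.mpr ⟨Real.tendsto_exp_atBot, Eventually.of_forall fun s => Real.exp_pos s⟩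
    have := (h.comp hexp).pow 2
    simpa using this
  · intro h
    have := (h.comp Real.tendsto_exp_atTop).pow 2
    simpa using this
end

section
/- Let Q : (-∞, -1) → (-∞, 0) be the inverse of the strictly increasing bijection G ↦ G - e^G from (-∞, 0) onto (-∞, -1), and define R : ℝ → ℝ by R(V) = -2·(1 - e^{Q(V)})² for V < -1 and R(V) = 4·(V + 1) for V ≥ -1. Then R is differentiable on all of ℝ with R'(V) > 0 for every V ∈ ℝ; in particular (1 - e^{Q(V)})² → 0 as V → -1⁻, d/dV[(1 - e^{Q(V)})²] = -2·e^{Q(V)} for V < -1, and this derivative tends to -2 as V → -1⁻. -/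
open Real Filter Set

/-- Let `Q` be the inverse of the strictly increasing bijection `G ↦ G - e^G`
from `(-∞, 0)` onto `(-∞, -1)`, and let `R(V) = -2 (1 - e^{Q(V)})²` for `V < -1`
and `R(V) = 4 (V + 1)` for `V ≥ -1`.  Then `R` is differentiable on all of `ℝ`
with `R' > 0` everywhere; in particular `(1 - e^{Q(V)})² → 0` as `V → -1⁻`,
`d/dV (1 - e^{Q(V)})² = -2 e^{Q(V)}` for `V < -1`, and this derivative tends to
`-2` as `V → -1⁻`. -/
theorem modified_nonlinearity_differentiable
    (Q R : ℝ → ℝ)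
    (hQ : ∀ v : ℝ, v < -1 → Q v < 0 ∧ Q v - Real.exp (Q v) = v)
    (hR : ∀ v : ℝ, R v = if v < -1 then -2 * (1 - Real.exp (Q v)) ^ 2 else 4 * (v + 1)) :
    Differentiable ℝ R ∧
    (∀ v : ℝ, 0 < deriv R v) ∧
    Tendsto (fun v => (1 - Real.exp (Q v)) ^ 2) (nhdsWithin (-1) (Set.Iio (-1))) (nhds 0) ∧
    (∀ v : ℝ, v < -1 →
      HasDerivAt (fun w => (1 - Real.exp (Q w)) ^ 2) (-2 * Real.exp (Q v)) v) ∧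
    Tendsto (fun v => -2 * Real.exp (Q v)) (nhdsWithin (-1) (Set.Iio (-1))) (nhds (-2)) := by
  -- the globally extended strictly monotone function
  set F : ℝ → ℝ := fun G => if G ≤ 0 then G - Real.exp G else G - 1 with hF
  have hfmono : ∀ a b : ℝ, a < b → b ≤ 0 → a - Real.exp a < b - Real.exp b := by
    intro a b hab hb
    have h1 : (a - b) + 1 < Real.exp (a - b) := Real.add_one_lt_exp (by linarith)
    have h2 : Real.exp a = Real.exp b * Real.exp (a - b) := by
      rw [← Real.exp_add]; ring_nf
    have h3 : Real.exp b ≤ 1 := Real.exp_le_one_iff.2 hb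
    have h4 : Real.exp (a - b) < 1 := Real.exp_lt_one_iff.2 (by linarith)
    nlinarith [Real.exp_pos b]
  have hFmono : StrictMono F := by
    intro a b hab
    simp only [hF]
    rcases le_or_gt a 0 with ha | ha
    · rcases le_or_gt b 0 with hb | hb
      · rw [if_pos ha, if_pos hb]; exact hfmono a b hab hb
      · rw [if_pos ha, if_neg (not_le.2 hb)]
        have : a - Real.exp a ≤ 0 - Real.exp 0 := by
          rcases eq_or_lt_of_le ha with h | h
          · rw [h]
          · exact le_of_lt (hfmono a 0 h le_rfl)
        simp only [Real.exp_zero] at this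
        linarith
    · rw [if_neg (not_le.2 ha), if_neg (not_le.2 (by linarith))]
      linarith
  have hFcont : Continuous F := by
    apply Continuous.if_le (by continuity) (by continuity) continuous_id continuous_const
    intro x hx
    simp only [id] at hx
    subst hx; simp
  have hFsurj : Function.Surjective F := by
    apply hFcont.surjective
    · apply tendsto_atTop_mono' atTop _ (tendsto_atTop_add_const_right _ (-1) tendsto_id)
      filter_upwards with x
      simp only [hF, id]
      split
      · nlinarith [Real.exp_le_one_iff.2 ‹x ≤ 0›]
      · simp [sub_eq_add_neg]
    · apply tendsto_atBot_mono' atBot _ tendsto_id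
      filter_upwards with x
      simp only [hF, id]
      split
      · nlinarith [Real.exp_pos x]
      · linarith
  set e : ℝ ≃o ℝ := StrictMono.orderIsoOfSurjective F hFmono hFsurj with he
  have heF : ∀ x, e x = F x := fun x => rfl
  have hQe : ∀ v : ℝ, v < -1 → Q v = e.symm v := by
    intro v hv
    obtain ⟨h1, h2⟩ := hQ v hv
    have : e (Q v) = v := by
      rw [heF]; simp only [hF, if_pos (le_of_lt h1)]; exact h2
    exact (e.symm_apply_eq.2 this.symm).symm
  have hsymm0 : e.symm (-1) = 0 := by
    have : e 0 = -1 := by rw [heF]; simp [hF]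
    exact e.symm_apply_eq.2 this.symm
  have hsymmcont : Continuous (e.symm : ℝ → ℝ) := OrderIso.continuous _
  -- Q tends to 0 from the left of -1
  have hQ0 : Tendsto Q (nhdsWithin (-1) (Set.Iio (-1))) (nhds 0) := by
    have h1 : Tendsto (e.symm : ℝ → ℝ) (nhdsWithin (-1) (Set.Iio (-1))) (nhds 0) := by
      rw [← hsymm0]
      exact (hsymmcont.continuousAt.tendsto).mono_left nhdsWithin_le_nhds
    apply h1.congr'
    filter_upwards [self_mem_nhdsWithin] with x hx
    exact (hQe x hx).symm
  -- derivative of Q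
  have hQderiv : ∀ v : ℝ, v < -1 → HasDerivAt Q (1 - Real.exp (Q v))⁻¹ v := by
    intro v hv
    have hmem : Set.Iio (-1 : ℝ) ∈ nhds v := isOpen_Iio.mem_nhds hv
    have hgcont : ContinuousAt Q v := by
      apply ContinuousAt.congr hsymmcont.continuousAt
      filter_upwards [hmem] with x hx
      exact (hQe x hx).symm
    have hfd : HasDerivAt (fun G => G - Real.exp G) (1 - Real.exp (Q v)) (Q v) :=
      (hasDerivAt_id _).sub (Real.hasDerivAt_exp _)
    have hne : (1 : ℝ) - Real.exp (Q v) ≠ 0 := by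
      have := Real.exp_lt_one_iff.2 (hQ v hv).1; linarith
    exact HasDerivAt.of_local_left_inverse hgcont hfd hne
      (by filter_upwards [hmem] with y hy; exact (hQ y hy).2)
  -- derivative of (1 - exp (Q ·))^2
  have hH : ∀ v : ℝ, v < -1 →
      HasDerivAt (fun w => (1 - Real.exp (Q w)) ^ 2) (-2 * Real.exp (Q v)) v := by
    intro v hv
    have hne : (1 : ℝ) - Real.exp (Q v) ≠ 0 := by
      have := Real.exp_lt_one_iff.2 (hQ v hv).1; linarith
    have h1 : HasDerivAt (fun w => 1 - Real.exp (Q w))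
        (-(Real.exp (Q v) * (1 - Real.exp (Q v))⁻¹)) v :=
      (((Real.hasDerivAt_exp (Q v)).comp v (hQderiv v hv))).const_sub 1
    have h2 : HasDerivAt (fun w => (1 - Real.exp (Q w)) ^ 2) _ v := h1.pow 2
    convert h2 using 1
    field_simp
    ring
  -- derivative of R on each side
  have hRlt : ∀ v : ℝ, v < -1 → HasDerivAt R (4 * Real.exp (Q v)) v := by
    intro v hv
    have h1 : HasDerivAt (fun w => -2 * (1 - Real.exp (Q w)) ^ 2)
        (-2 * (-2 * Real.exp (Q v))) v := (hH v hv).const_mul (-2)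
    have h2 : HasDerivAt R (-2 * (-2 * Real.exp (Q v))) v := by
      apply h1.congr_of_eventuallyEq
      filter_upwards [isOpen_Iio.mem_nhds hv] with x (hx : x < -1)
      rw [hR x, if_pos hx]
    convert h2 using 1; ring
  have hRgt : ∀ v : ℝ, -1 < v → HasDerivAt R 4 v := by
    intro v hv
    have h1 : HasDerivAt (fun w : ℝ => 4 * (w + 1)) 4 v := by
      simpa using ((hasDerivAt_id v).add_const 1).const_mul (4 : ℝ)
    apply h1.congr_of_eventuallyEq
    filter_upwards [isOpen_Ioi.mem_nhds hv] with x (hx : -1 < x)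
    rw [hR x, if_neg (not_lt.2 (le_of_lt hx))]
  -- candidate derivative function
  set g : ℝ → ℝ := fun v => if v < -1 then 4 * Real.exp (Q v) else 4 with hg
  have hgne : ∀ y : ℝ, y ≠ -1 → HasDerivAt R (g y) y := by
    intro y hy
    rcases lt_or_gt_of_ne hy with h | h
    · rw [hg]; simp only [if_pos h]; exact hRlt y h
    · rw [hg]; simp only [if_neg (not_lt.2 (le_of_lt h))]; exact hRgt y h
  -- continuity of g at -1
  have hgcont : ContinuousAt g (-1) := by
    have hgval : g (-1) = 4 := by simp [hg]
    rw [ContinuousAt, hgval, ← nhdsLT_sup_nhdsGE (-1 : ℝ), tendsto_sup]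
    constructor
    · have h1 : Tendsto (fun v => 4 * Real.exp (Q v)) (nhdsWithin (-1) (Set.Iio (-1)))
          (nhds 4) := by
        have := (Real.continuous_exp.continuousAt.tendsto.comp hQ0).const_mul (4 : ℝ)
        simpa using this
      apply h1.congr'
      filter_upwards [self_mem_nhdsWithin] with x (hx : x < -1)
      simp [hg, if_pos hx]
    · have h1 : Tendsto (fun _ : ℝ => (4 : ℝ)) (nhdsWithin (-1) (Set.Ici (-1)))
          (nhds 4) := tendsto_const_nhds
      apply h1.congr'
      filter_upwards [self_mem_nhdsWithin] with x (hx : -1 ≤ x)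
      simp [hg, if_neg (not_lt.2 hx)]
  -- continuity of R at -1
  have hH0 : Tendsto (fun v => (1 - Real.exp (Q v)) ^ 2) (nhdsWithin (-1) (Set.Iio (-1)))
      (nhds 0) := by
    have : Tendsto (fun v => (1 - Real.exp (Q v)) ^ 2) (nhdsWithin (-1) (Set.Iio (-1)))
        (nhds ((1 - Real.exp 0) ^ 2)) := by
      apply Tendsto.pow
      exact (tendsto_const_nhds).sub (Real.continuous_exp.continuousAt.tendsto.comp hQ0)
    simpa using this
  have hRcont : ContinuousAt R (-1) := by
    have hRval : R (-1) = 0 := by rw [hR]; norm_num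
    rw [ContinuousAt, hRval, ← nhdsLT_sup_nhdsGE (-1 : ℝ), tendsto_sup]
    constructor
    · have h1 : Tendsto (fun v => -2 * (1 - Real.exp (Q v)) ^ 2)
          (nhdsWithin (-1) (Set.Iio (-1))) (nhds 0) := by
        have := hH0.const_mul (-2 : ℝ)
        simpa using this
      apply h1.congr'
      filter_upwards [self_mem_nhdsWithin] with x (hx : x < -1)
      rw [hR x, if_pos hx]
    · have h1 : Tendsto (fun v : ℝ => 4 * (v + 1)) (nhdsWithin (-1) (Set.Ici (-1)))
          (nhds 0) := by
        have : Tendsto (fun v : ℝ => 4 * (v + 1)) (nhds (-1)) (nhds (4 * (-1 + 1))) := by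
          apply Tendsto.const_mul
          exact tendsto_id.add tendsto_const_nhds
        simpa using this.mono_left nhdsWithin_le_nhds
      apply h1.congr'
      filter_upwards [self_mem_nhdsWithin] with x (hx : -1 ≤ x)
      rw [hR x, if_neg (not_lt.2 hx)]
  have hRm1 : HasDerivAt R 4 (-1) := by
    have := hasDerivAt_of_hasDerivAt_of_ne hgne hRcont hgcont
    simpa [hg] using this
  have hRall : ∀ v : ℝ, HasDerivAt R (g v) v := by
    intro v
    rcases ne_or_eq v (-1) with h | h
    · exact hgne v h
    · subst h; simpa [hg] using hRm1
  refine ⟨fun v => (hRall v).differentiableAt, fun v => ?_, hH0, hH, ?_⟩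
  · rw [(hRall v).deriv, hg]
    show (0:ℝ) < if v < -1 then 4 * Real.exp (Q v) else 4
    split
    · positivity
    · norm_num
  · have := (Real.continuous_exp.continuousAt.tendsto.comp hQ0).const_mul (-2 : ℝ)
    simpa using this
end

section
/- Fix m < -1 and for each n ∈ ℝ let V(·; n) : [0, ∞) → ℝ be the unique solution of the initial value problem V'' + 3V' = R(V), V(0) = m, V'(0) = n. Define β⁻ = {n : there exists t > 0 with V'(t; n) < 0}, β⁰ = {n : V'(t; n) > 0 and V(t; n) ≤ -1 for all t > 0}, and β⁺ = {n : V'(t; n) > 0 for all t ≥ 0 and V(t; n) > -1 for some t > 0}. Then ℝ is the disjoint union of β⁻, β⁰ and β⁺. -/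
open Real Filter Set

lemma aux_key_ineq {x : ℝ} (hx : x ≤ 0) : (Real.exp x - 1)^2 ≤ 2*(Real.exp x - 1 - x) := by
  have hder : ∀ y : ℝ, HasDerivAt (fun y => 2*Real.exp y - 2*y - (Real.exp y - 1)^2)
      (-2*(Real.exp y - 1)^2) y := by
    intro y
    have h := Real.hasDerivAt_exp y
    have h2 : HasDerivAt (fun y => 2*Real.exp y - 2*y - (Real.exp y - 1)^2)
        (2*Real.exp y - 2*1 - 2*(Real.exp y - 1)^1 * Real.exp y) y := by
      exact ((h.const_mul 2).sub ((hasDerivAt_id y).const_mul 2)).sub ((h.sub_const 1).pow 2)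
    convert h2 using 1
    ring
  have anti : Antitone (fun y => 2*Real.exp y - 2*y - (Real.exp y - 1)^2) := by
    apply antitone_of_deriv_nonpos
    · exact fun y => (hder y).differentiableAt
    · intro y; rw [(hder y).deriv]; nlinarith [sq_nonneg (Real.exp y - 1)]
  have := anti hx
  simp only [Real.exp_zero] at this
  nlinarith [this]

/-- For fixed `m < -1`, let `V(·; n)` solve `V'' + 3V' = R(V)`, `V(0) = m`,
`V'(0) = n` on `[0, ∞)`, where `R` is built from the inverse `Q` of
`G ↦ G - e^G : (-∞,0) → (-∞,-1)`.  With the shooting sets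
`β⁻ = {n : ∃ t > 0, V'(t;n) < 0}`,
`β⁰ = {n : ∀ t > 0, V'(t;n) > 0 ∧ V(t;n) ≤ -1}`,
`β⁺ = {n : (∀ t ≥ 0, V'(t;n) > 0) ∧ ∃ t > 0, V(t;n) > -1}`,
the real line is the disjoint union `ℝ = β⁻ ∪ β⁰ ∪ β⁺`. -/
theorem shooting_sets_disjoint_union
    (Q R : ℝ → ℝ)
    (hQ : ∀ v : ℝ, v < -1 → Q v < 0 ∧ Q v - Real.exp (Q v) = v)
    (hR : ∀ v : ℝ, R v = if v < -1 then -2 * (1 - Real.exp (Q v)) ^ 2 else 4 * (v + 1))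
    (m : ℝ) (hm : m < -1)
    (V : ℝ → ℝ → ℝ)
    (hdiff : ∀ n : ℝ, ∀ t : ℝ, 0 ≤ t →
      DifferentiableAt ℝ (V n) t ∧ DifferentiableAt ℝ (deriv (V n)) t)
    (hode : ∀ n : ℝ, ∀ t : ℝ, 0 ≤ t →
      deriv (deriv (V n)) t + 3 * deriv (V n) t = R (V n t))
    (hic : ∀ n : ℝ, V n 0 = m ∧ deriv (V n) 0 = n)
    (Bm B0 Bp : Set ℝ)
    (hBm : Bm = {n : ℝ | ∃ t > 0, deriv (V n) t < 0})
    (hB0 : B0 = {n : ℝ | ∀ t > 0, 0 < deriv (V n) t ∧ V n t ≤ -1})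
    (hBp : Bp = {n : ℝ | (∀ t : ℝ, 0 ≤ t → 0 < deriv (V n) t) ∧ ∃ t > 0, -1 < V n t}) :
    Bm ∪ B0 ∪ Bp = Set.univ ∧
    Disjoint Bm B0 ∧ Disjoint Bm Bp ∧ Disjoint B0 Bp := by
  subst hBm hB0 hBp
  -- R is bounded below by its linearization 4(v+1)
  have hRge : ∀ v : ℝ, 4*(v+1) ≤ R v := by
    intro v
    rw [hR v]
    split_ifs with hv
    · obtain ⟨hq, he⟩ := hQ v hv
      have hk := aux_key_ineq hq.le
      nlinarith [hk]
    · linarith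
  -- R is negative below -1
  have hRneg : ∀ v : ℝ, v < -1 → R v < 0 := by
    intro v hv
    rw [hR v, if_pos hv]
    obtain ⟨hq, -⟩ := hQ v hv
    have h1 : Real.exp (Q v) < 1 := by
      calc Real.exp (Q v) < Real.exp 0 := Real.exp_lt_exp.2 hq
      _ = 1 := Real.exp_zero
    nlinarith
  -- main lemma: if V' ≥ 0 on (0,∞) then V' > 0 on [0,∞)
  have main : ∀ n : ℝ, (∀ t, 0 < t → 0 ≤ deriv (V n) t) → ∀ t, 0 ≤ t → 0 < deriv (V n) t := by
    intro n hge
    obtain ⟨hV0, hn⟩ := hic n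
    have hn0 : 0 ≤ n := by
      have hc : Tendsto (deriv (V n)) (nhdsWithin 0 (Set.Ioi 0)) (nhds n) := by
        have h := (hdiff n 0 le_rfl).2.continuousAt
        rw [ContinuousAt, hn] at h
        exact h.mono_left nhdsWithin_le_nhds
      exact ge_of_tendsto hc (eventually_nhdsWithin_of_forall fun t ht => hge t ht)
    -- positivity of z = V' - V - 1
    have hzpos : ∀ t, 0 ≤ t → 0 < deriv (V n) t - V n t - 1 := by
      have hFd : ∀ t, 0 ≤ t →
          HasDerivAt (fun s => Real.exp (4*s) * (deriv (V n) s - V n s - 1))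
            (Real.exp (4*t) * (R (V n t) - 4*(V n t + 1))) t := by
        intro t ht
        have h1 : HasDerivAt (V n) (deriv (V n) t) t := (hdiff n t ht).1.hasDerivAt
        have h2 : HasDerivAt (deriv (V n)) (deriv (deriv (V n)) t) t := (hdiff n t ht).2.hasDerivAt
        have he : HasDerivAt (fun s : ℝ => Real.exp (4*s)) (Real.exp (4*t) * 4) t := by
          have hc := (Real.hasDerivAt_exp (4*t)).comp t ((hasDerivAt_id t).const_mul 4)
          simp only [mul_one] at hc
          exact hc
        have hmul := he.mul ((h2.sub h1).sub_const 1)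
        refine hmul.congr_deriv ?_
        have hodet := hode n t ht
        simp only [Pi.sub_apply]
        linear_combination (Real.exp (4*t)) * hodet
      have hmono : MonotoneOn (fun s => Real.exp (4*s) * (deriv (V n) s - V n s - 1))
          (Set.Ici 0) := by
        apply monotoneOn_of_deriv_nonneg (convex_Ici 0)
        · exact fun t ht => (hFd t ht).continuousAt.continuousWithinAt
        · intro t ht
          rw [interior_Ici] at ht
          exact (hFd t (le_of_lt ht)).differentiableAt.differentiableWithinAt
        · intro t ht
          rw [interior_Ici] at ht
          rw [(hFd t ht.le).deriv]
          have h := hRge (V n t)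
          have := Real.exp_pos (4*t)
          nlinarith
      intro t ht
      have h0le := hmono (Set.self_mem_Ici) ht ht
      simp only [mul_zero, Real.exp_zero, one_mul, hV0, hn] at h0le
      have hFt : 0 < Real.exp (4*t) * (deriv (V n) t - V n t - 1) := by
        calc (0:ℝ) < n - m - 1 := by linarith
        _ ≤ _ := h0le
      nlinarith [Real.exp_pos (4*t), hFt]
    -- now the main claim
    intro t0 ht0
    have hge0 : 0 ≤ deriv (V n) t0 := by
      rcases eq_or_lt_of_le ht0 with h | h
      · rw [← h, hn]; exact hn0
      · exact hge t0 h
    rcases hge0.lt_or_eq with h | h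
    · exact h
    exfalso
    have hV'0 : deriv (V n) t0 = 0 := h.symm
    have hVlt : V n t0 < -1 := by
      by_contra hcon
      push_neg at hcon
      have := hzpos t0 ht0
      rw [hV'0] at this; linarith
    have hcV : ContinuousAt (V n) t0 := (hdiff n t0 ht0).1.continuousAt
    obtain ⟨δ, hδ, hball⟩ := Metric.continuousAt_iff.1 hcV (-1 - V n t0) (by linarith)
    have hlt : ∀ s ∈ Set.Icc t0 (t0 + δ/2), V n s < -1 := by
      intro s hs
      have hd : dist s t0 < δ := by
        rw [Real.dist_eq, abs_lt]
        constructor <;> [linarith [hs.1]; linarith [hs.2]]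
      have := hball hd
      rw [Real.dist_eq, abs_lt] at this
      linarith [this.2]
    have hGd : ∀ s ∈ Set.Icc t0 (t0 + δ/2),
        HasDerivAt (fun s => Real.exp (3*s) * deriv (V n) s)
          (Real.exp (3*s) * R (V n s)) s := by
      intro s hs
      have hs0 : (0:ℝ) ≤ s := le_trans ht0 hs.1
      have h2 : HasDerivAt (deriv (V n)) (deriv (deriv (V n)) s) s := (hdiff n s hs0).2.hasDerivAt
      have he : HasDerivAt (fun u : ℝ => Real.exp (3*u)) (Real.exp (3*s) * 3) s := by
        have hc := (Real.hasDerivAt_exp (3*s)).comp s ((hasDerivAt_id s).const_mul 3)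
        simp only [mul_one] at hc
        exact hc
      have hmul := he.mul h2
      refine hmul.congr_deriv ?_
      have hodet := hode n s hs0
      linear_combination (Real.exp (3*s)) * hodet
    have hanti : StrictAntiOn (fun s => Real.exp (3*s) * deriv (V n) s)
        (Set.Icc t0 (t0 + δ/2)) := by
      apply strictAntiOn_of_deriv_neg (convex_Icc _ _)
      · exact fun s hs => (hGd s hs).continuousAt.continuousWithinAt
      · intro s hs
        rw [interior_Icc] at hs
        rw [(hGd s (Set.Ioo_subset_Icc_self hs)).deriv]
        have hneg := hRneg (V n s) (hlt s (Set.Ioo_subset_Icc_self hs))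
        have := Real.exp_pos (3*s)
        nlinarith
    have ht01 : t0 < t0 + δ/2 := by linarith
    have hlt2 := hanti (Set.left_mem_Icc.2 ht01.le) (Set.right_mem_Icc.2 ht01.le) ht01
    simp only [hV'0, mul_zero] at hlt2
    have hge2 : 0 ≤ deriv (V n) (t0 + δ/2) := hge _ (lt_of_le_of_lt ht0 ht01)
    nlinarith [Real.exp_pos (3*(t0 + δ/2)), hlt2, hge2]
  refine ⟨?_, ?_, ?_, ?_⟩
  · ext n
    simp only [Set.mem_univ, iff_true, Set.mem_union, Set.mem_setOf_eq]
    by_cases hbm : ∃ t > 0, deriv (V n) t < 0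
    · exact Or.inl (Or.inl hbm)
    · push_neg at hbm
      have hpos := main n hbm
      by_cases hb0 : ∀ t > 0, V n t ≤ -1
      · exact Or.inl (Or.inr fun t ht => ⟨hpos t ht.le, hb0 t ht⟩)
      · push_neg at hb0
        obtain ⟨t, ht, hv⟩ := hb0
        exact Or.inr ⟨fun s hs => hpos s hs, t, ht, hv⟩
  · rw [Set.disjoint_left]
    rintro n ⟨t, ht, hlt⟩ h0
    have := (h0 t ht).1
    linarith
  · rw [Set.disjoint_left]
    rintro n ⟨t, ht, hlt⟩ hp
    have := hp.1 t ht.le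
    linarith
  · rw [Set.disjoint_left]
    rintro n h0 hp
    obtain ⟨t, ht, hv⟩ := hp.2
    have := (h0 t ht).2
    linarith
end

section
/- Fix m < -1 and for each n ∈ ℝ let V(·; n) : [0, ∞) → ℝ be the unique solution of V'' + 3V' = R(V), V(0) = m, V'(0) = n, and let β⁻ = {n : there exists t > 0 with V'(t; n) < 0}. Then β⁻ is open and contains the interval (-∞, 0); in particular β⁻ is nonempty. -/
open Real Filter Set Topology NNReal

private lemma keyA {x : ℝ} (hx : 0 < x) (hx1 : x ≤ 1) :
    (1 - x) ^ 2 ≤ 2 * (x - 1 - Real.log x) := by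
  have hd : ∀ t : ℝ, 0 < t →
      HasDerivAt (fun s : ℝ => 2 * (s - 1 - Real.log s) - (1 - s) ^ 2)
        (2 * (1 - t⁻¹) - 2 * (1 - t) ^ 1 * (-1)) t := by
    intro t ht
    have h1 : HasDerivAt (fun s : ℝ => s - 1 - Real.log s) (1 - t⁻¹) t :=
      ((hasDerivAt_id t).sub_const 1).sub (Real.hasDerivAt_log (ne_of_gt ht))
    have h2 : HasDerivAt (fun s : ℝ => (1 - s) ^ 2) (2 * (1 - t) ^ 1 * (-1)) t := by
      have h3 : HasDerivAt (fun s : ℝ => 1 - s) (-1 : ℝ) t := by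
        exact (hasDerivAt_id' t).const_sub (1:ℝ)
      exact h3.pow 2
    exact (h1.const_mul 2).sub h2
  have hmono : AntitoneOn (fun s : ℝ => 2 * (s - 1 - Real.log s) - (1 - s) ^ 2)
      (Set.Icc x 1) := by
    apply antitoneOn_of_deriv_nonpos (convex_Icc x 1)
    · intro t ht
      exact (hd t (lt_of_lt_of_le hx ht.1)).continuousAt.continuousWithinAt
    · rw [interior_Icc]
      intro t ht
      exact (hd t (lt_trans hx ht.1)).differentiableAt.differentiableWithinAt
    · rw [interior_Icc]
      intro t ht
      have ht0 : (0:ℝ) < t := lt_trans hx ht.1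
      rw [(hd t ht0).deriv]
      have h4 : t * t⁻¹ = 1 := mul_inv_cancel₀ (ne_of_gt ht0)
      nlinarith [sq_nonneg (t - 1), ht0]
  have h0 := hmono (Set.left_mem_Icc.2 hx1) (Set.right_mem_Icc.2 hx1) hx1
  simp only [Real.log_one] at h0
  nlinarith [h0]

private lemma keyB {x y : ℝ} (hy : 0 < y) (hyx : y ≤ x) (hx1 : x ≤ 1) :
    (x - y) * (4 - x - y) ≤ 2 * (Real.log x - Real.log y) := by
  have hd : ∀ t : ℝ, 0 < t →
      HasDerivAt (fun s : ℝ => 2 * Real.log s - (s - y) * (4 - s - y))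
        (2 * t⁻¹ - (1 * (4 - t - y) + (t - y) * (-1))) t := by
    intro t ht
    have h1 : HasDerivAt (fun s : ℝ => s - y) (1:ℝ) t := by
      simpa using (hasDerivAt_id t).sub_const y
    have h2 : HasDerivAt (fun s : ℝ => 4 - s - y) (-1 : ℝ) t := by
      have h3 : HasDerivAt (fun s : ℝ => 4 - s) (-1 : ℝ) t := by
        exact (hasDerivAt_id' t).const_sub (4:ℝ)
      simpa using h3.sub_const y
    exact ((Real.hasDerivAt_log (ne_of_gt ht)).const_mul 2).sub (h1.mul h2)
  have hy1 : y ≤ 1 := le_trans hyx hx1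
  have hmono : MonotoneOn (fun s : ℝ => 2 * Real.log s - (s - y) * (4 - s - y))
      (Set.Icc y 1) := by
    apply monotoneOn_of_deriv_nonneg (convex_Icc y 1)
    · intro t ht
      exact (hd t (lt_of_lt_of_le hy ht.1)).continuousAt.continuousWithinAt
    · rw [interior_Icc]
      intro t ht
      exact (hd t (lt_trans hy ht.1)).differentiableAt.differentiableWithinAt
    · rw [interior_Icc]
      intro t ht
      have ht0 : (0:ℝ) < t := lt_trans hy ht.1
      rw [(hd t ht0).deriv]
      have h4 : t * t⁻¹ = 1 := mul_inv_cancel₀ (ne_of_gt ht0)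
      nlinarith [sq_nonneg (t - 1), ht0]
  have h0 := hmono (Set.left_mem_Icc.2 hy1) ⟨hyx, hx1⟩ hyx
  simp only at h0
  nlinarith [h0]

private lemma Rlip (Q R : ℝ → ℝ)
    (hQ : ∀ v : ℝ, v < -1 → Q v < 0 ∧ Q v - Real.exp (Q v) = v)
    (hR : ∀ v : ℝ, R v = if v < -1 then -2 * (1 - Real.exp (Q v)) ^ 2 else 4 * (v + 1)) :
    ∀ a b : ℝ, |R a - R b| ≤ 4 * |a - b| := by
  have H : ∀ a b : ℝ, b ≤ a → |R a - R b| ≤ 4 * (a - b) := by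
    intro a b hba
    by_cases ha : a < -1
    · -- both < -1
      have hb : b < -1 := lt_of_le_of_lt hba ha
      obtain ⟨hQa, hga⟩ := hQ a ha
      obtain ⟨hQb, hgb⟩ := hQ b hb
      set x := Real.exp (Q a) with hxdef
      set y := Real.exp (Q b) with hydef
      have hx0 : 0 < x := Real.exp_pos _
      have hy0 : 0 < y := Real.exp_pos _
      have hx1 : x < 1 := Real.exp_lt_one_iff.2 hQa
      have hy1 : y < 1 := Real.exp_lt_one_iff.2 hQb
      -- monotonicity of Q: Q b ≤ Q a
      have hQba : Q b ≤ Q a := by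
        by_contra h
        push_neg at h
        have hu : Q a - Q b < 0 := by linarith
        have he1 : Real.exp (Q a - Q b) < 1 := Real.exp_lt_one_iff.2 hu
        have he2 : Q a - Q b + 1 ≤ Real.exp (Q a - Q b) := Real.add_one_le_exp _
        have hxy : x = y * Real.exp (Q a - Q b) := by
          rw [hxdef, hydef, ← Real.exp_add]
          ring_nf
        -- b - a > 0 contradicts b ≤ a
        have hyxlt : y - x < Q b - Q a := by
          rw [hxy]
          nlinarith [hy0, hy1, he1, he2]
        have hba' : 0 < b - a := by
          have h1 : a = Q a - x := by linarith [hga]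
          have h2 : b = Q b - y := by linarith [hgb]
          rw [h1, h2]
          linarith
        linarith
      have hyx : y ≤ x := Real.exp_le_exp.2 hQba
      have hla : Real.log x = Q a := Real.log_exp _
      have hlb : Real.log y = Q b := Real.log_exp _
      have hkey := keyB hy0 hyx (le_of_lt hx1)
      rw [hla, hlb] at hkey
      have hRa : R a = -2 * (1 - x) ^ 2 := by rw [hR a, if_pos ha]
      have hRb : R b = -2 * (1 - y) ^ 2 := by rw [hR b, if_pos hb]
      have habs : R a - R b = 2 * (x - y) * (2 - x - y) := by
        rw [hRa, hRb]; ring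
      have hnonneg : (0:ℝ) ≤ 2 * (x - y) * (2 - x - y) := by nlinarith
      rw [habs, abs_of_nonneg hnonneg]
      have hab : a - b = (Q a - Q b) - (x - y) := by
        have := hga; have := hgb; linarith
      nlinarith [hkey]
    · push_neg at ha
      by_cases hb : b < -1
      · -- a ≥ -1, b < -1
        obtain ⟨hQb, hgb⟩ := hQ b hb
        set y := Real.exp (Q b) with hydef
        have hy0 : 0 < y := Real.exp_pos _
        have hy1 : y < 1 := Real.exp_lt_one_iff.2 hQb
        have hlb : Real.log y = Q b := Real.log_exp _
        have hkey := keyA hy0 (le_of_lt hy1)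
        rw [hlb] at hkey
        have hRa : R a = 4 * (a + 1) := by rw [hR a, if_neg (not_lt.2 ha)]
        have hRb : R b = -2 * (1 - y) ^ 2 := by rw [hR b, if_pos hb]
        have hnonneg : (0:ℝ) ≤ R a - R b := by
          rw [hRa, hRb]; nlinarith
        rw [abs_of_nonneg hnonneg, hRa, hRb]
        have hab : -1 - b = y - 1 - Q b := by
          have := hgb; linarith
        nlinarith [hkey]
      · -- both ≥ -1
        push_neg at hb
        have hRa : R a = 4 * (a + 1) := by rw [hR a, if_neg (not_lt.2 ha)]
        have hRb : R b = 4 * (b + 1) := by rw [hR b, if_neg (not_lt.2 hb)]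
        rw [hRa, hRb,
          show 4 * (a + 1) - 4 * (b + 1) = 4 * (a - b) by ring,
          abs_of_nonneg (by linarith : (0:ℝ) ≤ 4 * (a - b))]
  intro a b
  rcases le_total b a with h | h
  · rw [abs_of_nonneg (by linarith : (0:ℝ) ≤ a - b)]
    exact H a b h
  · rw [abs_sub_comm, abs_sub_comm a b, abs_of_nonneg (by linarith : (0:ℝ) ≤ b - a)]
    exact H b a h

/-- For fixed `m < -1` and the shooting family `V(·; n)` solving
`V'' + 3V' = R(V)`, `V(0) = m`, `V'(0) = n`, the set
`β⁻ = {n : ∃ t > 0, V'(t;n) < 0}` is open and contains `(-∞, 0)`;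
in particular `β⁻` is nonempty. -/
theorem shooting_set_minus_open_nonempty
    (Q R : ℝ → ℝ)
    (hQ : ∀ v : ℝ, v < -1 → Q v < 0 ∧ Q v - Real.exp (Q v) = v)
    (hR : ∀ v : ℝ, R v = if v < -1 then -2 * (1 - Real.exp (Q v)) ^ 2 else 4 * (v + 1))
    (m : ℝ) (hm : m < -1)
    (V : ℝ → ℝ → ℝ)
    (hdiff : ∀ n : ℝ, ∀ t : ℝ, 0 ≤ t →
      DifferentiableAt ℝ (V n) t ∧ DifferentiableAt ℝ (deriv (V n)) t)
    (hode : ∀ n : ℝ, ∀ t : ℝ, 0 ≤ t →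
      deriv (deriv (V n)) t + 3 * deriv (V n) t = R (V n t))
    (hic : ∀ n : ℝ, V n 0 = m ∧ deriv (V n) 0 = n)
    (Bm : Set ℝ)
    (hBm : Bm = {n : ℝ | ∃ t > 0, deriv (V n) t < 0}) :
    IsOpen Bm ∧ Set.Iio (0 : ℝ) ⊆ Bm ∧ Bm.Nonempty := by
  have hlip := Rlip Q R hQ hR
  -- the vector field of the first-order system
  set F : ℝ → ℝ × ℝ → ℝ × ℝ := fun _ p => (p.2, R p.1 - 3 * p.2) with hF
  have hFlip : ∀ t : ℝ, LipschitzWith 7 (F t) := by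
    intro t
    apply LipschitzWith.of_dist_le_mul
    intro p q
    have hc : ((7:ℝ≥0):ℝ) = 7 := by norm_num
    rw [Prod.dist_eq, hc]
    have h1 : dist p.1 q.1 ≤ dist p q := by rw [Prod.dist_eq]; exact le_max_left _ _
    have h2 : dist p.2 q.2 ≤ dist p q := by rw [Prod.dist_eq]; exact le_max_right _ _
    have hd0 : (0:ℝ) ≤ dist p q := dist_nonneg
    apply max_le
    · simp only [hF]
      linarith
    · simp only [hF]
      rw [Real.dist_eq]
      have h3 : |R p.1 - 3 * p.2 - (R q.1 - 3 * q.2)| ≤ |R p.1 - R q.1| + 3 * |p.2 - q.2| := by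
        calc |R p.1 - 3 * p.2 - (R q.1 - 3 * q.2)|
            = |(R p.1 - R q.1) + (-(3 * (p.2 - q.2)))| := by ring_nf
          _ ≤ |R p.1 - R q.1| + |(-(3 * (p.2 - q.2)))| := abs_add_le _ _
          _ = |R p.1 - R q.1| + 3 * |p.2 - q.2| := by
              rw [abs_neg, abs_mul]; norm_num
      have h4 := hlip p.1 q.1
      rw [Real.dist_eq] at h1 h2
      linarith
  -- trajectories in phase space
  set f : ℝ → ℝ → ℝ × ℝ := fun n t => (V n t, deriv (V n) t) with hfdef
  have hf' : ∀ n : ℝ, ∀ t : ℝ, 0 ≤ t → HasDerivAt (f n) (F t (f n t)) t := by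
    intro n t ht
    have h1 : HasDerivAt (V n) (deriv (V n) t) t := (hdiff n t ht).1.hasDerivAt
    have h2 : HasDerivAt (deriv (V n)) (deriv (deriv (V n)) t) t :=
      (hdiff n t ht).2.hasDerivAt
    have h3 : deriv (deriv (V n)) t = R (V n t) - 3 * deriv (V n) t := by
      have := hode n t ht; linarith
    rw [h3] at h2
    exact h1.prodMk h2
  -- Grönwall: continuous dependence on the initial slope
  have gron : ∀ n n' : ℝ, ∀ T : ℝ, 0 ≤ T →
      dist (f n T) (f n' T) ≤ dist n n' * Real.exp (7 * T) := by
    intro n n' T hT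
    have hcont : ∀ k : ℝ, ContinuousOn (f k) (Set.Icc 0 T) := fun k s hs =>
      (hf' k s hs.1).continuousAt.continuousWithinAt
    have hder : ∀ k : ℝ, ∀ s ∈ Set.Ico (0:ℝ) T,
        HasDerivWithinAt (f k) (F s (f k s)) (Set.Ici s) s :=
      fun k s hs => (hf' k s hs.1).hasDerivWithinAt
    have h0 : dist (f n 0) (f n' 0) ≤ dist n n' := by
      simp only [hfdef, Prod.dist_eq, (hic n).1, (hic n').1, (hic n).2, (hic n').2, dist_self]
      exact max_le dist_nonneg le_rfl
    have := dist_le_of_trajectories_ODE hFlip (hcont n) (hder n) (hcont n') (hder n') h0 T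
      (Set.right_mem_Icc.2 hT)
    simpa using this
  -- The subset claim
  have hsub : Set.Iio (0 : ℝ) ⊆ Bm := by
    intro n hn
    rw [hBm]
    have hcont : ContinuousAt (deriv (V n)) 0 := (hdiff n 0 le_rfl).2.continuousAt
    have h0 : deriv (V n) 0 = n := (hic n).2
    have hlt : ∀ᶠ t in 𝓝 (0:ℝ), deriv (V n) t < 0 := by
      have hmem : Set.Iio (0:ℝ) ∈ 𝓝 (deriv (V n) 0) := by
        rw [h0]; exact Iio_mem_nhds hn
      exact hcont.preimage_mem_nhds hmem
    have hlt' : ∀ᶠ t in 𝓝[>] (0:ℝ), deriv (V n) t < 0 :=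
      eventually_nhdsWithin_of_eventually_nhds hlt
    have hmem' : ∀ᶠ t in 𝓝[>] (0:ℝ), t ∈ Set.Ioi (0:ℝ) := eventually_mem_nhdsWithin
    obtain ⟨t, ht1, ht2⟩ := (hmem'.and hlt').exists
    exact ⟨t, ht1, ht2⟩
  refine ⟨?_, hsub, ⟨-1, hsub (by norm_num)⟩⟩
  -- openness
  rw [hBm, Metric.isOpen_iff]
  intro n hn
  obtain ⟨t₀, ht₀, hneg⟩ := hn
  set c : ℝ := -deriv (V n) t₀ with hc
  have hcpos : 0 < c := by simp only [hc]; linarith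
  refine ⟨c / Real.exp (7 * t₀), div_pos hcpos (Real.exp_pos _), ?_⟩
  intro n' hn'
  refine ⟨t₀, ht₀, ?_⟩
  have hg := gron n' n t₀ (le_of_lt ht₀)
  have hdist : |deriv (V n') t₀ - deriv (V n) t₀| ≤ dist (f n' t₀) (f n t₀) := by
    simp only [hfdef, Prod.dist_eq, Real.dist_eq]
    exact le_max_right _ _
  have hball : dist n' n < c / Real.exp (7 * t₀) := hn'
  have hexp : (0:ℝ) < Real.exp (7 * t₀) := Real.exp_pos _
  have h5 : dist n' n * Real.exp (7 * t₀) < c := (lt_div_iff₀ hexp).1 hball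
  have h6 : |deriv (V n') t₀ - deriv (V n) t₀| < c :=
    lt_of_le_of_lt (le_trans hdist hg) h5
  have h7 := (abs_lt.1 h6).2
  simp only [hc] at h7 ⊢
  linarith
end

section
/- Fix m < -1 and for each n ∈ ℝ let V(·; n) : [0, ∞) → ℝ be the unique solution of V'' + 3V' = R(V), V(0) = m, V'(0) = n, and let β⁺ = {n : V'(t; n) > 0 for all t ≥ 0 and V(t; n) > -1 for some t > 0}. Then β⁺ is open and nonempty; moreover every sufficiently large n > 0 belongs to β⁺. -/
open Real Filter Set

lemma auxf_mono {a b : ℝ} (ha : 0 < a) (hab : a ≤ b) :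
    2 * Real.log a + a ^ 2 - 4 * a ≤ 2 * Real.log b + b ^ 2 - 4 * b := by
  have hmono : MonotoneOn (fun x : ℝ => 2 * Real.log x + x ^ 2 - 4 * x) (Set.Ioi 0) := by
    have hd : ∀ x : ℝ, 0 < x →
        HasDerivAt (fun x : ℝ => 2 * Real.log x + x ^ 2 - 4 * x)
          (2 * x⁻¹ + 2 * x ^ 1 - 4 * 1) x := by
      intro x hx
      exact (((Real.hasDerivAt_log hx.ne').const_mul 2).add (hasDerivAt_pow 2 x)).sub
        ((hasDerivAt_id x).const_mul 4)
    apply monotoneOn_of_deriv_nonneg (convex_Ioi 0)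
    · intro x hx
      exact ((hd x hx).differentiableAt.continuousAt).continuousWithinAt
    · intro x hx
      rw [interior_Ioi] at hx
      exact (hd x hx).differentiableAt.differentiableWithinAt
    · intro x hx
      rw [interior_Ioi] at hx
      rw [(hd x hx).deriv]
      have hx' : (0:ℝ) < x := hx
      have h1 : x⁻¹ * x = 1 := inv_mul_cancel₀ hx'.ne'
      nlinarith [sq_nonneg (x - 1), hx', h1]
  exact hmono (Set.mem_Ioi.mpr ha) (Set.mem_Ioi.mpr (ha.trans_le hab)) hab

lemma mono_qe {q1 q2 : ℝ} (h1 : q1 < q2) (h2 : q2 ≤ 0) :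
    q1 - Real.exp q1 < q2 - Real.exp q2 := by
  have hexp : q1 - q2 + 1 < Real.exp (q1 - q2) := Real.add_one_lt_exp (by linarith)
  have hmul : Real.exp (q1 - q2) * Real.exp q2 = Real.exp q1 := by
    rw [← Real.exp_add]; ring_nf
  have h3 : Real.exp q2 ≤ 1 := by
    rw [← Real.exp_zero]; exact Real.exp_le_exp.mpr h2
  nlinarith [Real.exp_pos q2, mul_lt_mul_of_pos_right hexp (Real.exp_pos q2)]

lemma R_lipschitz (Q R : ℝ → ℝ)
    (hQ : ∀ v : ℝ, v < -1 → Q v < 0 ∧ Q v - Real.exp (Q v) = v)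
    (hR : ∀ v : ℝ, R v = if v < -1 then -2 * (1 - Real.exp (Q v)) ^ 2 else 4 * (v + 1)) :
    ∀ v w : ℝ, |R v - R w| ≤ 4 * |v - w| := by
  have key : ∀ v w : ℝ, v ≤ w → |R v - R w| ≤ 4 * (w - v) := by
    intro v w hvw
    by_cases hw : w < -1
    · have hv : v < -1 := lt_of_le_of_lt hvw hw
      obtain ⟨hqv, hv_eq⟩ := hQ v hv
      obtain ⟨hqw, hw_eq⟩ := hQ w hw
      set a := Real.exp (Q v) with hadef
      set b := Real.exp (Q w) with hbdef
      have ha0 : 0 < a := Real.exp_pos _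
      have hb0 : 0 < b := Real.exp_pos _
      have hb1 : b < 1 := by rw [hbdef, ← Real.exp_zero]; exact Real.exp_lt_exp.mpr hqw
      have ha1 : a < 1 := by rw [hadef, ← Real.exp_zero]; exact Real.exp_lt_exp.mpr hqv
      have hab : a ≤ b := by
        by_contra hc
        push_neg at hc
        have hq : Q w < Q v := Real.exp_lt_exp.mp hc
        have := mono_qe hq hqv.le
        rw [hv_eq, hw_eq] at this
        linarith
      have hla : Real.log a = Q v := Real.log_exp _
      have hlb : Real.log b = Q w := Real.log_exp _
      have hf := auxf_mono ha0 hab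
      rw [hla, hlb] at hf
      rw [hR v, hR w, if_pos hv, if_pos hw, abs_le]
      constructor <;> nlinarith [hv_eq, hw_eq, sq_nonneg (b - a)]
    · by_cases hv : v < -1
      · obtain ⟨hqv, hv_eq⟩ := hQ v hv
        set a := Real.exp (Q v) with hadef
        have ha0 : 0 < a := Real.exp_pos _
        have ha1 : a < 1 := by rw [hadef, ← Real.exp_zero]; exact Real.exp_lt_exp.mpr hqv
        have hla : Real.log a = Q v := Real.log_exp _
        have hf := auxf_mono ha0 ha1.le
        rw [hla, Real.log_one] at hf
        push_neg at hw
        rw [hR v, hR w, if_pos hv, if_neg (not_lt.mpr hw), abs_le]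
        constructor <;> nlinarith [hv_eq, sq_nonneg (1 - a)]
      · push_neg at hv
        rw [hR v, hR w, if_neg (not_lt.mpr hv), if_neg hw, abs_le]
        constructor <;> linarith
  intro v w
  rcases le_total v w with h | h
  · rw [abs_of_nonpos (by linarith : v - w ≤ 0)]
    have := key v w h; linarith
  · rw [abs_of_nonneg (by linarith : 0 ≤ v - w), abs_sub_comm]
    have := key w v h; linarith

lemma R_lb (Q R : ℝ → ℝ)
    (hQ : ∀ v : ℝ, v < -1 → Q v < 0 ∧ Q v - Real.exp (Q v) = v)
    (hR : ∀ v : ℝ, R v = if v < -1 then -2 * (1 - Real.exp (Q v)) ^ 2 else 4 * (v + 1)) :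
    ∀ v : ℝ, -2 ≤ R v := by
  intro v
  rw [hR v]
  split_ifs with h
  · obtain ⟨hqv, _⟩ := hQ v h
    have ha0 : 0 < Real.exp (Q v) := Real.exp_pos _
    have ha1 : Real.exp (Q v) < 1 := by rw [← Real.exp_zero]; exact Real.exp_lt_exp.mpr hqv
    nlinarith
  · push_neg at h; nlinarith

/-- For fixed `m < -1` and the shooting family `V(·; n)` solving
`V'' + 3V' = R(V)`, `V(0) = m`, `V'(0) = n`, the set
`β⁺ = {n : (∀ t ≥ 0, V'(t;n) > 0) ∧ ∃ t > 0, V(t;n) > -1}` is open and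
nonempty; moreover every sufficiently large `n > 0` belongs to `β⁺`. -/
theorem shooting_set_plus_open_nonempty
    (Q R : ℝ → ℝ)
    (hQ : ∀ v : ℝ, v < -1 → Q v < 0 ∧ Q v - Real.exp (Q v) = v)
    (hR : ∀ v : ℝ, R v = if v < -1 then -2 * (1 - Real.exp (Q v)) ^ 2 else 4 * (v + 1))
    (m : ℝ) (hm : m < -1)
    (V : ℝ → ℝ → ℝ)
    (hdiff : ∀ n : ℝ, ∀ t : ℝ, 0 ≤ t →
      DifferentiableAt ℝ (V n) t ∧ DifferentiableAt ℝ (deriv (V n)) t)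
    (hode : ∀ n : ℝ, ∀ t : ℝ, 0 ≤ t →
      deriv (deriv (V n)) t + 3 * deriv (V n) t = R (V n t))
    (hic : ∀ n : ℝ, V n 0 = m ∧ deriv (V n) 0 = n)
    (Bp : Set ℝ)
    (hBp : Bp = {n : ℝ | (∀ t : ℝ, 0 ≤ t → 0 < deriv (V n) t) ∧ ∃ t > 0, -1 < V n t}) :
    IsOpen Bp ∧ Bp.Nonempty ∧ ∃ N : ℝ, 0 < N ∧ ∀ n : ℝ, N < n → n ∈ Bp := by
  have hLip := R_lipschitz Q R hQ hR
  have hRlb := R_lb Q R hQ hR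
  -- derivative facts
  have hWderiv : ∀ n t, 0 ≤ t →
      HasDerivAt (deriv (V n)) (R (V n t) - 3 * deriv (V n) t) t := by
    intro n t ht
    have heq : deriv (deriv (V n)) t = R (V n t) - 3 * deriv (V n) t := by
      linarith [hode n t ht]
    rw [← heq]
    exact (hdiff n t ht).2.hasDerivAt
  have hVderiv : ∀ n t, (0:ℝ) ≤ t → HasDerivAt (V n) (deriv (V n) t) t :=
    fun n t ht => ((hdiff n t ht).1).hasDerivAt
  -- lower bound on derivative
  have hWlb : ∀ n t, 0 ≤ t → (n + 2/3) * Real.exp (-3 * t) - 2/3 ≤ deriv (V n) t := by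
    intro n t ht
    set g : ℝ → ℝ := fun s => Real.exp (3 * s) * (deriv (V n) s + 2/3) with hg
    have hgd : ∀ s, (0:ℝ) ≤ s → HasDerivAt g (Real.exp (3 * s) * (R (V n s) + 2)) s := by
      intro s hs
      have h1 : HasDerivAt (fun s : ℝ => Real.exp (3 * s)) (Real.exp (3 * s) * (3 * 1)) s :=
        ((hasDerivAt_id s).const_mul 3).exp
      have h2 := (hWderiv n s hs).add_const (2/3)
      have h3 := h1.mul h2
      exact h3.congr_deriv (by ring)
    have hmono : MonotoneOn g (Set.Ici 0) := by
      apply monotoneOn_of_deriv_nonneg (convex_Ici 0)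
      · intro s hs
        exact ((hgd s hs).differentiableAt.continuousAt).continuousWithinAt
      · intro s hs
        rw [interior_Ici] at hs
        exact (hgd s (le_of_lt hs)).differentiableAt.differentiableWithinAt
      · intro s hs
        rw [interior_Ici] at hs
        rw [(hgd s (le_of_lt hs)).deriv]
        exact mul_nonneg (Real.exp_pos _).le (by linarith [hRlb (V n s)])
    have h0 : g 0 = n + 2/3 := by
      simp [hg, (hic n).2]
    have hge := hmono (Set.mem_Ici.mpr le_rfl) (Set.mem_Ici.mpr ht) ht
    rw [h0] at hge
    have hgt : n + 2/3 ≤ Real.exp (3 * t) * (deriv (V n) t + 2/3) := hge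
    have hinv2 : Real.exp (-3 * t) * Real.exp (3 * t) = 1 := by
      rw [← Real.exp_add]; norm_num
    have hexpneg : (0:ℝ) < Real.exp (-3 * t) := Real.exp_pos _
    have h6 : Real.exp (-3 * t) * (Real.exp (3 * t) * (deriv (V n) t + 2/3))
        = deriv (V n) t + 2/3 := by
      rw [← mul_assoc, hinv2, one_mul]
    nlinarith [mul_le_mul_of_nonneg_left hgt hexpneg.le, h6]
  -- linear lower bound on V
  have hVlin : ∀ n c t1, 0 < t1 → (∀ t ∈ Set.Icc (0:ℝ) t1, c ≤ deriv (V n) t) →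
      m + c * t1 ≤ V n t1 := by
    intro n c t1 ht1 hc
    set h : ℝ → ℝ := fun s => V n s - c * s with hh
    have hmono : MonotoneOn h (Set.Icc 0 t1) := by
      apply monotoneOn_of_deriv_nonneg (convex_Icc _ _)
      · intro s hs
        exact (((hdiff n s hs.1).1.continuousAt).sub (continuousAt_id.const_smul c)).continuousWithinAt
      · intro s hs
        rw [interior_Icc] at hs
        exact ((hdiff n s hs.1.le).1.sub ((differentiable_id.const_mul c) s)).differentiableWithinAt
      · intro s hs
        rw [interior_Icc] at hs
        have hd : HasDerivAt h (deriv (V n) s - c) s := by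
          have := (hVderiv n s hs.1.le).sub (((hasDerivAt_id s).const_mul c))
          exact this.congr_deriv (by ring)
        rw [hd.deriv]
        have := hc s ⟨hs.1.le, hs.2.le⟩
        linarith
    have := hmono (Set.mem_Icc.mpr ⟨le_rfl, ht1.le⟩) (Set.mem_Icc.mpr ⟨ht1.le, le_rfl⟩) ht1.le
    simp only [hh] at this
    rw [(hic n).1] at this
    linarith
  -- persistence
  have hpersist : ∀ n t0, 0 < t0 → (∀ t ∈ Set.Icc (0:ℝ) t0, 0 < deriv (V n) t) →
      -1 < V n t0 → ∀ t, 0 ≤ t → 0 < deriv (V n) t := by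
    intro n t0 ht0 hWpos hV0
    by_contra hcon
    push_neg at hcon
    obtain ⟨tb, htb, hWtb⟩ := hcon
    have htb0 : t0 < tb := by
      by_contra hle
      push_neg at hle
      exact absurd (hWpos tb ⟨htb, hle⟩) (not_lt.mpr hWtb)
    set S : Set ℝ := {s | t0 ≤ s ∧ deriv (V n) s ≤ 0} with hS
    have hSne : S.Nonempty := ⟨tb, htb0.le, hWtb⟩
    have hSbdd : BddBelow S := ⟨t0, fun s hs => hs.1⟩
    set t1 := sInf S with ht1def
    have ht1ge : t0 ≤ t1 := le_csInf hSne (fun s hs => hs.1)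
    have ht1nn : (0:ℝ) ≤ t1 := le_trans ht0.le ht1ge
    have hpre : ∀ s, 0 ≤ s → s < t1 → 0 < deriv (V n) s := by
      intro s hs hst
      by_cases hcase : s ≤ t0
      · exact hWpos s ⟨hs, hcase⟩
      · push_neg at hcase
        by_contra hc
        push_neg at hc
        exact absurd (csInf_le hSbdd ⟨hcase.le, hc⟩) (not_le.mpr hst)
    have hWt1le : deriv (V n) t1 ≤ 0 := by
      by_contra hc
      push_neg at hc
      have hcont : ContinuousAt (deriv (V n)) t1 := (hdiff n t1 ht1nn).2.continuousAt
      have hev : ∀ᶠ s in nhds t1, 0 < deriv (V n) s := hcont.eventually (eventually_gt_nhds hc)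
      obtain ⟨δ, hδ, hball⟩ := Metric.eventually_nhds_iff.mp hev
      obtain ⟨s, hsS, hs⟩ := (csInf_lt_iff hSbdd hSne).mp (by linarith : sInf S < t1 + δ)
      have hs1 : t1 ≤ s := csInf_le hSbdd hsS
      have hdist : dist s t1 < δ := by
        rw [Real.dist_eq, abs_of_nonneg (by linarith)]
        linarith
      exact absurd (hball hdist) (not_lt.mpr hsS.2)
    have ht1gt : t0 < t1 := by
      rcases lt_or_eq_of_le ht1ge with h | h
      · exact h
      · exfalso
        rw [← h] at hWt1le
        exact absurd (hWpos t0 ⟨ht0.le, le_rfl⟩) (not_lt.mpr hWt1le)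
    have hWt1ge : 0 ≤ deriv (V n) t1 := by
      have hcont : ContinuousAt (deriv (V n)) t1 := (hdiff n t1 ht1nn).2.continuousAt
      have htend : Tendsto (deriv (V n)) (nhdsWithin t1 (Set.Iio t1)) (nhds (deriv (V n) t1)) :=
        hcont.continuousWithinAt.tendsto
      apply ge_of_tendsto htend
      filter_upwards [Ioo_mem_nhdsLT_of_mem (⟨ht1gt, le_rfl⟩ : t1 ∈ Set.Ioc t0 t1)] with s hs
      exact (hpre s (le_trans ht0.le hs.1.le) hs.2).le
    have hWt1 : deriv (V n) t1 = 0 := le_antisymm hWt1le hWt1ge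
    have hVmono : MonotoneOn (V n) (Set.Icc t0 t1) := by
      apply monotoneOn_of_deriv_nonneg (convex_Icc _ _)
      · intro s hs
        exact ((hdiff n s (le_trans ht0.le hs.1)).1.continuousAt).continuousWithinAt
      · intro s hs
        rw [interior_Icc] at hs
        exact (hdiff n s (le_trans ht0.le hs.1.le)).1.differentiableWithinAt
      · intro s hs
        rw [interior_Icc] at hs
        exact (hpre s (le_trans ht0.le hs.1.le) hs.2).le
    have hVt1 : -1 < V n t1 :=
      lt_of_lt_of_le hV0 (hVmono ⟨le_rfl, ht1gt.le⟩ ⟨ht1gt.le, le_rfl⟩ ht1gt.le)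
    have hd := hWderiv n t1 ht1nn
    have hRv : 0 < R (V n t1) - 3 * deriv (V n) t1 := by
      rw [hWt1, hR (V n t1), if_neg (not_lt.mpr hVt1.le)]
      linarith
    have hslope := hasDerivAt_iff_tendsto_slope.mp hd
    have h2 : Tendsto (slope (deriv (V n)) t1) (nhdsWithin t1 (Set.Iio t1))
        (nhds (R (V n t1) - 3 * deriv (V n) t1)) :=
      hslope.mono_left (nhdsWithin_mono _ (fun s hs => ne_of_lt hs))
    have hev : ∀ᶠ s in nhdsWithin t1 (Set.Iio t1), 0 < slope (deriv (V n)) t1 s :=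
      h2.eventually (eventually_gt_nhds hRv)
    have hev2 : ∀ᶠ s in nhdsWithin t1 (Set.Iio t1), s ∈ Set.Ioo t0 t1 :=
      Ioo_mem_nhdsLT_of_mem (⟨ht1gt, le_rfl⟩ : t1 ∈ Set.Ioc t0 t1)
    obtain ⟨s, hs1, hs2⟩ := (hev.and hev2).exists
    have hWs := hpre s (le_trans ht0.le hs2.1.le) hs2.2
    have hneg : slope (deriv (V n)) t1 s < 0 := by
      rw [slope_def_field]
      apply div_neg_of_pos_of_neg
      · rw [hWt1]; linarith
      · linarith [hs2.2]
    linarith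
  -- Gronwall continuous dependence
  have hgron : ∀ n n' T, 0 ≤ T → ∀ t ∈ Set.Icc (0:ℝ) T,
      |V n t - V n' t| ≤ |n - n'| * Real.exp (7 * t) ∧
      |deriv (V n) t - deriv (V n') t| ≤ |n - n'| * Real.exp (7 * t) := by
    intro n n' T hT
    set f : ℝ → ℝ × ℝ := fun t => (V n t - V n' t, deriv (V n) t - deriv (V n') t) with hfdef
    set f' : ℝ → ℝ × ℝ := fun t => (deriv (V n) t - deriv (V n') t,
        (R (V n t) - R (V n' t)) - 3 * (deriv (V n) t - deriv (V n') t)) with hf'def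
    have hder : ∀ t ∈ Set.Ico (0:ℝ) T, HasDerivWithinAt f (f' t) (Set.Ici t) t := by
      intro t ht
      have h1 : HasDerivAt (fun t => V n t - V n' t) (deriv (V n) t - deriv (V n') t) t :=
        (hVderiv n t ht.1).sub (hVderiv n' t ht.1)
      have h2 : HasDerivAt (fun t => deriv (V n) t - deriv (V n') t)
          ((R (V n t) - 3 * deriv (V n) t) - (R (V n' t) - 3 * deriv (V n') t)) t :=
        (hWderiv n t ht.1).sub (hWderiv n' t ht.1)
      have h3 := h1.prodMk h2
      have heq : (R (V n t) - 3 * deriv (V n) t) - (R (V n' t) - 3 * deriv (V n') t)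
          = (R (V n t) - R (V n' t)) - 3 * (deriv (V n) t - deriv (V n') t) := by ring
      rw [heq] at h3
      exact h3.hasDerivWithinAt
    have hcont : ContinuousOn f (Set.Icc 0 T) := by
      intro t ht
      exact (((hdiff n t ht.1).1.continuousAt.sub (hdiff n' t ht.1).1.continuousAt).prodMk
        ((hdiff n t ht.1).2.continuousAt.sub (hdiff n' t ht.1).2.continuousAt)).continuousWithinAt
    have hbound : ∀ t ∈ Set.Ico (0:ℝ) T, ‖f' t‖ ≤ 7 * ‖f t‖ + 0 := by
      intro t ht
      rw [add_zero, Prod.norm_def, Prod.norm_def]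
      simp only [Real.norm_eq_abs]
      have hL := hLip (V n t) (V n' t)
      have hmax1 : |V n t - V n' t| ≤ max |V n t - V n' t| |deriv (V n) t - deriv (V n') t| :=
        le_max_left _ _
      have hmax2 : |deriv (V n) t - deriv (V n') t| ≤
          max |V n t - V n' t| |deriv (V n) t - deriv (V n') t| := le_max_right _ _
      apply max_le
      · have h0 : (0:ℝ) ≤ max |V n t - V n' t| |deriv (V n) t - deriv (V n') t| :=
          le_trans (abs_nonneg _) hmax1
        linarith
      · have habs : |(R (V n t) - R (V n' t)) - 3 * (deriv (V n) t - deriv (V n') t)| ≤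
            |R (V n t) - R (V n' t)| + 3 * |deriv (V n) t - deriv (V n') t| := by
          calc |(R (V n t) - R (V n' t)) - 3 * (deriv (V n) t - deriv (V n') t)|
              ≤ |R (V n t) - R (V n' t)| + |3 * (deriv (V n) t - deriv (V n') t)| :=
                abs_sub _ _
            _ = |R (V n t) - R (V n' t)| + 3 * |deriv (V n) t - deriv (V n') t| := by
                rw [abs_mul]; norm_num
        linarith
    have h0 : ‖f 0‖ ≤ |n - n'| := by
      rw [Prod.norm_def]
      simp only [Real.norm_eq_abs, hfdef]
      rw [(hic n).1, (hic n').1, (hic n).2, (hic n').2]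
      simp
    have hg := norm_le_gronwallBound_of_norm_deriv_right_le hcont hder h0 hbound
    intro t ht
    have h2 := hg t ht
    rw [gronwallBound_ε0, sub_zero] at h2
    rw [Prod.norm_def] at h2
    simp only [Real.norm_eq_abs] at h2
    constructor
    · exact le_trans (le_max_left _ _) h2
    · exact le_trans (le_max_right _ _) h2
  -- key membership criterion
  have hkey : ∀ n t0, 0 < t0 → (∀ t ∈ Set.Icc (0:ℝ) t0, 0 < deriv (V n) t) →
      -1 < V n t0 → n ∈ Bp := by
    intro n t0 ht0 h1 h2
    rw [hBp]
    exact ⟨hpersist n t0 ht0 h1 h2, t0, ht0, h2⟩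
  -- large n
  have hNpos : 0 < Real.exp 3 * (1 - m) := mul_pos (Real.exp_pos 3) (by linarith)
  have hbigN : ∀ n, Real.exp 3 * (1 - m) < n → n ∈ Bp := by
    intro n hn
    have hnpos : 0 < n := lt_trans hNpos hn
    have h1 : Real.exp 3 * Real.exp (-3) = 1 := by rw [← Real.exp_add]; norm_num
    have h2 : (0:ℝ) < Real.exp (-3) := Real.exp_pos _
    set L := (n + 2/3) * Real.exp (-3) - 2/3 with hLdef
    clear_value L
    have hL : (1:ℝ)/3 - m < L := by
      rw [hLdef]
      nlinarith [mul_lt_mul_of_pos_right hn h2]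
    have hLpos : 0 < L := by linarith
    have hWlow : ∀ t ∈ Set.Icc (0:ℝ) 1, L ≤ deriv (V n) t := by
      intro t ht
      have hlb := hWlb n t ht.1
      have hmono : Real.exp (-3) ≤ Real.exp (-3 * t) :=
        Real.exp_le_exp.mpr (by nlinarith [ht.2])
      have hn23 : (0:ℝ) ≤ n + 2/3 := by linarith
      rw [hLdef]
      nlinarith [mul_le_mul_of_nonneg_left hmono hn23]
    have hV1 : -1 < V n 1 := by
      have := hVlin n L 1 one_pos hWlow
      linarith
    exact hkey n 1 one_pos (fun t ht => lt_of_lt_of_le hLpos (hWlow t ht)) hV1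
  refine ⟨?_, ⟨Real.exp 3 * (1 - m) + 1, hbigN _ (by linarith)⟩,
    Real.exp 3 * (1 - m), hNpos, hbigN⟩
  -- openness
  rw [Metric.isOpen_iff]
  intro n hn
  have hn' := hn
  rw [hBp] at hn'
  obtain ⟨hWpos, t0, ht0, hVt0⟩ := hn'
  have hWcont : ContinuousOn (deriv (V n)) (Set.Icc 0 t0) :=
    fun t ht => ((hdiff n t ht.1).2.continuousAt).continuousWithinAt
  obtain ⟨tmin, htmin, hmin⟩ :=
    isCompact_Icc.exists_isMinOn (Set.nonempty_Icc.mpr ht0.le) hWcont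
  set c := deriv (V n) tmin with hcdef
  have hc : 0 < c := hWpos tmin htmin.1
  set ε := min c (V n t0 + 1) with hεdef
  have hεpos : 0 < ε := lt_min hc (by linarith)
  clear_value ε
  refine ⟨ε / (2 * Real.exp (7 * t0)), by positivity, ?_⟩
  intro n' hn'ball
  rw [Metric.mem_ball, Real.dist_eq] at hn'ball
  have hdiffb : ∀ t ∈ Set.Icc (0:ℝ) t0,
      |V n' t - V n t| ≤ ε/2 ∧ |deriv (V n') t - deriv (V n) t| ≤ ε/2 := by
    intro t ht
    obtain ⟨h1, h2⟩ := hgron n' n t0 ht0.le t ht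
    have hee : Real.exp (7 * t) ≤ Real.exp (7 * t0) :=
      Real.exp_le_exp.mpr (by linarith [ht.2])
    have hkey2 : |n' - n| * Real.exp (7 * t) ≤ ε/2 := by
      have h3 : |n' - n| * Real.exp (7 * t) ≤ |n' - n| * Real.exp (7 * t0) :=
        mul_le_mul_of_nonneg_left hee (abs_nonneg _)
      have h4 : |n' - n| * Real.exp (7 * t0) < (ε / (2 * Real.exp (7 * t0))) * Real.exp (7 * t0) :=
        mul_lt_mul_of_pos_right hn'ball (Real.exp_pos _)
      have h5 : (ε / (2 * Real.exp (7 * t0))) * Real.exp (7 * t0) = ε/2 := by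
        field_simp
      linarith
    exact ⟨le_trans h1 hkey2, le_trans h2 hkey2⟩
  apply hkey n' t0 ht0
  · intro t ht
    have h2 := (hdiffb t ht).2
    have h3 : c ≤ deriv (V n) t := by rw [hcdef]; exact hmin ht
    have h4 := abs_le.mp h2
    have hεc : ε ≤ c := by rw [hεdef]; exact min_le_left _ _
    linarith [h4.1]
  · have h1 := (hdiffb t0 ⟨ht0.le, le_rfl⟩).1
    have h4 := abs_le.mp h1
    have hεV : ε ≤ V n t0 + 1 := by rw [hεdef]; exact min_le_right _ _
    linarith [h4.1]
end

section
/- Fix m < -1 and for each n ∈ ℝ let V(·; n) : [0, ∞) → ℝ be the unique solution of V'' + 3V' = R(V), V(0) = m, V'(0) = n, and let β⁰ = {n : V'(t; n) > 0 and V(t; n) ≤ -1 for all t > 0}. Then β⁰ is a nonempty closed subset of ℝ, and for every n ∈ β⁰ one has the strict inequality V(t; n) < -1 for all t > 0. -/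
open Real Filter Set Topology NNReal

private lemma logmean_aux {x y : ℝ} (hx : 0 < x) (hxy : x ≤ y) :
    2 * (y - x) ≤ (x + y) * (Real.log y - Real.log x) := by
  set h : ℝ → ℝ := fun z => (x + z) * (Real.log z - Real.log x) - 2 * (z - x) with hh
  have hd : ∀ z : ℝ, 0 < z →
      HasDerivAt h (Real.log z - Real.log x + (x + z) * z⁻¹ - 2) z := by
    intro z hz
    have h1 : HasDerivAt (fun z : ℝ => x + z) 1 z := (hasDerivAt_id z).const_add x
    have h2 : HasDerivAt (fun z : ℝ => Real.log z - Real.log x) z⁻¹ z :=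
      (Real.hasDerivAt_log hz.ne').sub_const (Real.log x)
    have h3 := h1.mul h2
    have h4 : HasDerivAt (fun z : ℝ => 2 * (z - x)) 2 z := by
      simpa using ((hasDerivAt_id z).sub_const x).const_mul 2
    have := h3.sub h4
    rw [show Real.log z - Real.log x + (x + z) * z⁻¹ - 2 = 1 * (Real.log z - Real.log x) + (x + z) * z⁻¹ - 2 by ring]
    exact this
  have hmono : MonotoneOn h (Ici x) := by
    apply monotoneOn_of_deriv_nonneg (convex_Ici x)
    · intro z hz
      exact ((hd z (lt_of_lt_of_le hx hz)).differentiableAt.continuousAt).continuousWithinAt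
    · intro z hz
      rw [interior_Ici] at hz
      exact ((hd z (hx.trans hz)).differentiableAt).differentiableWithinAt
    · intro z hz
      rw [interior_Ici] at hz
      have hz0 : 0 < z := hx.trans hz
      rw [(hd z hz0).deriv]
      have hlog : Real.log x - Real.log z ≤ x / z - 1 := by
        have := Real.log_le_sub_one_of_pos (div_pos hx hz0)
        rwa [Real.log_div hx.ne' hz0.ne'] at this
      have : (x + z) * z⁻¹ = x / z + 1 := by field_simp
      rw [this]
      linarith
  have h0 : h x = 0 := by simp [hh]
  have := hmono (self_mem_Ici) (mem_Ici.2 hxy) hxy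
  rw [h0] at this
  simp only [hh] at this
  linarith

private lemma key_ineq {a b : ℝ} (hab : a ≤ b) (hb : b ≤ 0) :
    2 * (Real.exp b - Real.exp a) * (2 - Real.exp a - Real.exp b) ≤
      4 * ((b - Real.exp b) - (a - Real.exp a)) := by
  set x := Real.exp a with hxdef
  set y := Real.exp b with hydef
  have hx : 0 < x := Real.exp_pos a
  have hy : 0 < y := Real.exp_pos b
  have hxy : x ≤ y := Real.exp_le_exp.2 hab
  have hy1 : y ≤ 1 := Real.exp_le_one_iff.2 hb
  have hx1 : x ≤ 1 := hxy.trans hy1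
  have hlog : 2 * (y - x) ≤ (x + y) * (b - a) := by
    have := logmean_aux hx hxy
    rwa [hxdef, hydef, Real.log_exp, Real.log_exp] at this
  have hprod : 0 ≤ (y - x) * (2 - x - y) * (2 - x - y) := by
    have h1 : 0 ≤ y - x := by linarith
    have h2 : 0 ≤ 2 - x - y := by linarith
    exact mul_nonneg (mul_nonneg h1 h2) h2
  nlinarith [mul_pos hx hy, add_pos hx hy, hlog, hprod]

private lemma R_lip_le (Q R : ℝ → ℝ)
    (hQ : ∀ v : ℝ, v < -1 → Q v < 0 ∧ Q v - Real.exp (Q v) = v)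
    (hR : ∀ v : ℝ, R v = if v < -1 then -2 * (1 - Real.exp (Q v)) ^ 2 else 4 * (v + 1))
    {v w : ℝ} (hvw : v ≤ w) : |R v - R w| ≤ 4 * |v - w| := by
  have habs : |v - w| = w - v := by rw [abs_sub_comm]; exact abs_of_nonneg (by linarith)
  by_cases hw : w < -1
  · have hv : v < -1 := lt_of_le_of_lt hvw hw
    obtain ⟨ha, hva⟩ := hQ v hv
    obtain ⟨hbb, hwb⟩ := hQ w hw
    set a := Q v with hadef
    set b := Q w with hbdef
    have hab : a ≤ b := by
      by_contra hcon
      push_neg at hcon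
      have h1 : Real.exp a * Real.exp (b - a) = Real.exp b := by
        rw [← Real.exp_add]; ring_nf
      have h2 : (b - a) + 1 ≤ Real.exp (b - a) := Real.add_one_le_exp _
      have h3 : Real.exp a < 1 := Real.exp_lt_one_iff.2 ha
      have h4 : 0 < Real.exp a := Real.exp_pos a
      have h5 : Real.exp a * ((b - a) + 1) ≤ Real.exp a * Real.exp (b - a) :=
        mul_le_mul_of_nonneg_left h2 h4.le
      have : w < v := by nlinarith [mul_pos (sub_pos.2 hcon) (sub_pos.2 h3)]
      linarith
    have hkey := key_ineq hab hbb.le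
    rw [hR v, hR w, if_pos hv, if_pos hw, habs, ← hadef, ← hbdef]
    have hxy : Real.exp a ≤ Real.exp b := Real.exp_le_exp.2 hab
    have hy1 : Real.exp b ≤ 1 := (Real.exp_le_one_iff).2 hbb.le
    have hle : -2 * (1 - Real.exp a) ^ 2 - -2 * (1 - Real.exp b) ^ 2 ≤ 0 := by nlinarith
    rw [abs_of_nonpos hle, ← hva, ← hwb]
    nlinarith
  · push_neg at hw
    by_cases hv : v < -1
    · obtain ⟨ha, hva⟩ := hQ v hv
      have hkey := key_ineq ha.le le_rfl
      rw [Real.exp_zero] at hkey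
      have hx1 : Real.exp (Q v) < 1 := Real.exp_lt_one_iff.2 ha
      have hx0 : 0 < Real.exp (Q v) := Real.exp_pos _
      rw [hR v, hR w, if_pos hv, if_neg (not_lt.2 hw), habs]
      have hle : -2 * (1 - Real.exp (Q v)) ^ 2 - 4 * (w + 1) ≤ 0 := by nlinarith
      rw [abs_of_nonpos hle]
      nlinarith [hva]
    · rw [hR v, hR w, if_neg hv, if_neg (not_lt.2 hw), habs]
      rw [show 4 * (v + 1) - 4 * (w + 1) = -(4 * (w - v)) by ring, abs_neg,
        abs_of_nonneg (by linarith : (0:ℝ) ≤ 4 * (w - v))]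

private lemma R_lip (Q R : ℝ → ℝ)
    (hQ : ∀ v : ℝ, v < -1 → Q v < 0 ∧ Q v - Real.exp (Q v) = v)
    (hR : ∀ v : ℝ, R v = if v < -1 then -2 * (1 - Real.exp (Q v)) ^ 2 else 4 * (v + 1))
    (v w : ℝ) : |R v - R w| ≤ 4 * |v - w| := by
  rcases le_total v w with h | h
  · exact R_lip_le Q R hQ hR h
  · rw [abs_sub_comm, abs_sub_comm v w]; exact R_lip_le Q R hQ hR h

private lemma left_pos {f : ℝ → ℝ} {t₂ d c : ℝ} (hf : HasDerivAt f d t₂) (hd : d < 0)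
    (hc : f t₂ = c) : ∀ᶠ s in 𝓝[<] t₂, c < f s := by
  have h1 : Tendsto (slope f t₂) (𝓝[≠] t₂) (𝓝 d) := hasDerivAt_iff_tendsto_slope.mp hf
  have h2 : Tendsto (slope f t₂) (𝓝[<] t₂) (𝓝 d) :=
    h1.mono_left (nhdsWithin_mono _ fun s hs => ne_of_lt hs)
  have h0 : ∀ᶠ z in 𝓝 d, z < (0:ℝ) := by
    filter_upwards [Iio_mem_nhds hd] with z hz using hz
  filter_upwards [h2.eventually h0, self_mem_nhdsWithin] with s hs hs'
  rw [slope_def_field, hc] at hs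
  rcases div_neg_iff.mp hs with ⟨h1', h2'⟩ | ⟨h1', h2'⟩
  · linarith
  · exfalso; exact absurd hs' (by simp only [mem_Iio]; linarith)

private lemma right_neg {f : ℝ → ℝ} {t₂ d c : ℝ} (hf : HasDerivAt f d t₂) (hd : d < 0)
    (hc : f t₂ = c) : ∀ᶠ s in 𝓝[>] t₂, f s < c := by
  have h1 : Tendsto (slope f t₂) (𝓝[≠] t₂) (𝓝 d) := hasDerivAt_iff_tendsto_slope.mp hf
  have h2 : Tendsto (slope f t₂) (𝓝[>] t₂) (𝓝 d) :=
    h1.mono_left (nhdsWithin_mono _ fun s hs => ne_of_gt hs)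
  have h0 : ∀ᶠ z in 𝓝 d, z < (0:ℝ) := by
    filter_upwards [Iio_mem_nhds hd] with z hz using hz
  filter_upwards [h2.eventually h0, self_mem_nhdsWithin] with s hs hs'
  rw [slope_def_field, hc] at hs
  rcases div_neg_iff.mp hs with ⟨h1', h2'⟩ | ⟨h1', h2'⟩
  · exfalso; exact absurd hs' (by simp only [mem_Ioi]; linarith)
  · linarith

/-- For fixed `m < -1` and the shooting family `V(·; n)` solving
`V'' + 3V' = R(V)`, `V(0) = m`, `V'(0) = n`, the set
`β⁰ = {n : ∀ t > 0, V'(t;n) > 0 ∧ V(t;n) ≤ -1}` is a nonempty closed subset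
of `ℝ`, and for every `n ∈ β⁰` one has the strict inequality
`V(t; n) < -1` for all `t > 0`. -/
theorem shooting_set_zero_closed_nonempty
    (Q R : ℝ → ℝ)
    (hQ : ∀ v : ℝ, v < -1 → Q v < 0 ∧ Q v - Real.exp (Q v) = v)
    (hR : ∀ v : ℝ, R v = if v < -1 then -2 * (1 - Real.exp (Q v)) ^ 2 else 4 * (v + 1))
    (m : ℝ) (hm : m < -1)
    (V : ℝ → ℝ → ℝ)
    (hdiff : ∀ n : ℝ, ∀ t : ℝ, 0 ≤ t →
      DifferentiableAt ℝ (V n) t ∧ DifferentiableAt ℝ (deriv (V n)) t)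
    (hode : ∀ n : ℝ, ∀ t : ℝ, 0 ≤ t →
      deriv (deriv (V n)) t + 3 * deriv (V n) t = R (V n t))
    (hic : ∀ n : ℝ, V n 0 = m ∧ deriv (V n) 0 = n)
    (B0 : Set ℝ)
    (hB0 : B0 = {n : ℝ | ∀ t > 0, 0 < deriv (V n) t ∧ V n t ≤ -1}) :
    IsClosed B0 ∧ B0.Nonempty ∧ ∀ n ∈ B0, ∀ t > 0, V n t < -1 := by
  subst hB0
  classical
  have hRlip := R_lip Q R hQ hR
  have hRneg : ∀ v : ℝ, v < -1 → R v < 0 := by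
    intro v hv
    obtain ⟨ha, _⟩ := hQ v hv
    have h1 : Real.exp (Q v) < 1 := Real.exp_lt_one_iff.2 ha
    have h2 : 0 < Real.exp (Q v) := Real.exp_pos _
    rw [hR, if_pos hv]; nlinarith
  have hRlb : ∀ v : ℝ, -2 ≤ R v := by
    intro v; rw [hR]; split_ifs with h
    · obtain ⟨ha, _⟩ := hQ v h
      have h1 : Real.exp (Q v) < 1 := Real.exp_lt_one_iff.2 ha
      have h2 : 0 < Real.exp (Q v) := Real.exp_pos _
      nlinarith
    · push_neg at h; nlinarith
  have hRm1 : R (-1) = 0 := by rw [hR]; norm_num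
  -- the first-order system
  set F : ℝ × ℝ → ℝ × ℝ := fun p => (p.2, R p.1 - 3 * p.2) with hF
  have hFlip : LipschitzWith 7 F := by
    apply LipschitzWith.of_dist_le_mul
    intro p q
    have h7 : ((7:ℝ≥0):ℝ) = 7 := by norm_num
    simp only [hF, Prod.dist_eq, Real.dist_eq, h7]
    have e2 : |R p.1 - 3 * p.2 - (R q.1 - 3 * q.2)| ≤ 4 * |p.1 - q.1| + 3 * |p.2 - q.2| := by
      rw [show R p.1 - 3 * p.2 - (R q.1 - 3 * q.2)
          = (R p.1 - R q.1) + -(3 * (p.2 - q.2)) by ring]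
      refine (abs_add_le _ _).trans ?_
      rw [abs_neg, abs_mul, abs_of_nonneg (by norm_num : (0:ℝ) ≤ 3)]
      have := hRlip p.1 q.1
      linarith
    have habs1 : |p.1 - q.1| ≤ max |p.1 - q.1| |p.2 - q.2| := le_max_left _ _
    have habs2 : |p.2 - q.2| ≤ max |p.1 - q.1| |p.2 - q.2| := le_max_right _ _
    apply max_le
    · linarith [abs_nonneg (p.1 - q.1)]
    · linarith
  set W : ℝ → ℝ → ℝ × ℝ := fun n t => (V n t, deriv (V n) t) with hW
  have hW' : ∀ n (t : ℝ), 0 ≤ t → HasDerivAt (W n) (F (W n t)) t := by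
    intro n t ht
    have h1 := (hdiff n t ht).1.hasDerivAt
    have h2 := (hdiff n t ht).2.hasDerivAt
    have heq : deriv (deriv (V n)) t = R (V n t) - 3 * deriv (V n) t := by
      have := hode n t ht; linarith
    rw [heq] at h2
    exact h1.prodMk h2
  have hWc : ∀ n (t : ℝ), 0 ≤ t → ContinuousAt (W n) t := by
    intro n t ht
    exact (hdiff n t ht).1.continuousAt.prodMk (hdiff n t ht).2.continuousAt
  have hW0 : ∀ n : ℝ, W n 0 = (m, n) := by
    intro n
    simp only [hW, (hic n).1, (hic n).2]
  -- Grönwall: continuous dependence on the initial slope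
  have hgron : ∀ n n' b : ℝ, ∀ t ∈ Icc (0:ℝ) b,
      dist (W n t) (W n' t) ≤ |n - n'| * Real.exp (7 * t) := by
    intro n n' b t ht
    have hcont : ∀ k : ℝ, ContinuousOn (W k) (Icc 0 b) :=
      fun k s hs => (hWc k s hs.1).continuousWithinAt
    have hderiv : ∀ k : ℝ, ∀ s ∈ Ico (0:ℝ) b, HasDerivWithinAt (W k) (F (W k s)) (Ici s) s :=
      fun k s hs => (hW' k s hs.1).hasDerivWithinAt
    have ha : dist (W n 0) (W n' 0) ≤ |n - n'| := by
      rw [hW0 n, hW0 n', Prod.dist_eq, Real.dist_eq, Real.dist_eq, sub_self, abs_zero]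
      exact max_le (abs_nonneg _) le_rfl
    have := dist_le_of_trajectories_ODE (v := fun _ p => F p) (K := 7)
      (fun _ => hFlip) (hcont n) (hderiv n) (hcont n') (hderiv n') ha t ht
    have h7 : ((7:ℝ≥0):ℝ) = 7 := by norm_num
    rwa [sub_zero, h7] at this
  -- uniqueness: the solution can never touch (-1, 0)
  have htouch : ∀ n : ℝ, ∀ t₀ : ℝ, 0 < t₀ → V n t₀ = -1 → deriv (V n) t₀ = 0 → False := by
    intro n t₀ ht₀ hV1 hV2
    have hGlip : ∀ _ : ℝ, LipschitzWith 7 (fun p : ℝ × ℝ => -(F p)) := by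
      intro _
      apply LipschitzWith.of_dist_le_mul
      intro p q
      rw [dist_neg_neg]
      exact hFlip.dist_le_mul p q
    have hfc : ContinuousOn (fun s => W n (t₀ - s)) (Icc 0 t₀) := by
      intro s hs
      have h1 : (0:ℝ) ≤ t₀ - s := by linarith [hs.2]
      exact ((hWc n (t₀ - s) h1).comp
        ((continuous_const.sub continuous_id).continuousAt)).continuousWithinAt
    have hfd : ∀ s ∈ Ico (0:ℝ) t₀,
        HasDerivWithinAt (fun s => W n (t₀ - s)) (-(F (W n (t₀ - s)))) (Ici s) s := by
      intro s hs
      have h1 : (0:ℝ) ≤ t₀ - s := by linarith [hs.2]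
      have h2 : HasDerivAt (fun s : ℝ => t₀ - s) (-1) s := by
        simpa using (hasDerivAt_id s).const_sub t₀
      have h3 : HasDerivAt (fun s : ℝ => W n (t₀ - s)) ((-1 : ℝ) • F (W n (t₀ - s))) s :=
        (hW' n (t₀ - s) h1).scomp_of_eq s h2 rfl
      have h4 : ((-1:ℝ)) • F (W n (t₀ - s)) = -(F (W n (t₀ - s))) := by simp
      rw [h4] at h3
      exact h3.hasDerivWithinAt
    have hgd : ∀ s ∈ Ico (0:ℝ) t₀,
        HasDerivWithinAt (fun _ : ℝ => ((-1:ℝ), (0:ℝ))) (-(F ((-1:ℝ), (0:ℝ)))) (Ici s) s := by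
      intro s _
      have h4 : -(F ((-1:ℝ), (0:ℝ))) = (0 : ℝ × ℝ) := by
        simp only [hF]
        simp [hRm1, Prod.ext_iff]
      rw [h4]
      exact hasDerivWithinAt_const _ _ _
    have ha0 : (fun s => W n (t₀ - s)) 0 = ((-1:ℝ), (0:ℝ)) := by
      simp only [hW, sub_zero, hV1, hV2]
    have hsol := ODE_solution_unique (v := fun _ p => -(F p)) (K := 7) hGlip hfc hfd
      continuousOn_const hgd ha0
    have hend := hsol (right_mem_Icc.2 ht₀.le)
    simp only [sub_self] at hend
    rw [hW0 n] at hend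
    have : m = -1 := congrArg Prod.fst hend
    linarith
  -- the two open pieces of the complement
  set Op : Set ℝ := {n | ∃ t, 0 < t ∧ -1 < V n t} with hOpdef
  set Om : Set ℝ := {n | ∃ t, 0 < t ∧ deriv (V n) t < 0 ∧
      ∀ s ∈ Icc (0:ℝ) t, V n s < -1} with hOmdef
  have hOp_open : IsOpen Op := by
    rw [Metric.isOpen_iff]
    rintro n ⟨t, ht, hV⟩
    refine ⟨(V n t + 1) / Real.exp (7 * t), div_pos (by linarith) (Real.exp_pos _), ?_⟩
    intro n' hn'
    rw [Metric.mem_ball, Real.dist_eq] at hn'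
    have hnn : |n - n'| < (V n t + 1) / Real.exp (7 * t) := by rwa [abs_sub_comm]
    have hb := hgron n n' t t (mem_Icc.2 ⟨ht.le, le_rfl⟩)
    have h1 : |V n t - V n' t| ≤ dist (W n t) (W n' t) := by
      rw [Prod.dist_eq]
      refine le_trans ?_ (le_max_left _ _)
      rw [hW, Real.dist_eq]
    have h2 : |n - n'| * Real.exp (7 * t) < V n t + 1 := by
      have := mul_lt_mul_of_pos_right hnn (Real.exp_pos (7 * t))
      rwa [div_mul_cancel₀ _ (Real.exp_pos (7 * t)).ne'] at this
    have h3 := (abs_lt.1 (lt_of_le_of_lt (h1.trans hb) h2)).2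
    exact ⟨t, ht, by linarith⟩
  have hOm_open : IsOpen Om := by
    rw [Metric.isOpen_iff]
    rintro n ⟨t, ht, hd, hVs⟩
    obtain ⟨s₀, hs₀, hmax⟩ := isCompact_Icc.exists_isMaxOn (nonempty_Icc.2 ht.le)
      (fun s hs => ((hdiff n s hs.1).1.continuousAt.continuousWithinAt))
    have hM1 : V n s₀ < -1 := hVs s₀ hs₀
    set M := V n s₀ with hM
    set δ := min ((-deriv (V n) t) / Real.exp (7 * t)) ((-1 - M) / Real.exp (7 * t)) with hδ
    have hδpos : 0 < δ := lt_min (div_pos (by linarith) (Real.exp_pos _))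
      (div_pos (by linarith) (Real.exp_pos _))
    refine ⟨δ, hδpos, ?_⟩
    intro n' hn'
    rw [Metric.mem_ball, Real.dist_eq] at hn'
    have hnn : |n - n'| < δ := by rwa [abs_sub_comm]
    refine ⟨t, ht, ?_, ?_⟩
    · have hb := hgron n n' t t (mem_Icc.2 ⟨ht.le, le_rfl⟩)
      have h1 : |deriv (V n) t - deriv (V n') t| ≤ dist (W n t) (W n' t) := by
        rw [Prod.dist_eq]
        refine le_trans ?_ (le_max_right _ _)
        rw [hW, Real.dist_eq]
      have h2 : |n - n'| * Real.exp (7 * t) < -deriv (V n) t := by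
        have hle := min_le_left ((-deriv (V n) t) / Real.exp (7 * t))
          ((-1 - M) / Real.exp (7 * t))
        have := mul_lt_mul_of_pos_right (lt_of_lt_of_le hnn hle) (Real.exp_pos (7 * t))
        rwa [div_mul_cancel₀ _ (Real.exp_pos (7 * t)).ne'] at this
      have h3 := (abs_lt.1 (lt_of_le_of_lt (h1.trans hb) h2)).1
      linarith
    · intro s hs
      have hb := hgron n n' t s (mem_Icc.2 ⟨hs.1, hs.2⟩)
      have h1 : |V n s - V n' s| ≤ dist (W n s) (W n' s) := by
        rw [Prod.dist_eq]
        refine le_trans ?_ (le_max_left _ _)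
        rw [hW, Real.dist_eq]
      have hexps : Real.exp (7 * s) ≤ Real.exp (7 * t) := Real.exp_le_exp.2 (by linarith [hs.2])
      have h2 : |n - n'| * Real.exp (7 * s) < -1 - M := by
        have hle := min_le_right ((-deriv (V n) t) / Real.exp (7 * t))
          ((-1 - M) / Real.exp (7 * t))
        have hmm : |n - n'| * Real.exp (7 * s) ≤ |n - n'| * Real.exp (7 * t) :=
          mul_le_mul_of_nonneg_left hexps (abs_nonneg _)
        have := mul_lt_mul_of_pos_right (lt_of_lt_of_le hnn hle) (Real.exp_pos (7 * t))
        rw [div_mul_cancel₀ _ (Real.exp_pos (7 * t)).ne'] at this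
        linarith
      have h3 := (abs_lt.1 (lt_of_le_of_lt (h1.trans hb) h2)).1
      have h4 : V n s ≤ M := hmax hs
      linarith
  -- once the velocity turns negative below -1, the solution stays below -1
  have habsorb : ∀ n ∈ Om, ∀ t : ℝ, 0 ≤ t → V n t < -1 := by
    rintro n ⟨t₁, ht₁, hd1, hVs⟩ t ht
    rcases le_or_gt t t₁ with h | h
    · exact hVs t ⟨ht, h⟩
    by_contra hcon
    push_neg at hcon
    set Bad : Set ℝ := {s | t₁ ≤ s ∧ (0 ≤ deriv (V n) s ∨ -1 ≤ V n s)} with hBad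
    have hBad_ne : Bad.Nonempty := ⟨t, ⟨by linarith, Or.inr hcon⟩⟩
    have hBad_bdd : BddBelow Bad := ⟨t₁, fun s hs => hs.1⟩
    have hBad_closed : IsClosed Bad := by
      have hc1 : ContinuousOn (deriv (V n)) (Ici t₁) :=
        fun s hs => ((hdiff n s (le_trans ht₁.le hs)).2.continuousAt).continuousWithinAt
      have hc2 : ContinuousOn (V n) (Ici t₁) :=
        fun s hs => ((hdiff n s (le_trans ht₁.le hs)).1.continuousAt).continuousWithinAt
      have hBeq : Bad = (Ici t₁ ∩ deriv (V n) ⁻¹' Ici 0) ∪ (Ici t₁ ∩ V n ⁻¹' Ici (-1)) := by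
        ext s
        simp only [hBad, mem_setOf_eq, mem_union, mem_inter_iff, mem_preimage, mem_Ici]
        tauto
      rw [hBeq]
      exact (hc1.preimage_isClosed_of_isClosed isClosed_Ici isClosed_Ici).union
        (hc2.preimage_isClosed_of_isClosed isClosed_Ici isClosed_Ici)
    set t₂ := sInf Bad with ht₂def
    have ht₂mem : t₂ ∈ Bad := hBad_closed.csInf_mem hBad_ne hBad_bdd
    have ht₂ge : t₁ ≤ t₂ := ht₂mem.1
    have hbefore : ∀ s, t₁ ≤ s → s < t₂ → deriv (V n) s < 0 ∧ V n s < -1 := by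
      intro s hs1 hs2
      rcases lt_or_ge (deriv (V n) s) 0 with hd | hd
      · rcases lt_or_ge (V n s) (-1) with hv | hv
        · exact ⟨hd, hv⟩
        · have hmem : s ∈ Bad := ⟨hs1, Or.inr hv⟩
          linarith [csInf_le hBad_bdd hmem]
      · have hmem : s ∈ Bad := ⟨hs1, Or.inl hd⟩
        linarith [csInf_le hBad_bdd hmem]
    have ht₁notin : t₁ ∉ Bad := by
      intro hmem
      rcases hmem.2 with h' | h'
      · linarith
      · linarith [hVs t₁ ⟨ht₁.le, le_rfl⟩]
    have ht₂gt : t₁ < t₂ :=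
      lt_of_le_of_ne ht₂ge (fun he => ht₁notin (by rw [he]; exact ht₂mem))
    have ht₂pos : 0 < t₂ := lt_trans ht₁ ht₂gt
    have hV2le : V n t₂ ≤ -1 := by
      have hten : Tendsto (V n) (𝓝[<] t₂) (𝓝 (V n t₂)) :=
        (hdiff n t₂ ht₂pos.le).1.continuousAt.continuousWithinAt
      refine le_of_tendsto hten ?_
      filter_upwards [Ioo_mem_nhdsLT ht₂gt] with s hs
      exact (hbefore s hs.1.le hs.2).2.le
    have hd2le : deriv (V n) t₂ ≤ 0 := by
      have hten : Tendsto (deriv (V n)) (𝓝[<] t₂) (𝓝 (deriv (V n) t₂)) :=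
        (hdiff n t₂ ht₂pos.le).2.continuousAt.continuousWithinAt
      refine le_of_tendsto hten ?_
      filter_upwards [Ioo_mem_nhdsLT ht₂gt] with s hs
      exact (hbefore s hs.1.le hs.2).1.le
    have hV2lt : V n t₂ < -1 := by
      rcases lt_or_eq_of_le hV2le with h' | h'
      · exact h'
      exfalso
      rcases lt_or_eq_of_le hd2le with hd' | hd'
      · have hev := left_pos (hdiff n t₂ ht₂pos.le).1.hasDerivAt hd' h'
        have hev2 : ∀ᶠ s in 𝓝[<] t₂, s ∈ Ioo t₁ t₂ :=
          eventually_of_mem (Ioo_mem_nhdsLT ht₂gt) (fun s hs => hs)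
        obtain ⟨s, hs1, hs2⟩ := (hev.and hev2).exists
        exact absurd hs1 (not_lt.2 (hbefore s hs2.1.le hs2.2).2.le)
      · exact htouch n t₂ ht₂pos h' hd'
    have hd20 : deriv (V n) t₂ = 0 := by
      rcases ht₂mem.2 with h' | h'
      · linarith
      · exact absurd h' (not_le.2 hV2lt)
    have hdd : HasDerivAt (deriv (V n)) (R (V n t₂) - 3 * deriv (V n) t₂) t₂ := by
      have h2 := (hdiff n t₂ ht₂pos.le).2.hasDerivAt
      have heq := hode n t₂ ht₂pos.le
      rwa [show R (V n t₂) - 3 * deriv (V n) t₂ = deriv (deriv (V n)) t₂ by linarith]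
    have hRneg' : R (V n t₂) - 3 * deriv (V n) t₂ < 0 := by
      rw [hd20]
      have := hRneg _ hV2lt
      linarith
    have hev := left_pos hdd hRneg' hd20
    have hev2 : ∀ᶠ s in 𝓝[<] t₂, s ∈ Ioo t₁ t₂ :=
      eventually_of_mem (Ioo_mem_nhdsLT ht₂gt) (fun s hs => hs)
    obtain ⟨s, hs1, hs2⟩ := (hev.and hev2).exists
    exact absurd hs1 (not_lt.2 (hbefore s hs2.1.le hs2.2).1.le)
  -- if the solution never exceeds -1, it stays strictly below -1
  have hstrict : ∀ n : ℝ, (∀ t : ℝ, 0 < t → V n t ≤ -1) → ∀ s : ℝ, 0 ≤ s → V n s < -1 := by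
    intro n hle s hs
    rcases eq_or_lt_of_le hs with h0 | h0
    · rw [← h0, (hic n).1]; exact hm
    rcases lt_or_eq_of_le (hle s h0) with h' | h'
    · exact h'
    exfalso
    have hlm : IsLocalMax (V n) s := by
      filter_upwards [Ioi_mem_nhds h0] with u hu
      rw [h']
      exact hle u hu
    exact htouch n s h0 h' hlm.deriv_eq_zero
  -- complement decomposition
  have hcompl : {n : ℝ | ∀ t > 0, 0 < deriv (V n) t ∧ V n t ≤ -1}ᶜ = Op ∪ Om := by
    ext n
    simp only [mem_compl_iff, mem_setOf_eq, mem_union, not_forall]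
    constructor
    · intro h
      obtain ⟨t₀, ht₀pos, ht₀'⟩ := h
      by_cases hop : n ∈ Op
      · exact Or.inl hop
      right
      have hle : ∀ t : ℝ, 0 < t → V n t ≤ -1 := by
        intro t htpos
        by_contra hc
        push_neg at hc
        exact hop ⟨t, htpos, hc⟩
      have hst := hstrict n hle
      have hd0 : deriv (V n) t₀ ≤ 0 := by
        by_contra hh
        push_neg at hh
        exact ht₀' ⟨hh, (hst t₀ ht₀pos.le).le⟩
      rcases lt_or_eq_of_le hd0 with hd' | hd'
      · exact ⟨t₀, ht₀pos, hd', fun s hs => hst s hs.1⟩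
      · have hdd : HasDerivAt (deriv (V n)) (R (V n t₀) - 3 * deriv (V n) t₀) t₀ := by
          have h2 := (hdiff n t₀ ht₀pos.le).2.hasDerivAt
          have heq := hode n t₀ ht₀pos.le
          rwa [show R (V n t₀) - 3 * deriv (V n) t₀ = deriv (deriv (V n)) t₀ by linarith]
        have hneg : R (V n t₀) - 3 * deriv (V n) t₀ < 0 := by
          rw [← hd']
          have := hRneg _ (hst t₀ ht₀pos.le)
          linarith
        have hev := right_neg hdd hneg hd'
        obtain ⟨s, hs1, hs2⟩ := (hev.and eventually_mem_nhdsWithin).exists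
        exact ⟨s, lt_trans ht₀pos hs2, hs1, fun u hu => hst u hu.1⟩
    · rintro (⟨t, ht, hV⟩ | ⟨t, ht, hd, hVs⟩)
      · exact ⟨t, ht, fun hc => absurd hc.2 (not_le.2 hV)⟩
      · exact ⟨t, ht, fun hc => absurd hc.1 (not_lt.2 hd.le)⟩
  have hdisj : ∀ n : ℝ, n ∈ Op → n ∈ Om → False := by
    rintro n ⟨t, ht, hV⟩ hom
    exact absurd hV (not_lt.2 (habsorb n hom t ht.le).le)
  -- Om is nonempty
  have hOm_ne : Om.Nonempty := by
    refine ⟨-1, ?_⟩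
    have c1 : ContinuousAt (deriv (V (-1))) 0 := (hdiff (-1) 0 le_rfl).2.continuousAt
    have c2 : ContinuousAt (V (-1)) 0 := (hdiff (-1) 0 le_rfl).1.continuousAt
    have e1 : ∀ᶠ s in 𝓝 (0:ℝ), deriv (V (-1)) s < 0 := by
      have hz : ∀ᶠ z in 𝓝 (deriv (V (-1)) 0), z < (0:ℝ) := by
        rw [(hic (-1)).2]
        filter_upwards [Iio_mem_nhds (by norm_num : (-1:ℝ) < 0)] with z hz using hz
      exact c1.eventually hz
    have e2 : ∀ᶠ s in 𝓝 (0:ℝ), V (-1) s < -1 := by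
      have hz : ∀ᶠ z in 𝓝 (V (-1) 0), z < (-1:ℝ) := by
        rw [(hic (-1)).1]
        filter_upwards [Iio_mem_nhds hm] with z hz using hz
      exact c2.eventually hz
    obtain ⟨δ, hδ, hball⟩ := Metric.eventually_nhds_iff.mp (e1.and e2)
    refine ⟨δ/2, by linarith, ?_, ?_⟩
    · refine (hball ?_).1
      rw [Real.dist_eq, sub_zero, abs_of_pos (by linarith)]
      linarith
    · intro s hs
      refine (hball ?_).2
      rw [Real.dist_eq, sub_zero, abs_of_nonneg hs.1]
      linarith [hs.2]
  -- Op is nonempty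
  have hOp_ne : Op.Nonempty := by
    set np : ℝ := (3 - m) * Real.exp 3 with hnp
    refine ⟨np, 1, one_pos, ?_⟩
    set g : ℝ → ℝ := fun t => Real.exp (3*t) * deriv (V np) t + (2/3) * Real.exp (3*t) with hg
    have hg' : ∀ t : ℝ, 0 ≤ t → HasDerivAt g
        (Real.exp (3*t) * 3 * deriv (V np) t + Real.exp (3*t) * deriv (deriv (V np)) t
          + (2/3) * (Real.exp (3*t) * 3)) t := by
      intro t ht
      have he : HasDerivAt (fun t : ℝ => Real.exp (3*t)) (Real.exp (3*t) * 3) t := by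
        simpa using HasDerivAt.exp ((hasDerivAt_id t).const_mul 3)
      have h1 := he.mul (hdiff np t ht).2.hasDerivAt
      have h2 := he.const_mul (2/3 : ℝ)
      exact h1.add h2
    have hgmono : MonotoneOn g (Ici (0:ℝ)) := by
      apply monotoneOn_of_deriv_nonneg (convex_Ici 0)
      · intro s hs
        exact ((hg' s hs).differentiableAt.continuousAt).continuousWithinAt
      · intro s hs
        rw [interior_Ici] at hs
        exact (hg' s hs.le).differentiableAt.differentiableWithinAt
      · intro s hs
        rw [interior_Ici] at hs
        rw [(hg' s hs.le).deriv]
        have hode' := hode np s hs.le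
        have hP : 0 ≤ Real.exp (3*s) * (deriv (deriv (V np)) s + 3 * deriv (V np) s + 2) := by
          rw [hode']
          exact mul_nonneg (Real.exp_pos _).le (by linarith [hRlb (V np s)])
        nlinarith [hP]
    have hg0 : g 0 = np + 2/3 := by
      rw [hg]
      simp only
      rw [mul_zero, Real.exp_zero, (hic np).2]
      ring
    have hgle : ∀ t ∈ Icc (0:ℝ) 1, np + 2/3 ≤ g t := by
      intro t htI
      have := hgmono self_mem_Ici (mem_Ici.2 htI.1) htI.1
      rwa [hg0] at this
    obtain ⟨c, hc⟩ : ∃ c : ℝ, c = (np + 2/3) * (Real.exp 3)⁻¹ - 2/3 := ⟨_, rfl⟩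
    have hexp3 : (0:ℝ) < Real.exp 3 := Real.exp_pos 3
    have hmain : 3 - m ≤ (np + 2/3) * (Real.exp 3)⁻¹ := by
      rw [hnp]
      have h1 : (3 - m) * Real.exp 3 * (Real.exp 3)⁻¹ = 3 - m := by field_simp
      have h2 : (0:ℝ) < (Real.exp 3)⁻¹ := inv_pos.2 hexp3
      nlinarith
    have hc0 : 0 < c := by rw [hc]; nlinarith
    have hderiv_lb : ∀ t ∈ Icc (0:ℝ) 1, c ≤ deriv (V np) t := by
      intro t htI
      have h1 := hgle t htI
      have hexp_le : Real.exp (3*t) ≤ Real.exp 3 := Real.exp_le_exp.2 (by linarith [htI.2])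
      have hexp_pos : (0:ℝ) < Real.exp (3*t) := Real.exp_pos _
      by_contra hcon
      push_neg at hcon
      have k1 : Real.exp (3*t) * deriv (V np) t < Real.exp (3*t) * c :=
        mul_lt_mul_of_pos_left hcon hexp_pos
      have k2 : Real.exp (3*t) * c ≤ Real.exp 3 * c := mul_le_mul_of_nonneg_right hexp_le hc0.le
      have k3 : Real.exp 3 * c = (np + 2/3) - (2/3) * Real.exp 3 := by
        rw [hc]; field_simp
      have k4 : (2/3) * Real.exp (3*t) ≤ (2/3) * Real.exp 3 := by linarith
      simp only [hg] at h1
      linarith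
    have hVlow : ∀ t ∈ Icc (0:ℝ) 1, m + c * t ≤ V np t := by
      intro t htI
      set h : ℝ → ℝ := fun t => V np t - c * t with hh
      have hdh : ∀ s : ℝ, 0 ≤ s → HasDerivAt h (deriv (V np) s - c) s := by
        intro s hs
        exact (hdiff np s hs).1.hasDerivAt.sub (by simpa using (hasDerivAt_id s).const_mul c)
      have hmono : MonotoneOn h (Icc (0:ℝ) 1) := by
        apply monotoneOn_of_deriv_nonneg (convex_Icc 0 1)
        · intro s hs
          exact ((hdh s hs.1).differentiableAt.continuousAt).continuousWithinAt
        · intro s hs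
          rw [interior_Icc] at hs
          exact (hdh s hs.1.le).differentiableAt.differentiableWithinAt
        · intro s hs
          rw [interior_Icc] at hs
          rw [(hdh s hs.1.le).deriv]
          have := hderiv_lb s ⟨hs.1.le, hs.2.le⟩
          linarith
      have := hmono (left_mem_Icc.2 zero_le_one) htI htI.1
      have hh0 : h 0 = m := by rw [hh]; simp [(hic np).1]
      rw [hh0] at this
      rw [hh] at this
      simp only at this
      linarith
    have := hVlow 1 ⟨zero_le_one, le_rfl⟩
    have hcge : 3 - m - 2/3 ≤ c := by rw [hc]; linarith
    have : -1 < V np 1 := by linarith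
    exact this
  -- final assembly
  refine ⟨?_, ?_, ?_⟩
  · rw [← isOpen_compl_iff, hcompl]
    exact hOp_open.union hOm_open
  · by_contra hne
    rw [not_nonempty_iff_eq_empty] at hne
    have hcover : Op ∪ Om = univ := by rw [← hcompl, hne, compl_empty]
    obtain ⟨n1, hn1⟩ := hOp_ne
    obtain ⟨n2, hn2⟩ := hOm_ne
    obtain ⟨n, -, hn⟩ := isPreconnected_univ (u := Op) (v := Om) hOp_open hOm_open
      (by rw [hcover]) ⟨n1, mem_univ n1, hn1⟩ ⟨n2, mem_univ n2, hn2⟩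
    exact hdisj n hn.1 hn.2
  · intro n hn t ht
    have h1 := (hn t ht).2
    rcases lt_or_eq_of_le h1 with h | h
    · exact h
    exfalso
    have hlm : IsLocalMax (V n) t := by
      filter_upwards [Ioi_mem_nhds ht] with u hu
      rw [h]
      exact (hn u hu).2
    exact absurd hlm.deriv_eq_zero (ne_of_gt (hn t ht).1)
end

section
/- Fix m < -1 and for each n ∈ ℝ let V(·; n) : [0, ∞) → ℝ be the unique solution of V'' + 3V' = R(V), V(0) = m, V'(0) = n, and let β⁰ = {n : V'(t; n) > 0 and V(t; n) ≤ -1 for all t > 0}. Then β⁰ consists of exactly one point; that is, there is a unique shooting slope n for which the solution is increasing and stays ≤ -1 for all t > 0. -/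
open Real Filter Set

lemma aux_sub_exp_strictMono : StrictMonoOn (fun x : ℝ => x - Real.exp x) (Set.Iic (0:ℝ)) := by
  apply strictMonoOn_of_deriv_pos (convex_Iic 0)
  · exact (continuous_id.sub Real.continuous_exp).continuousOn
  · intro x hx
    rw [interior_Iic, mem_Iio] at hx
    have h : deriv (fun x : ℝ => x - Real.exp x) x = 1 - Real.exp x := by
      simp
    rw [h]
    have := Real.exp_lt_one_iff.mpr hx
    linarith

lemma aux_psi {a b : ℝ} (ha : 0 < a) (hab : a ≤ b) (hb : b ≤ 1) :
    2*(2 - a - b)*(b - a) ≤ 4*(Real.log b - Real.log a - (b - a)) := by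
  set ψ : ℝ → ℝ := fun x => 4*(Real.log x - Real.log a - (x - a)) - 2*((2 - a - x)*(x - a)) with hψ
  have hder : ∀ x : ℝ, 0 < x → HasDerivAt ψ (4*(x-1)^2/x) x := by
    intro x hx0
    have h1 : HasDerivAt (fun x : ℝ => Real.log x - Real.log a - (x - a)) (1/x - 1) x := by
      have := (Real.hasDerivAt_log (ne_of_gt hx0)).sub_const (Real.log a)
      rw [one_div]; exact this.sub ((hasDerivAt_id x).sub_const a)
    have h2 : HasDerivAt (fun x : ℝ => (2 - a - x)*(x - a)) ((-1)*(x-a) + (2-a-x)*1) x := by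
      exact (((hasDerivAt_id x).const_sub (2-a))).mul ((hasDerivAt_id x).sub_const a)
    have h3 := (h1.const_mul 4).sub (h2.const_mul 2)
    have he : 4*(1/x - 1) - 2*((-1)*(x-a) + (2-a-x)*1) = 4*(x-1)^2/x := by
      field_simp; ring
    rw [he] at h3
    exact h3
  have key : MonotoneOn ψ (Set.Icc a 1) := by
    apply monotoneOn_of_deriv_nonneg (convex_Icc a 1)
    · intro x hx
      exact (hder x (lt_of_lt_of_le ha hx.1)).differentiableAt.continuousAt.continuousWithinAt
    · intro x hx
      rw [interior_Icc] at hx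
      exact ((hder x (lt_trans ha hx.1)).differentiableAt).differentiableWithinAt
    · intro x hx
      rw [interior_Icc] at hx
      have hx0 : 0 < x := lt_trans ha hx.1
      rw [(hder x hx0).deriv]
      positivity
  have h0 : ψ a = 0 := by simp [hψ]
  have hb' := key (Set.mem_Icc.mpr ⟨le_refl a, le_trans hab hb⟩) (Set.mem_Icc.mpr ⟨hab, hb⟩) hab
  rw [h0] at hb'
  have : 0 ≤ 4*(Real.log b - Real.log a - (b - a)) - 2*((2 - a - b)*(b - a)) := hb'
  linarith
section Rfacts
variable {Q R : ℝ → ℝ}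
  (hQ : ∀ v : ℝ, v < -1 → Q v < 0 ∧ Q v - Real.exp (Q v) = v)
  (hR : ∀ v : ℝ, R v = if v < -1 then -2 * (1 - Real.exp (Q v)) ^ 2 else 4 * (v + 1))

include hQ hR

lemma R_neg {v : ℝ} (hv : v < -1) : R v < 0 := by
  rw [hR v, if_pos hv]
  have h1 := (hQ v hv).1
  have h2 : Real.exp (Q v) < 1 := Real.exp_lt_one_iff.mpr h1
  nlinarith

lemma R_lb_s10 {v : ℝ} (hv : v ≤ -1) : -2 ≤ R v := by
  rcases lt_or_eq_of_le hv with h | h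
  · rw [hR v, if_pos h]
    have h1 := (hQ v h).1
    have h2 : Real.exp (Q v) < 1 := Real.exp_lt_one_iff.mpr h1
    have h3 : 0 < Real.exp (Q v) := Real.exp_pos _
    nlinarith
  · subst h; rw [hR]; norm_num

lemma Q_mono {v₁ v₂ : ℝ} (h1 : v₁ < -1) (h2 : v₂ < -1) (h : v₁ ≤ v₂) : Q v₁ ≤ Q v₂ := by
  by_contra hc
  push_neg at hc
  have := aux_sub_exp_strictMono (le_of_lt (hQ v₂ h2).1) (le_of_lt (hQ v₁ h1).1) hc
  simp only at this
  rw [(hQ v₁ h1).2, (hQ v₂ h2).2] at this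
  linarith

lemma R_mono {v₁ v₂ : ℝ} (h : v₁ ≤ v₂) : R v₁ ≤ R v₂ := by
  by_cases h1 : v₁ < -1
  · by_cases h2 : v₂ < -1
    · rw [hR v₁, if_pos h1, hR v₂, if_pos h2]
      have hq := Q_mono hQ hR h1 h2 h
      have ha : Real.exp (Q v₁) ≤ Real.exp (Q v₂) := Real.exp_le_exp.mpr hq
      have hb : Real.exp (Q v₂) < 1 := Real.exp_lt_one_iff.mpr (hQ v₂ h2).1
      have hc : 0 < Real.exp (Q v₁) := Real.exp_pos _
      nlinarith
    · have := R_neg hQ hR h1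
      rw [hR v₂, if_neg h2]
      push_neg at h2
      linarith
  · push_neg at h1
    rw [hR v₁, if_neg (not_lt.mpr h1), hR v₂, if_neg (not_lt.mpr (le_trans h1 h))]
    linarith

lemma R_lip_s10 {v₁ v₂ : ℝ} (h : v₁ ≤ v₂) : R v₂ - R v₁ ≤ 4 * (v₂ - v₁) := by
  by_cases h1 : v₁ < -1
  · set a := Real.exp (Q v₁) with hadef
    have hq1 := hQ v₁ h1
    have ha0 : 0 < a := Real.exp_pos _
    have ha1 : a < 1 := Real.exp_lt_one_iff.mpr hq1.1
    have hla : Real.log a = Q v₁ := Real.log_exp _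
    have hv1 : Real.log a - a = v₁ := by rw [hla]; exact hq1.2
    by_cases h2 : v₂ < -1
    · set b := Real.exp (Q v₂) with hbdef
      have hq2 := hQ v₂ h2
      have hb1 : b < 1 := Real.exp_lt_one_iff.mpr hq2.1
      have hlb : Real.log b = Q v₂ := Real.log_exp _
      have hv2 : Real.log b - b = v₂ := by rw [hlb]; exact hq2.2
      have hab : a ≤ b := Real.exp_le_exp.mpr (Q_mono hQ hR h1 h2 h)
      have key := aux_psi ha0 hab (le_of_lt hb1)
      rw [hR v₁, if_pos h1, hR v₂, if_pos h2, ← hadef, ← hbdef]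
      nlinarith [key, hv1, hv2]
    · push_neg at h2
      have key := aux_psi ha0 (le_of_lt ha1) (le_refl 1)
      rw [Real.log_one] at key
      rw [hR v₁, if_pos h1, hR v₂, if_neg (not_lt.mpr h2), ← hadef]
      nlinarith [key, hv1]
  · push_neg at h1
    rw [hR v₁, if_neg (not_lt.mpr h1), hR v₂, if_neg (not_lt.mpr (le_trans h1 h))]
    linarith

lemma R_abs_lip (v₁ v₂ : ℝ) : |R v₂ - R v₁| ≤ 4 * |v₂ - v₁| := by
  rcases le_total v₁ v₂ with h | h
  · rw [abs_of_nonneg (by linarith [R_mono hQ hR h]), abs_of_nonneg (by linarith)]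
    exact R_lip_s10 hQ hR h
  · rw [abs_of_nonpos (by linarith [R_mono hQ hR h]), abs_of_nonpos (by linarith)]
    linarith [R_lip_s10 hQ hR h]

lemma R_neg_one : R (-1) = 0 := by rw [hR]; norm_num

end Rfacts
section helpers

lemma monoOn_aux {f g : ℝ → ℝ} {c d : ℝ} (hc : 0 ≤ c)
    (hf : ∀ t, 0 ≤ t → HasDerivAt f (g t) t)
    (hg : ∀ t, c < t → t < d → 0 ≤ g t) : MonotoneOn f (Set.Icc c d) := by
  apply monotoneOn_of_deriv_nonneg (convex_Icc c d)
  · intro x hx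
    exact (hf x (le_trans hc hx.1)).differentiableAt.continuousAt.continuousWithinAt
  · intro x hx
    rw [interior_Icc] at hx
    exact (hf x (le_trans hc hx.1.le)).differentiableAt.differentiableWithinAt
  · intro x hx
    rw [interior_Icc] at hx
    rw [(hf x (le_trans hc hx.1.le)).deriv]
    exact hg x hx.1 hx.2

lemma antiOn_aux {f g : ℝ → ℝ} {c d : ℝ} (hc : 0 ≤ c)
    (hf : ∀ t, 0 ≤ t → HasDerivAt f (g t) t)
    (hg : ∀ t, c < t → t < d → g t ≤ 0) : AntitoneOn f (Set.Icc c d) := by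
  apply antitoneOn_of_deriv_nonpos (convex_Icc c d)
  · intro x hx
    exact (hf x (le_trans hc hx.1)).differentiableAt.continuousAt.continuousWithinAt
  · intro x hx
    rw [interior_Icc] at hx
    exact (hf x (le_trans hc hx.1.le)).differentiableAt.differentiableWithinAt
  · intro x hx
    rw [interior_Icc] at hx
    rw [(hf x (le_trans hc hx.1.le)).deriv]
    exact hg x hx.1 hx.2

lemma strictMonoOn_aux {f g : ℝ → ℝ} {c d : ℝ} (hc : 0 ≤ c)
    (hf : ∀ t, 0 ≤ t → HasDerivAt f (g t) t)
    (hg : ∀ t, c < t → t < d → 0 < g t) : StrictMonoOn f (Set.Icc c d) := by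
  apply strictMonoOn_of_deriv_pos (convex_Icc c d)
  · intro x hx
    exact (hf x (le_trans hc hx.1)).differentiableAt.continuousAt.continuousWithinAt
  · intro x hx
    rw [interior_Icc] at hx
    rw [(hf x (le_trans hc hx.1.le)).deriv]
    exact hg x hx.1 hx.2

lemma strictAntiOn_aux {f g : ℝ → ℝ} {c d : ℝ} (hc : 0 ≤ c)
    (hf : ∀ t, 0 ≤ t → HasDerivAt f (g t) t)
    (hg : ∀ t, c < t → t < d → g t < 0) : StrictAntiOn f (Set.Icc c d) := by
  apply strictAntiOn_of_deriv_neg (convex_Icc c d)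
  · intro x hx
    exact (hf x (le_trans hc hx.1)).differentiableAt.continuousAt.continuousWithinAt
  · intro x hx
    rw [interior_Icc] at hx
    rw [(hf x (le_trans hc hx.1.le)).deriv]
    exact hg x hx.1 hx.2

/-- first time a continuous function becomes nonpositive, after anchor `a`. -/
lemma first_time {h : ℝ → ℝ} {a t₀ : ℝ} (ha : 0 ≤ a)
    (hcont : ∀ t, a ≤ t → ContinuousAt h t)
    (ht₀ : a ≤ t₀) (hneg : h t₀ ≤ 0) :
    ∃ t₁, a ≤ t₁ ∧ t₁ ≤ t₀ ∧ h t₁ ≤ 0 ∧ ∀ s, a < s → s < t₁ → 0 < h s := by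
  classical
  by_cases h0 : h a ≤ 0
  · exact ⟨a, le_refl a, ht₀, h0, fun s hs hs' => absurd (lt_trans hs hs') (lt_irrefl _)⟩
  push_neg at h0
  have hta : a < t₀ := by
    rcases lt_or_eq_of_le ht₀ with h | h
    · exact h
    · exfalso; rw [← h] at hneg; linarith
  set B := {t | a < t ∧ h t ≤ 0} with hB
  have hne : B.Nonempty := ⟨t₀, hta, hneg⟩
  have hbd : BddBelow B := ⟨a, fun t ht => le_of_lt ht.1⟩
  set t₁ := sInf B with ht₁
  have h1 : a ≤ t₁ := le_csInf hne (fun t ht => le_of_lt ht.1)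
  have h2 : t₁ ≤ t₀ := csInf_le hbd ⟨hta, hneg⟩
  refine ⟨t₁, h1, h2, ?_, ?_⟩
  · by_contra hc
    push_neg at hc
    have hev : ∀ᶠ s in nhds t₁, 0 < h s := (hcont t₁ h1).eventually (eventually_gt_nhds hc)
    rw [Metric.eventually_nhds_iff] at hev
    obtain ⟨ε, hε, hball⟩ := hev
    have : t₁ + ε ≤ t₁ := by
      apply le_csInf hne
      intro t ht
      by_contra hct
      push_neg at hct
      have htt : t₁ ≤ t := csInf_le hbd ht
      have : dist t t₁ < ε := by
        rw [Real.dist_eq, abs_of_nonneg (by linarith)]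
        linarith
      exact absurd ht.2 (not_le.mpr (hball this))
    linarith
  · intro s hs hs'
    by_contra hc
    push_neg at hc
    have : t₁ ≤ s := csInf_le hbd ⟨hs, hc⟩
    linarith

end helpers
/-- For fixed `m < -1` and the shooting family `V(·; n)` solving
`V'' + 3V' = R(V)`, `V(0) = m`, `V'(0) = n`, the set
`β⁰ = {n : ∀ t > 0, V'(t;n) > 0 ∧ V(t;n) ≤ -1}` is a single point set:
the correct shooting datum is unique. -/
theorem shooting_set_zero_singleton
    (Q R : ℝ → ℝ)
    (hQ : ∀ v : ℝ, v < -1 → Q v < 0 ∧ Q v - Real.exp (Q v) = v)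
    (hR : ∀ v : ℝ, R v = if v < -1 then -2 * (1 - Real.exp (Q v)) ^ 2 else 4 * (v + 1))
    (m : ℝ) (hm : m < -1)
    (V : ℝ → ℝ → ℝ)
    (hdiff : ∀ n : ℝ, ∀ t : ℝ, 0 ≤ t →
      DifferentiableAt ℝ (V n) t ∧ DifferentiableAt ℝ (deriv (V n)) t)
    (hode : ∀ n : ℝ, ∀ t : ℝ, 0 ≤ t →
      deriv (deriv (V n)) t + 3 * deriv (V n) t = R (V n t))
    (hic : ∀ n : ℝ, V n 0 = m ∧ deriv (V n) 0 = n)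
    (B0 : Set ℝ)
    (hB0 : B0 = {n : ℝ | ∀ t > 0, 0 < deriv (V n) t ∧ V n t ≤ -1}) :
    ∃! n : ℝ, n ∈ B0 := by
  classical
  have hVm : ∀ n : ℝ, V n 0 = m := fun n => (hic n).1
  have hV'n : ∀ n : ℝ, deriv (V n) 0 = n := fun n => (hic n).2
  -- the vector field
  have hFlip : LipschitzWith 7 (fun p : ℝ × ℝ => ((p.2, R p.1 - 3*p.2) : ℝ × ℝ)) := by
    apply LipschitzWith.of_dist_le_mul
    intro p q
    have hc : ((7 : NNReal) : ℝ) = 7 := by norm_num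
    rw [hc, Prod.dist_eq]
    have h1 : dist p.1 q.1 ≤ dist p q := by rw [Prod.dist_eq]; exact le_max_left _ _
    have h2 : dist p.2 q.2 ≤ dist p q := by rw [Prod.dist_eq]; exact le_max_right _ _
    have hd : (0:ℝ) ≤ dist p q := dist_nonneg
    apply max_le (by simpa using le_trans h2 (by nlinarith))
    have hlip := R_abs_lip hQ hR q.1 p.1
    rw [Real.dist_eq] at h1 h2 ⊢
    have key : R p.1 - 3*p.2 - (R q.1 - 3*q.2) = (R p.1 - R q.1) + 3*(q.2 - p.2) := by ring
    simp only []
    calc |R p.1 - 3*p.2 - (R q.1 - 3*q.2)| = |(R p.1 - R q.1) + 3*(q.2 - p.2)| := by rw [key]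
      _ ≤ |R p.1 - R q.1| + |3*(q.2 - p.2)| := abs_add_le _ _
      _ = |R p.1 - R q.1| + 3*|q.2 - p.2| := by rw [abs_mul]; norm_num
      _ ≤ 4*|p.1 - q.1| + 3*|p.2 - q.2| := by rw [abs_sub_comm q.2 p.2]; linarith
      _ ≤ 7 * dist p q := by nlinarith
  -- trajectories
  have hW : ∀ n t, 0 ≤ t → HasDerivAt (fun s => ((V n s, deriv (V n) s) : ℝ × ℝ))
      ((deriv (V n) t, R (V n t) - 3 * deriv (V n) t) : ℝ × ℝ) t := by
    intro n t ht
    have h1 := (hdiff n t ht).1.hasDerivAt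
    have h2 := (hdiff n t ht).2.hasDerivAt
    have he : deriv (deriv (V n)) t = R (V n t) - 3 * deriv (V n) t := by
      linarith [hode n t ht]
    rw [he] at h2
    exact h1.prodMk h2
  -- Gronwall estimate
  have gron : ∀ n₁ n₂ T : ℝ, 0 ≤ T →
      dist ((V n₁ T, deriv (V n₁) T) : ℝ × ℝ) ((V n₂ T, deriv (V n₂) T) : ℝ × ℝ)
        ≤ dist n₁ n₂ * Real.exp (7*T) := by
    intro n₁ n₂ T hT
    have key := dist_le_of_trajectories_ODE
      (v := fun _ p => ((p.2, R p.1 - 3*p.2) : ℝ × ℝ)) (K := 7)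
      (f := fun s => ((V n₁ s, deriv (V n₁) s) : ℝ × ℝ))
      (g := fun s => ((V n₂ s, deriv (V n₂) s) : ℝ × ℝ))
      (a := 0) (b := T) (δ := dist n₁ n₂)
      (fun _ => hFlip)
      (fun t ht => (hW n₁ t ht.1).continuousAt.continuousWithinAt)
      (fun t ht => (hW n₁ t ht.1).hasDerivWithinAt)
      (fun t ht => (hW n₂ t ht.1).continuousAt.continuousWithinAt)
      (fun t ht => (hW n₂ t ht.1).hasDerivWithinAt)
      (by
        show dist ((V n₁ 0, deriv (V n₁) 0) : ℝ × ℝ) ((V n₂ 0, deriv (V n₂) 0) : ℝ × ℝ) ≤ dist n₁ n₂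
        rw [Prod.dist_eq, hVm n₁, hVm n₂, hV'n n₁, hV'n n₂]
        simp [dist_self, dist_nonneg])
      T (by constructor <;> simp [hT])
    have hc : ((7 : NNReal) : ℝ) = 7 := by norm_num
    rw [hc] at key
    simpa using key
  have gronV : ∀ n₁ n₂ T : ℝ, 0 ≤ T →
      |V n₁ T - V n₂ T| ≤ |n₁ - n₂| * Real.exp (7*T) := by
    intro n₁ n₂ T hT
    have := gron n₁ n₂ T hT
    rw [Prod.dist_eq] at this
    have h := le_trans (le_max_left (dist (V n₁ T) (V n₂ T)) _) this
    rwa [Real.dist_eq, Real.dist_eq] at h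
  have gronV' : ∀ n₁ n₂ T : ℝ, 0 ≤ T →
      |deriv (V n₁) T - deriv (V n₂) T| ≤ |n₁ - n₂| * Real.exp (7*T) := by
    intro n₁ n₂ T hT
    have := gron n₁ n₂ T hT
    rw [Prod.dist_eq] at this
    have h := le_trans (le_max_right (dist (V n₁ T) (V n₂ T)) _) this
    rwa [Real.dist_eq, Real.dist_eq] at h
  -- derivative of e^{3t} V'
  have hE : ∀ n t, 0 ≤ t → HasDerivAt (fun s => Real.exp (3*s) * deriv (V n) s)
      (Real.exp (3*t) * R (V n t)) t := by
    intro n t ht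
    have h2 := (hdiff n t ht).2.hasDerivAt
    have hl : HasDerivAt (fun s : ℝ => 3*s) 3 t := by
      simpa using (hasDerivAt_id t).const_mul 3
    have hexp := hl.exp
    have key := hexp.mul h2
    have key' : HasDerivAt (fun s => Real.exp (3*s) * deriv (V n) s) _ t := key
    convert key' using 1
    have he : deriv (deriv (V n)) t = R (V n t) - 3*deriv (V n) t := by
      linarith [hode n t ht]
    rw [he]; ring
  -- backward uniqueness: trajectory cannot be at (-1, 0) at a positive time
  have huniq : ∀ n t₁ : ℝ, 0 < t₁ → V n t₁ = -1 → deriv (V n) t₁ = 0 → False := by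
    intro n t₁ ht₁ hv1 hv2
    have key := ODE_solution_unique_of_mem_Icc_left
      (v := fun _ p => ((p.2, R p.1 - 3*p.2) : ℝ × ℝ)) (K := 7)
      (s := fun _ => (Set.univ : Set (ℝ × ℝ)))
      (f := fun s => ((V n s, deriv (V n) s) : ℝ × ℝ))
      (g := fun _ => (((-1 : ℝ), (0 : ℝ)) : ℝ × ℝ))
      (a := 0) (b := t₁)
      (fun _ _ => hFlip.lipschitzOnWith)
      (fun t ht => (hW n t ht.1).continuousAt.continuousWithinAt)
      (fun t ht => (hW n t ht.1.le).hasDerivWithinAt)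
      (fun _ _ => trivial)
      continuousOn_const
      (fun t ht => by
        have : (((fun _ p => ((p.2, R p.1 - 3*p.2) : ℝ × ℝ)) : ℝ → ℝ × ℝ → ℝ × ℝ) t ((-1 : ℝ), (0:ℝ))) = (0 : ℝ × ℝ) := by
          simp [R_neg_one hQ hR]
        refine HasDerivWithinAt.congr_deriv ?_ this.symm
        exact (hasDerivWithinAt_const _ _ _)
      )
      (fun _ _ => trivial)
      (by
        show ((V n t₁, deriv (V n) t₁) : ℝ × ℝ) = ((-1 : ℝ), (0 : ℝ))
        rw [hv1, hv2])
    have h0 : ((V n 0, deriv (V n) 0) : ℝ × ℝ) = ((-1 : ℝ), (0:ℝ)) :=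
      key (Set.mem_Icc.mpr ⟨le_refl 0, ht₁.le⟩)
    have : V n 0 = -1 := congrArg Prod.fst h0
    rw [hVm n] at this
    linarith
  have hVc : ∀ n t : ℝ, 0 ≤ t → ContinuousAt (V n) t := fun n t ht => (hdiff n t ht).1.continuousAt
  have hV'c : ∀ n t : ℝ, 0 ≤ t → ContinuousAt (deriv (V n)) t := fun n t ht => (hdiff n t ht).2.continuousAt
  -- claim b : a trajectory in B0 is not bounded away from -1
  have claimb : ∀ n : ℝ, (∀ t > 0, 0 < deriv (V n) t ∧ V n t ≤ -1) →
      ∀ c : ℝ, c < -1 → ¬ (∀ t : ℝ, 0 ≤ t → V n t ≤ c) := by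
    intro n hn c hc hall
    set r := R c with hr
    have hrneg : r < 0 := R_neg hQ hR hc
    have hφ : ∀ t : ℝ, 0 ≤ t → HasDerivAt
        (fun s => 3 * (Real.exp (3*s) * deriv (V n) s) - r * Real.exp (3*s))
        (3 * (Real.exp (3*t) * R (V n t)) - r * (Real.exp (3*t) * 3)) t := by
      intro t ht
      have h1 := (hE n t ht).const_mul 3
      have hl : HasDerivAt (fun s : ℝ => 3*s) 3 t := by simpa using (hasDerivAt_id t).const_mul 3
      have h2 := (hl.exp).const_mul r
      exact h1.sub h2
    set T' := max 1 ((n + 1)/(-r) + 1) with hT'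
    have hT'0 : (0:ℝ) < T' := lt_of_lt_of_le one_pos (le_max_left _ _)
    have hanti : AntitoneOn (fun s => 3 * (Real.exp (3*s) * deriv (V n) s) - r * Real.exp (3*s))
        (Set.Icc 0 T') := by
      apply antiOn_aux (le_refl 0) hφ
      intro t ht _
      have hVt : V n t ≤ c := hall t ht.le
      have hmono := R_mono hQ hR hVt
      have he := Real.exp_pos (3*t)
      nlinarith
    have hkey := hanti (Set.mem_Icc.mpr ⟨le_refl 0, hT'0.le⟩)
      (Set.mem_Icc.mpr ⟨hT'0.le, le_refl T'⟩) hT'0.le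
    simp only [mul_zero, Real.exp_zero, mul_one, one_mul] at hkey
    rw [hV'n n] at hkey
    -- hkey : 3 * (exp (3T') * deriv T') - r * exp (3T') ≤ 3 * n - r
    have hexp : 3*T' + 1 ≤ Real.exp (3*T') := Real.add_one_le_exp _
    have hTT : (n+1)/(-r) + 1 ≤ T' := le_max_right _ _
    have hrT : r * T' ≤ -(n+1) + r := by
      have h0 : (0:ℝ) < -r := by linarith
      have h1 : (n+1)/(-r) ≤ T' - 1 := by linarith
      have h2 := (div_le_iff₀ h0).mp h1
      nlinarith
    have hpos := (hn T' hT'0).1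
    have hepos := Real.exp_pos (3*T')
    have hmix : 0 ≤ (-r) * (Real.exp (3*T') - (3*T'+1)) :=
      mul_nonneg (by linarith) (by linarith)
    nlinarith [mul_pos hepos hpos]
  -- the two open sets
  set Sp : Set ℝ := {n | ∃ t : ℝ, 0 ≤ t ∧ -1 < V n t} with hSpdef
  set Sm : Set ℝ := {n | ∃ t : ℝ, 0 < t ∧ deriv (V n) t < 0 ∧ ∀ s ∈ Set.Icc 0 t, V n s < -1}
    with hSmdef
  have hSpOpen : IsOpen Sp := by
    rw [Metric.isOpen_iff]
    rintro n₀ ⟨t, ht, hgt⟩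
    refine ⟨(V n₀ t + 1)/Real.exp (7*t), div_pos (by linarith) (Real.exp_pos _), ?_⟩
    intro n hn
    rw [Metric.mem_ball, Real.dist_eq] at hn
    have h := gronV n n₀ t ht
    have hexp := Real.exp_pos (7*t)
    have habs : |V n t - V n₀ t| < V n₀ t + 1 := by
      calc |V n t - V n₀ t| ≤ |n - n₀| * Real.exp (7*t) := h
        _ < ((V n₀ t + 1)/Real.exp (7*t)) * Real.exp (7*t) := mul_lt_mul_of_pos_right hn hexp
        _ = V n₀ t + 1 := by field_simp
    have := abs_lt.mp habs
    exact ⟨t, ht, by linarith [this.1]⟩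
  have hSmOpen : IsOpen Sm := by
    rw [Metric.isOpen_iff]
    rintro n₀ ⟨τ, hτ, hd, hless⟩
    obtain ⟨s₀, hs₀mem, hs₀max⟩ := isCompact_Icc.exists_isMaxOn
      (Set.nonempty_Icc.mpr hτ.le) (fun s hs => (hVc n₀ s hs.1).continuousWithinAt)
    set δ := min (-1 - V n₀ s₀) (-(deriv (V n₀) τ)) with hδ
    have hδ1 : 0 < -1 - V n₀ s₀ := by have := hless s₀ hs₀mem; linarith
    have hδpos : 0 < δ := lt_min hδ1 (by linarith)
    refine ⟨δ/Real.exp (7*τ), by positivity, ?_⟩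
    intro n hn
    rw [Metric.mem_ball, Real.dist_eq] at hn
    have hgap : ∀ s ∈ Set.Icc (0:ℝ) τ, |V n s - V n₀ s| < δ := by
      intro s hs
      calc |V n s - V n₀ s| ≤ |n - n₀| * Real.exp (7*s) := gronV n n₀ s hs.1
        _ ≤ |n - n₀| * Real.exp (7*τ) :=
            mul_le_mul_of_nonneg_left (Real.exp_le_exp.mpr (by linarith [hs.2])) (abs_nonneg _)
        _ < (δ/Real.exp (7*τ)) * Real.exp (7*τ) := mul_lt_mul_of_pos_right hn (Real.exp_pos _)
        _ = δ := by field_simp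
    have hgap' : |deriv (V n) τ - deriv (V n₀) τ| < δ := by
      calc |deriv (V n) τ - deriv (V n₀) τ| ≤ |n - n₀| * Real.exp (7*τ) := gronV' n n₀ τ hτ.le
        _ < (δ/Real.exp (7*τ)) * Real.exp (7*τ) := mul_lt_mul_of_pos_right hn (Real.exp_pos _)
        _ = δ := by field_simp
    refine ⟨τ, hτ, ?_, ?_⟩
    · have h1 := (abs_lt.mp hgap').2
      have h2 : δ ≤ -(deriv (V n₀) τ) := min_le_right _ _
      linarith
    · intro s hs
      have h1 := (abs_lt.mp (hgap s hs)).2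
      have h2 : δ ≤ -1 - V n₀ s₀ := min_le_left _ _
      have h3 : V n₀ s ≤ V n₀ s₀ := hs₀max hs
      linarith
  -- Sm is nonempty
  have hSmNe : Sm.Nonempty := by
    refine ⟨-1, ?_⟩
    have hc1 : ∀ᶠ s in nhds (0:ℝ), deriv (V (-1)) s < 0 := by
      have h := hV'c (-1) 0 (le_refl 0)
      rw [ContinuousAt, hV'n (-1)] at h
      exact h.eventually (eventually_lt_nhds (by norm_num))
    have hc2 : ∀ᶠ s in nhds (0:ℝ), V (-1) s < -1 := by
      have h := hVc (-1) 0 (le_refl 0)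
      rw [ContinuousAt, hVm (-1)] at h
      exact h.eventually (eventually_lt_nhds hm)
    rw [Metric.eventually_nhds_iff] at hc1 hc2
    obtain ⟨ε₁, hε₁, hb₁⟩ := hc1
    obtain ⟨ε₂, hε₂, hb₂⟩ := hc2
    set ε := min ε₁ ε₂ with hε
    have hεpos : 0 < ε := lt_min hε₁ hε₂
    refine ⟨ε/2, by linarith, ?_, ?_⟩
    · apply hb₁
      rw [Real.dist_eq, sub_zero, abs_of_nonneg (by linarith)]
      have := min_le_left ε₁ ε₂
      linarith
    · intro s hs
      apply hb₂
      rw [Real.dist_eq, sub_zero, abs_of_nonneg hs.1]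
      have h1 := hs.2
      have := min_le_right ε₁ ε₂
      linarith
  -- Sp is nonempty
  have hSpNe : Sp.Nonempty := by
    set n := Real.exp 3 * (2/3 + 1 - m) with hndef
    refine ⟨n, ?_⟩
    by_contra hc
    rw [hSpdef, Set.mem_setOf_eq] at hc
    push_neg at hc
    have hVle : ∀ t : ℝ, 0 ≤ t → V n t ≤ -1 := fun t ht => hc t ht
    have hφ : ∀ t : ℝ, 0 ≤ t → HasDerivAt
        (fun s => 3 * (Real.exp (3*s) * deriv (V n) s) + 2 * Real.exp (3*s))
        (3 * (Real.exp (3*t) * R (V n t)) + 2 * (Real.exp (3*t) * 3)) t := by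
      intro t ht
      have h1 := (hE n t ht).const_mul 3
      have hl : HasDerivAt (fun s : ℝ => 3*s) 3 t := by simpa using (hasDerivAt_id t).const_mul 3
      have h2 := (hl.exp).const_mul 2
      exact h1.add h2
    have hmono : MonotoneOn (fun s => 3 * (Real.exp (3*s) * deriv (V n) s) + 2 * Real.exp (3*s))
        (Set.Icc 0 1) := by
      apply monoOn_aux (le_refl 0) hφ
      intro t ht _
      have hlb := R_lb_s10 hQ hR (hVle t ht.le)
      have he := Real.exp_pos (3*t)
      nlinarith
    have hV'lb : ∀ t : ℝ, 0 < t → t < 1 → (1 - m) ≤ deriv (V n) t := by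
      intro t h0 h1
      have hkey := hmono (Set.mem_Icc.mpr ⟨le_refl 0, by linarith⟩)
        (Set.mem_Icc.mpr ⟨h0.le, h1.le⟩) h0.le
      simp only [mul_zero, Real.exp_zero, mul_one, one_mul] at hkey
      rw [hV'n n] at hkey
      -- hkey : 3*n + 2 ≤ 3*(exp (3t) * deriv t) + 2 * exp (3t)
      have he1 : Real.exp (3*t) ≤ Real.exp 3 := Real.exp_le_exp.mpr (by linarith)
      have he0 : (1:ℝ) ≤ Real.exp (3*t) := by
        rw [show (1:ℝ) = Real.exp 0 by simp]
        exact Real.exp_le_exp.mpr (by linarith)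
      have hepos := Real.exp_pos (3*t)
      have hme : (0:ℝ) < 1 - m := by linarith
      -- 3 * exp(3t) * deriv ≥ 3n + 2 - 2exp(3t) ≥ 3n + 2 - 2exp 3 = 3*exp 3*(1-m) + 2 ≥ 3*exp(3t)*(1-m)
      have hn3 : 3*n + 2 - 2*Real.exp 3 = 3*Real.exp 3*(1-m) + 2 := by rw [hndef]; ring
      nlinarith [Real.exp_pos 3]
    have hψ : MonotoneOn (fun s => V n s - (1-m)*s) (Set.Icc 0 1) := by
      apply monoOn_aux (le_refl 0) (g := fun t => deriv (V n) t - (1-m))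
        (fun t ht => (hdiff n t ht).1.hasDerivAt.sub (by simpa using (hasDerivAt_id t).const_mul (1-m)))
      intro t h0 h1
      have := hV'lb t h0 h1
      linarith
    have hkey := hψ (Set.mem_Icc.mpr ⟨le_refl 0, zero_le_one⟩)
      (Set.mem_Icc.mpr ⟨zero_le_one, le_refl 1⟩) zero_le_one
    simp only [mul_zero, mul_one, sub_zero] at hkey
    rw [hVm n] at hkey
    have := hVle 1 zero_le_one
    linarith
  -- Sm and Sp are disjoint
  have hdisj : ∀ n, n ∈ Sm → n ∈ Sp → False := by
    rintro n ⟨τ, hτ, hd, hless⟩ ⟨t₂, ht₂, hgt⟩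
    have hτt₂ : τ < t₂ := by
      by_contra hcon
      push_neg at hcon
      exact absurd hgt (not_lt.mpr (hless t₂ ⟨ht₂, hcon⟩).le)
    obtain ⟨u, hu1, hu2, hu3, hu4⟩ := first_time (h := fun s => -1 - V n s) (a := τ) (t₀ := t₂)
      hτ.le (fun t ht => (continuousAt_const.sub (hVc n t (le_trans hτ.le ht))))
      hτt₂.le (by show -1 - V n t₂ ≤ 0; linarith)
    have hVτ : V n τ < -1 := hless τ ⟨hτ.le, le_refl τ⟩
    have huτ : τ < u := by
      rcases lt_or_eq_of_le hu1 with h | h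
      · exact h
      · exfalso
        rw [← h] at hu3
        linarith
    have hanti : AntitoneOn (fun s => Real.exp (3*s) * deriv (V n) s) (Set.Icc τ u) := by
      apply antiOn_aux hτ.le (fun t ht => hE n t ht)
      intro t h1 h2
      have hVt : V n t < -1 := by have := hu4 t h1 h2; beta_reduce at this; linarith
      have := R_neg hQ hR hVt
      nlinarith [Real.exp_pos (3*t)]
    have hV'neg : ∀ t, τ ≤ t → t < u → deriv (V n) t < 0 := by
      intro t h1 h2
      have hh : Real.exp (3*t) * deriv (V n) t ≤ Real.exp (3*τ) * deriv (V n) τ :=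
        hanti (Set.mem_Icc.mpr ⟨le_refl τ, by linarith⟩) (Set.mem_Icc.mpr ⟨h1, h2.le⟩) h1
      have he := Real.exp_pos (3*t)
      have hx1 : Real.exp (3*τ) * deriv (V n) τ < 0 := mul_neg_of_pos_of_neg (Real.exp_pos _) hd
      by_contra hcon0
      push_neg at hcon0
      have hx2 : (0:ℝ) ≤ Real.exp (3*t) * deriv (V n) t := mul_nonneg he.le hcon0
      linarith
    have hVanti : AntitoneOn (V n) (Set.Icc τ u) :=
      antiOn_aux hτ.le (fun t ht => (hdiff n t ht).1.hasDerivAt)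
        (fun t h1 h2 => (hV'neg t h1.le h2).le)
    have hfin : V n u ≤ V n τ := hVanti (Set.mem_Icc.mpr ⟨le_refl τ, huτ.le⟩)
      (Set.mem_Icc.mpr ⟨huτ.le, le_refl u⟩) huτ.le
    linarith
  -- covering
  have hcover : ∀ n, n ∉ Sp → n ∉ Sm → n ∈ B0 := by
    intro n hnp hnm
    rw [hB0]
    intro t ht
    have hVle : ∀ s : ℝ, 0 ≤ s → V n s ≤ -1 := by
      intro s hs
      by_contra hcon
      push_neg at hcon
      exact hnp ⟨s, hs, hcon⟩
    refine ⟨?_, hVle t ht.le⟩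
    by_contra hcon
    push_neg at hcon
    obtain ⟨t₁, h10, h1t, h1le, h1pos⟩ := first_time (h := deriv (V n)) (a := 0) (t₀ := t)
      (le_refl 0) (fun s hs => hV'c n s hs) ht.le hcon
    have hmono : MonotoneOn (V n) (Set.Icc 0 t₁) :=
      monoOn_aux (le_refl 0) (fun s hs => (hdiff n s hs).1.hasDerivAt)
        (fun s hs1 hs2 => (h1pos s hs1 hs2).le)
    have hVt₁ : V n t₁ ≤ -1 := hVle t₁ h10
    rcases lt_or_eq_of_le hVt₁ with hlt | heq
    · apply hnm
      have hev : ∀ᶠ s in nhds t₁, V n s < -1 := by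
        have h := hVc n t₁ h10
        rw [ContinuousAt] at h
        exact h.eventually (eventually_lt_nhds hlt)
      rw [Metric.eventually_nhds_iff] at hev
      obtain ⟨ε, hε, hball⟩ := hev
      obtain ⟨τ, hτdef⟩ : ∃ x : ℝ, x = t₁ + ε/2 := ⟨_, rfl⟩
      have hτpos : 0 < τ := by linarith
      have hstrict : StrictAntiOn (fun s => Real.exp (3*s) * deriv (V n) s) (Set.Icc t₁ τ) := by
        apply strictAntiOn_aux h10 (fun s hs => hE n s hs)
        intro s hs1 hs2
        have hVs : V n s < -1 := by
          apply hball
          rw [Real.dist_eq, abs_of_nonneg (by linarith)]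
          linarith
        have := R_neg hQ hR hVs
        nlinarith [Real.exp_pos (3*s)]
      have hEτ : Real.exp (3*τ) * deriv (V n) τ < Real.exp (3*t₁) * deriv (V n) t₁ :=
        hstrict (Set.mem_Icc.mpr ⟨le_refl t₁, by linarith⟩)
          (Set.mem_Icc.mpr ⟨by linarith, le_refl τ⟩) (by linarith)
      have hV'τ : deriv (V n) τ < 0 := by
        have h1 : Real.exp (3*t₁) * deriv (V n) t₁ ≤ 0 :=
          mul_nonpos_of_nonneg_of_nonpos (Real.exp_pos _).le h1le
        nlinarith [Real.exp_pos (3*τ)]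
      refine ⟨τ, hτpos, hV'τ, ?_⟩
      intro s hs
      rcases le_or_gt s t₁ with h | h
      · have hx : V n s ≤ V n t₁ := hmono (Set.mem_Icc.mpr ⟨hs.1, h⟩)
          (Set.mem_Icc.mpr ⟨h10, le_refl t₁⟩) h
        linarith
      · apply hball
        rw [Real.dist_eq, abs_of_nonneg (by linarith)]
        have hs2 := hs.2
        linarith
    · have ht₁pos : 0 < t₁ := by
        rcases lt_or_eq_of_le h10 with h | h
        · exact h
        · exfalso
          rw [← h, hVm n] at heq
          linarith
      have hmax : IsLocalMax (V n) t₁ := by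
        have hnhds : Set.Ioi (0:ℝ) ∈ nhds t₁ := Ioi_mem_nhds ht₁pos
        filter_upwards [hnhds] with s hs
        rw [heq]
        exact hVle s (le_of_lt hs)
      exact huniq n t₁ ht₁pos heq hmax.deriv_eq_zero
  -- existence
  have hexists : ∃ n, n ∈ B0 := by
    by_contra hcon
    push_neg at hcon
    have hcov : (Set.univ : Set ℝ) ⊆ Sp ∪ Sm := by
      intro n _
      by_contra hn
      rw [Set.mem_union] at hn
      push_neg at hn
      exact hcon n (hcover n hn.1 hn.2)
    obtain ⟨x, -, hx1, hx2⟩ := (isPreconnected_univ (α := ℝ)) Sp Sm hSpOpen hSmOpen hcov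
      ⟨hSpNe.choose, Set.mem_univ _, hSpNe.choose_spec⟩
      ⟨hSmNe.choose, Set.mem_univ _, hSmNe.choose_spec⟩
    exact hdisj x hx2 hx1
  -- uniqueness
  obtain ⟨n₀, hn₀⟩ := hexists
  refine ⟨n₀, hn₀, ?_⟩
  intro n₁ hn₁
  by_contra hne
  have key : ∀ a b : ℝ, a ∈ B0 → b ∈ B0 → a < b → False := by
    intro a b ha hb hab
    rw [hB0] at ha hb
    have hu1 : ∀ t : ℝ, 0 ≤ t → 0 < deriv (V b) t - deriv (V a) t := by
      intro t ht
      rcases lt_or_eq_of_le ht with htpos | h0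
      swap
      · rw [← h0, hV'n a, hV'n b]
        linarith
      by_contra hcon
      push_neg at hcon
      obtain ⟨t₁, h10, h1t, h1le, h1pos⟩ := first_time
        (h := fun s => deriv (V b) s - deriv (V a) s) (a := 0) (t₀ := t) (le_refl 0)
        (fun s hs => ((hV'c b s hs).sub (hV'c a s hs))) htpos.le hcon
      have ht₁pos : 0 < t₁ := by
        rcases lt_or_eq_of_le h10 with h | h
        · exact h
        · exfalso
          rw [← h] at h1le
          rw [hV'n a, hV'n b] at h1le
          linarith
      have hD : MonotoneOn (fun s => V b s - V a s) (Set.Icc 0 t₁) :=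
        monoOn_aux (le_refl 0)
          (fun s hs => ((hdiff b s hs).1.hasDerivAt.sub (hdiff a s hs).1.hasDerivAt))
          (fun s hs1 hs2 => by have := h1pos s hs1 hs2; beta_reduce at this; linarith)
      have hDge : ∀ s, 0 < s → s < t₁ → V a s ≤ V b s := by
        intro s hs1 hs2
        have hh : V b 0 - V a 0 ≤ V b s - V a s := hD (Set.mem_Icc.mpr ⟨le_refl 0, h10⟩)
          (Set.mem_Icc.mpr ⟨hs1.le, hs2.le⟩) hs1.le
        rw [hVm a, hVm b] at hh
        linarith
      have hED : MonotoneOn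
          (fun s => Real.exp (3*s) * deriv (V b) s - Real.exp (3*s) * deriv (V a) s)
          (Set.Icc 0 t₁) := by
        apply monoOn_aux (le_refl 0) (fun s hs => (hE b s hs).sub (hE a s hs))
        intro s hs1 hs2
        have h2 := R_mono hQ hR (hDge s hs1 hs2)
        nlinarith [Real.exp_pos (3*s)]
      have hh := hED (Set.mem_Icc.mpr ⟨le_refl 0, h10⟩)
        (Set.mem_Icc.mpr ⟨h10, le_refl t₁⟩) h10
      simp only [mul_zero, Real.exp_zero, one_mul] at hh
      rw [hV'n a, hV'n b] at hh
      nlinarith [Real.exp_pos (3*t₁)]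
    have hDmono : ∀ T : ℝ, MonotoneOn (fun s => V b s - V a s) (Set.Icc 0 T) := fun T =>
      monoOn_aux (le_refl 0)
        (fun s hs => ((hdiff b s hs).1.hasDerivAt.sub (hdiff a s hs).1.hasDerivAt))
        (fun s hs1 hs2 => (hu1 s hs1.le).le)
    have hd1 : 0 < V b 1 - V a 1 := by
      have hs := strictMonoOn_aux (c := 0) (d := 1) (le_refl 0)
        (fun s hs => ((hdiff b s hs).1.hasDerivAt.sub (hdiff a s hs).1.hasDerivAt))
        (fun s hs1 hs2 => hu1 s hs1.le)
      have hh : V b 0 - V a 0 < V b 1 - V a 1 := hs (Set.mem_Icc.mpr ⟨le_refl 0, zero_le_one⟩)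
        (Set.mem_Icc.mpr ⟨zero_le_one, le_refl 1⟩) zero_lt_one
      rw [hVm a, hVm b] at hh
      linarith
    have hbound : ∀ t : ℝ, 0 ≤ t → V a t ≤ -1 - (V b 1 - V a 1) := by
      intro t ht
      rcases le_total t 1 with h | h
      · have hmonoa : MonotoneOn (V a) (Set.Icc 0 1) :=
          monoOn_aux (le_refl 0) (fun s hs => (hdiff a s hs).1.hasDerivAt)
            (fun s hs1 hs2 => ((ha s hs1).1).le)
        have h1 : V a t ≤ V a 1 := hmonoa (Set.mem_Icc.mpr ⟨ht, h⟩)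
          (Set.mem_Icc.mpr ⟨zero_le_one, le_refl 1⟩) h
        have h2 : V b 1 ≤ -1 := (hb 1 one_pos).2
        linarith
      · have hDt : V b 1 - V a 1 ≤ V b t - V a t := hDmono t
          (Set.mem_Icc.mpr ⟨zero_le_one, h⟩) (Set.mem_Icc.mpr ⟨by linarith, le_refl t⟩) h
        have h2 : V b t ≤ -1 := (hb t (by linarith)).2
        linarith
    exact claimb a ha (-1 - (V b 1 - V a 1)) (by linarith) hbound
  rcases lt_or_gt_of_ne hne with h | h
  · exact absurd (key n₁ n₀ hn₁ hn₀ h) (fun hf => hf)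
  · exact absurd (key n₀ n₁ hn₀ hn₁ h) (fun hf => hf)
end
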